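/- arXiv:2406.03623 — 7 statements merged into one kernel-verified Lean document; each statement's English description precedes it below -/
import Mathlib

section
/- There exist constants c, C > 0 such that for every integer N ≥ 1: (i) for every finite set A ⊆ ℕ_{≥1}, sup_{t∈ℝ} |∑_{n∈A} n^{-it}| = |A| (so the lower and upper democracy functions of the canonical basis {n^{-s}} of H_∞ are exactly N); (ii) for every finite A ⊆ ℕ_{≥1} with |A| ≥ N and every unimodular family (ε_n)_{n∈A}, sup_{t∈ℝ} |∑_{n∈A} ε_n n^{-it}| ≥ c·N^{1/2}; and (iii) there exist a finite set A ⊆ ℕ_{≥1} with |A| ≥ N and signs ε_n ∈ {−1, 1} for n ∈ A such that sup_{t∈ℝ} |∑_{n∈A} ε_n n^{-it}| ≤ C·N^{1/2}. (That is, the lower super-democracy function of {n^{-s}} in H_∞ grows like N^{1/2}.) -/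
open Filter Finset

/-- The `H_∞` norm of the ordinary Dirichlet polynomial `∑_{n∈A} a_n n^{-s}`:
`sup_{t∈ℝ} |∑_{n∈A} a_n n^{-it}|`, where `n^{-it} = e^{-it·log n}`. -/
noncomputable def ordinaryHinfNorm (A : Finset ℕ) (a : ℕ → ℂ) : ℝ :=
  ⨆ t : ℝ, ‖∑ n ∈ A, a n * Complex.exp (-(Complex.I * (t * Real.log n)))‖

section Aux

open intervalIntegral

lemma abs_term (t : ℝ) (n : ℕ) :
    ‖Complex.exp (-(Complex.I * (t * Real.log n)))‖ = 1 := by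
  rw [Complex.norm_exp, show (-(Complex.I * (t * Real.log n))).re = 0 by
    simp only [Complex.neg_re, Complex.mul_re, Complex.mul_im, Complex.I_re, Complex.I_im,
      Complex.ofReal_re, Complex.ofReal_im]; ring, Real.exp_zero]

lemma abs_sum_le (A : Finset ℕ) (a : ℕ → ℂ) (h : ∀ n ∈ A, ‖a n‖ ≤ 1) (t : ℝ) :
    ‖∑ n ∈ A, a n * Complex.exp (-(Complex.I * (t * Real.log n)))‖ ≤ A.card := by
  calc ‖∑ n ∈ A, a n * Complex.exp (-(Complex.I * (t * Real.log n)))‖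
      ≤ ∑ n ∈ A, ‖a n * Complex.exp (-(Complex.I * (t * Real.log n)))‖ :=
        norm_sum_le _ _
    _ ≤ ∑ n ∈ A, 1 := by
        refine Finset.sum_le_sum fun n hn => ?_
        rw [norm_mul, abs_term]
        simpa using h n hn
    _ = A.card := by simp

lemma bdd_range (A : Finset ℕ) (a : ℕ → ℂ) (h : ∀ n ∈ A, ‖a n‖ ≤ 1) :
    BddAbove (Set.range fun t : ℝ =>
      ‖∑ n ∈ A, a n * Complex.exp (-(Complex.I * (t * Real.log n)))‖) :=
  ⟨A.card, by rintro x ⟨t, rfl⟩; exact abs_sum_le A a h t⟩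

lemma part_one (A : Finset ℕ) :
    ordinaryHinfNorm A (fun _ => 1) = A.card := by
  unfold ordinaryHinfNorm
  apply le_antisymm
  · exact ciSup_le fun t => abs_sum_le A _ (fun n _ => by simp) t
  · have h0 := le_ciSup (bdd_range A (fun _ => 1) (fun n _ => by simp)) (0 : ℝ)
    simpa using h0

lemma abs_exp_I_mul (x : ℝ) : ‖Complex.exp (Complex.I * (x:ℂ))‖ = 1 := by
  rw [Complex.norm_exp, show (Complex.I * (x:ℂ)).re = 0 by simp, Real.exp_zero]

lemma int_ne (θ T : ℝ) (hθ : θ ≠ 0) :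
    ‖∫ t in (0:ℝ)..T, Complex.exp ((Complex.I * (θ:ℂ)) * t)‖ ≤ 2 / |θ| := by
  have hc : (Complex.I * (θ:ℂ)) ≠ 0 := by
    simp [Complex.I_ne_zero, Complex.ofReal_eq_zero, hθ]
  rw [integral_exp_mul_complex hc, norm_div]
  have h1 : ‖Complex.I * (θ:ℂ)‖ = |θ| := by
    simp [Complex.norm_real]
  rw [h1]
  gcongr
  calc ‖Complex.exp (Complex.I * θ * T) - Complex.exp (Complex.I * θ * 0)‖
      ≤ ‖Complex.exp (Complex.I * θ * T)‖ +
        ‖Complex.exp (Complex.I * θ * 0)‖ := norm_sub_le _ _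
    _ ≤ 2 := by
        rw [show Complex.I * (θ:ℂ) * T = Complex.I * ((θ*T : ℝ):ℂ) by push_cast; ring,
          show Complex.I * (θ:ℂ) * 0 = Complex.I * ((0 : ℝ):ℂ) by push_cast; ring,
          abs_exp_I_mul, abs_exp_I_mul]
        norm_num

lemma expand (A : Finset ℕ) (ε : ℕ → ℂ) (t : ℝ) :
    (∑ n ∈ A, ε n * Complex.exp (-(Complex.I * (t * Real.log n)))) *
      (starRingEnd ℂ) (∑ n ∈ A, ε n * Complex.exp (-(Complex.I * (t * Real.log n)))) =
    ∑ m ∈ A, ∑ n ∈ A, (ε m * (starRingEnd ℂ) (ε n)) *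
      Complex.exp ((Complex.I * ((Real.log n - Real.log m : ℝ) : ℂ)) * t) := by
  rw [map_sum, Finset.sum_mul_sum]
  refine Finset.sum_congr rfl fun m _ => Finset.sum_congr rfl fun n _ => ?_
  rw [map_mul, ← Complex.exp_conj, mul_mul_mul_comm, ← Complex.exp_add]
  congr 1
  simp only [map_neg, map_mul, Complex.conj_I, Complex.conj_ofReal,
    Complex.ofReal_sub, Complex.ofReal_mul]
  ring

lemma log_sub_ne (m n : ℕ) (hm : 1 ≤ m) (hn : 1 ≤ n) (hmn : m ≠ n) :
    Real.log n - Real.log m ≠ 0 := by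
  intro h
  apply hmn
  have h2 : Real.log (m:ℝ) = Real.log (n:ℝ) := by linarith [sub_eq_zero.1 h]
  have := Real.log_injOn_pos (by simp; exact_mod_cast hm) (by simp; exact_mod_cast hn) h2
  exact_mod_cast this

lemma card_le_sq (A : Finset ℕ) (ε : ℕ → ℂ) (h1 : ∀ n ∈ A, 1 ≤ n)
    (hε : ∀ n ∈ A, ‖ε n‖ = 1) :
    (A.card : ℝ) ≤ (ordinaryHinfNorm A ε)^2 := by
  set f : ℝ → ℂ := fun t => ∑ n ∈ A, ε n * Complex.exp (-(Complex.I * (t * Real.log n))) with hf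
  set M := ordinaryHinfNorm A ε with hM
  have hb : ∀ n ∈ A, ‖ε n‖ ≤ 1 := fun n hn => (hε n hn).le
  have hMle : ∀ t, ‖f t‖ ≤ M := fun t => le_ciSup (bdd_range A ε hb) t
  have hM0 : 0 ≤ M := le_trans (norm_nonneg _) (hMle 0)
  set S : ℝ := ∑ m ∈ A, ∑ n ∈ A,
      (if m = n then 0 else 2 / |Real.log n - Real.log m|) with hS
  have hS0 : 0 ≤ S := Finset.sum_nonneg fun m _ => Finset.sum_nonneg fun n _ => by positivity
  have key : ∀ T : ℝ, 0 < T → (A.card : ℝ) * T ≤ M^2 * T + S := by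
    intro T hT
    have hcont : ∀ m n : ℕ, Continuous (fun t : ℝ => (ε m * (starRingEnd ℂ) (ε n)) *
        Complex.exp ((Complex.I * ((Real.log n - Real.log m : ℝ):ℂ)) * t)) := by
      intro m n; fun_prop
    have heq : (∫ t in (0:ℝ)..T, f t * (starRingEnd ℂ) (f t)) =
        ∑ m ∈ A, ∑ n ∈ A, (ε m * (starRingEnd ℂ) (ε n)) *
          ∫ t in (0:ℝ)..T, Complex.exp ((Complex.I * ((Real.log n - Real.log m : ℝ):ℂ)) * t) := by
      simp_rw [hf, expand]
      rw [intervalIntegral.integral_finset_sum]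
      · refine Finset.sum_congr rfl fun m _ => ?_
        rw [intervalIntegral.integral_finset_sum]
        · exact Finset.sum_congr rfl fun n _ => intervalIntegral.integral_const_mul _ _
        · exact fun n _ => ((hcont m n).intervalIntegrable _ _)
      · intro m _
        exact (continuous_finset_sum _ fun n _ => hcont m n).intervalIntegrable _ _
    have hdiag : (∑ m ∈ A, ∑ n ∈ A, (if m = n then (T:ℂ) else 0)) = (A.card : ℂ) * T := by
      have : ∀ m ∈ A, (∑ n ∈ A, (if m = n then (T:ℂ) else 0)) = T := fun m hm => by
        rw [Finset.sum_ite_eq A m (fun _ => (T:ℂ)), if_pos hm]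
      rw [Finset.sum_congr rfl this, Finset.sum_const, nsmul_eq_mul]
    have hterm : ∀ m ∈ A, ∀ n ∈ A,
        ‖(ε m * (starRingEnd ℂ) (ε n)) *
          (∫ t in (0:ℝ)..T, Complex.exp ((Complex.I * ((Real.log n - Real.log m : ℝ):ℂ)) * t)) -
          (if m = n then (T:ℂ) else 0)‖ ≤
        (if m = n then 0 else 2 / |Real.log n - Real.log m|) := by
      intro m hm n hn
      by_cases hmn : m = n
      · subst hmn
        rw [if_pos rfl, if_pos rfl]
        have h0 : ((Real.log m - Real.log m : ℝ) : ℂ) = 0 := by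
          rw [sub_self]; norm_num
        rw [h0]
        simp only [mul_zero, zero_mul, Complex.exp_zero]
        rw [intervalIntegral.integral_const, Complex.mul_conj]
        have : Complex.normSq (ε m) = 1 := by
          rw [← Complex.sq_norm, hε m hm]; norm_num
        rw [this]
        simp
      · rw [if_neg hmn, if_neg hmn, sub_zero, norm_mul]
        have habs : ‖ε m * (starRingEnd ℂ) (ε n)‖ = 1 := by
          rw [norm_mul, Complex.norm_conj, hε m hm, hε n hn, mul_one]
        rw [habs, one_mul]
        exact int_ne _ T (log_sub_ne m n (h1 m hm) (h1 n hn) hmn)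
    have hEbound : ‖(∫ t in (0:ℝ)..T, f t * (starRingEnd ℂ) (f t)) -
        (A.card : ℂ) * T‖ ≤ S := by
      rw [heq, ← hdiag, ← Finset.sum_sub_distrib]
      calc ‖∑ m ∈ A, ((∑ n ∈ A, (ε m * (starRingEnd ℂ) (ε n)) *
              ∫ t in (0:ℝ)..T, Complex.exp ((Complex.I * ((Real.log n - Real.log m : ℝ):ℂ)) * t)) -
            ∑ n ∈ A, (if m = n then (T:ℂ) else 0))‖
          ≤ ∑ m ∈ A, ‖(∑ n ∈ A, (ε m * (starRingEnd ℂ) (ε n)) *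
              ∫ t in (0:ℝ)..T, Complex.exp ((Complex.I * ((Real.log n - Real.log m : ℝ):ℂ)) * t)) -
            ∑ n ∈ A, (if m = n then (T:ℂ) else 0)‖ := norm_sum_le _ _
        _ ≤ S := by
            rw [hS]
            refine Finset.sum_le_sum fun m hm => ?_
            rw [← Finset.sum_sub_distrib]
            calc ‖∑ n ∈ A, _‖
                ≤ ∑ n ∈ A, ‖(ε m * (starRingEnd ℂ) (ε n)) *
                  (∫ t in (0:ℝ)..T,
                    Complex.exp ((Complex.I * ((Real.log n - Real.log m : ℝ):ℂ)) * t)) -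
                  (if m = n then (T:ℂ) else 0)‖ := norm_sum_le _ _
              _ ≤ _ := Finset.sum_le_sum fun n hn => hterm m hm n hn
    have hIbound : ‖∫ t in (0:ℝ)..T, f t * (starRingEnd ℂ) (f t)‖ ≤ M^2 * T := by
      have := intervalIntegral.norm_integral_le_of_norm_le_const
        (a := (0:ℝ)) (b := T) (C := M^2) (f := fun t => f t * (starRingEnd ℂ) (f t)) ?_
      · calc ‖∫ t in (0:ℝ)..T, f t * (starRingEnd ℂ) (f t)‖ ≤ M^2 * |T - 0| := this
          _ = M^2 * T := by rw [sub_zero, abs_of_pos hT]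
      · intro x _
        rw [norm_mul, Complex.norm_conj, ← sq]
        exact pow_le_pow_left₀ (norm_nonneg _) (hMle x) 2
    have h3 : ((A.card : ℝ) * T : ℝ) = ‖(A.card : ℂ) * T‖ := by
      rw [norm_mul, Complex.norm_natCast, Complex.norm_real, Real.norm_eq_abs, abs_of_pos hT]
    rw [h3]
    calc ‖(A.card : ℂ) * T‖
        ≤ ‖∫ t in (0:ℝ)..T, f t * (starRingEnd ℂ) (f t)‖ +
          ‖(∫ t in (0:ℝ)..T, f t * (starRingEnd ℂ) (f t)) - (A.card : ℂ) * T‖ := by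
          have := norm_sub_le
            (∫ t in (0:ℝ)..T, f t * (starRingEnd ℂ) (f t))
            ((∫ t in (0:ℝ)..T, f t * (starRingEnd ℂ) (f t)) - (A.card : ℂ) * T)
          simpa using this
      _ ≤ M^2 * T + S := add_le_add hIbound hEbound
  by_contra hlt
  push_neg at hlt
  set d : ℝ := (A.card : ℝ) - M^2 with hd
  have hd0 : 0 < d := by simp [hd]; linarith
  have hT0 : 0 < S / d + 1 := by positivity
  have := key (S / d + 1) hT0
  have hcalc : d * (S / d + 1) ≤ S := by nlinarith
  rw [mul_add, mul_div_cancel₀ _ (ne_of_gt hd0), mul_one] at hcalc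
  linarith

/-! Rudin–Shapiro construction -/

def rs : ℕ → (ℕ → ℝ) × (ℕ → ℝ)
  | 0 => (fun _ => 1, fun _ => 1)
  | (k+1) => (fun j => if j < 2^k then (rs k).1 j else (rs k).2 (j - 2^k),
              fun j => if j < 2^k then (rs k).1 j else -((rs k).2 (j - 2^k)))

lemma rs_sign (k : ℕ) : ∀ j, ((rs k).1 j = 1 ∨ (rs k).1 j = -1) ∧
    ((rs k).2 j = 1 ∨ (rs k).2 j = -1) := by
  induction k with
  | zero => intro j; simp [rs]
  | succ k ih =>
    intro j
    simp only [rs]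
    by_cases h : j < 2^k
    · simp [h, ih j]
    · simp only [h, if_false]
      rcases (ih (j - 2^k)).2 with h2 | h2 <;> simp [h2, ih (j - 2^k)]

noncomputable def rsP (k : ℕ) (z : ℂ) : ℂ := ∑ j ∈ range (2^k), ((rs k).1 j : ℂ) * z^j
noncomputable def rsQ (k : ℕ) (z : ℂ) : ℂ := ∑ j ∈ range (2^k), ((rs k).2 j : ℂ) * z^j

lemma rsP_rec (k : ℕ) (z : ℂ) :
    rsP (k+1) z = rsP k z + z^(2^k) * rsQ k z ∧
    rsQ (k+1) z = rsP k z - z^(2^k) * rsQ k z := by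
  have h2 : 2^(k+1) = 2^k + 2^k := by ring
  constructor
  · rw [rsP, rsP, rsQ, h2, Finset.sum_range_add, Finset.mul_sum]
    congr 1
    · refine Finset.sum_congr rfl fun j hj => ?_
      rw [show (rs (k+1)).1 j = (rs k).1 j by simp [rs, Finset.mem_range.1 hj]]
    · refine Finset.sum_congr rfl fun j hj => ?_
      rw [show (rs (k+1)).1 (2^k + j) = (rs k).2 j by
        simp [rs, Nat.not_lt.2 (Nat.le_add_right _ _)]]
      rw [pow_add]
      ring
  · rw [rsQ, rsP, rsQ, h2, Finset.sum_range_add, Finset.mul_sum]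
    rw [sub_eq_add_neg, ← Finset.sum_neg_distrib]
    congr 1
    · refine Finset.sum_congr rfl fun j hj => ?_
      rw [show (rs (k+1)).2 j = (rs k).1 j by simp [rs, Finset.mem_range.1 hj]]
    · refine Finset.sum_congr rfl fun j hj => ?_
      rw [show (rs (k+1)).2 (2^k + j) = -((rs k).2 j) by
        simp [rs, Nat.not_lt.2 (Nat.le_add_right _ _)]]
      rw [pow_add]
      push_cast
      ring

lemma rs_parallelogram (k : ℕ) (z : ℂ) (hz : Complex.normSq z = 1) :
    Complex.normSq (rsP k z) + Complex.normSq (rsQ k z) = 2^(k+1) := by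
  induction k with
  | zero => simp [rsP, rsQ, rs]; norm_num
  | succ k ih =>
    rw [(rsP_rec k z).1, (rsP_rec k z).2]
    have hpar : ∀ a b : ℂ, Complex.normSq (a + b) + Complex.normSq (a - b) =
        2 * (Complex.normSq a + Complex.normSq b) := by
      intro a b
      simp only [Complex.normSq_apply, Complex.add_re, Complex.add_im, Complex.sub_re,
        Complex.sub_im]
      ring
    rw [hpar, Complex.normSq_mul, map_pow, hz, one_pow, one_mul, ih]
    ring

lemma part_three (N : ℕ) (hN : 1 ≤ N) :
    ∃ (A : Finset ℕ) (ε : ℕ → ℝ), (∀ n ∈ A, 1 ≤ n) ∧ N ≤ A.card ∧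
      (∀ n ∈ A, ε n = 1 ∨ ε n = -1) ∧
      ordinaryHinfNorm A (fun n => (ε n : ℂ)) ≤ 2 * Real.sqrt N := by
  set k := Nat.clog 2 N with hk
  have hinj : Function.Injective (fun j : ℕ => 2^j) := Nat.pow_right_injective (le_refl 2)
  refine ⟨(range (2^k)).image (fun j => 2^j), fun n => (rs k).1 (Nat.log 2 n), ?_, ?_, ?_, ?_⟩
  · intro n hn
    obtain ⟨j, _, rfl⟩ := Finset.mem_image.1 hn
    exact Nat.one_le_two_pow
  · rw [Finset.card_image_of_injective _ hinj, Finset.card_range]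
    exact Nat.le_pow_clog one_lt_two N
  · intro n _
    exact (rs_sign k (Nat.log 2 n)).1
  · have hkN : (2:ℝ)^(k+1) ≤ 4 * N := by
      have h2k : 2^k ≤ 2 * N := by
        rcases eq_or_lt_of_le hN with h | h
        · rw [hk, ← h]
          simp [Nat.clog_one_right]
        · have h1N : 1 < N := h
          have hlow : 2^(k-1) < N := by
            simpa [Nat.pred_eq_sub_one] using Nat.pow_pred_clog_lt_self one_lt_two h1N
          have hkpos : 1 ≤ k := Nat.clog_pos one_lt_two h1N
          have : 2^k = 2 * 2^(k-1) := by
            rw [← pow_succ']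
            congr 1
            omega
          rw [this]
          have := Nat.succ_le_of_lt hlow
          omega
      have h4 : (2:ℝ)^(k+1) = 2 * (2^k : ℕ) := by push_cast; ring
      rw [h4]
      have : ((2^k : ℕ) : ℝ) ≤ 2 * N := by exact_mod_cast h2k
      linarith
    have hb : ∀ t : ℝ, ‖∑ n ∈ (range (2^k)).image (fun j => 2^j),
        ((rs k).1 (Nat.log 2 n) : ℂ) * Complex.exp (-(Complex.I * (t * Real.log n)))‖ ≤
        2 * Real.sqrt N := by
      intro t
      set z : ℂ := Complex.exp (-(Complex.I * (t * Real.log 2))) with hz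
      have hsum : (∑ n ∈ (range (2^k)).image (fun j => 2^j),
          ((rs k).1 (Nat.log 2 n) : ℂ) * Complex.exp (-(Complex.I * (t * Real.log n)))) =
          rsP k z := by
        rw [Finset.sum_image (fun x _ y _ h => hinj h), rsP]
        refine Finset.sum_congr rfl fun j _ => ?_
        rw [Nat.log_pow one_lt_two]
        congr 1
        rw [hz, ← Complex.exp_nat_mul]
        congr 1
        have hlog : Real.log ((2^j : ℕ) : ℝ) = j * Real.log 2 := by
          push_cast
          rw [Real.log_pow]
        rw [hlog]
        push_cast
        ring
      rw [hsum]
      have hz1 : Complex.normSq z = 1 := by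
        rw [Complex.normSq_eq_norm_sq]
        have h2 : Real.log ((2:ℕ) : ℝ) = Real.log 2 := by norm_num
        have := abs_term t 2
        rw [h2] at this
        rw [hz, this]
        norm_num
      have hpar := rs_parallelogram k z hz1
      have hPsq : Complex.normSq (rsP k z) ≤ 2^(k+1) :=
        le_of_add_le_of_nonneg_left hpar.le (Complex.normSq_nonneg _)
      have hP : ‖rsP k z‖ ≤ Real.sqrt (2^(k+1)) := by
        rw [Complex.norm_def]
        exact Real.sqrt_le_sqrt hPsq
      refine hP.trans ?_
      have hs : Real.sqrt ((2:ℝ)^(k+1)) ≤ Real.sqrt (4 * N) := Real.sqrt_le_sqrt hkN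
      refine hs.trans ?_
      rw [show (4:ℝ) * N = 2^2 * N by ring, Real.sqrt_mul (by positivity),
        Real.sqrt_sq (by norm_num)]
    exact ciSup_le hb

end Aux

/-- In `H_∞`: the lower and upper democracy functions of `{n^{-s}}` are exactly `N`, and the
lower super-democracy function grows like `N^{1/2}`. -/
theorem democracy_Hinf :
    ∃ c C : ℝ, 0 < c ∧ 0 < C ∧ ∀ N : ℕ, 1 ≤ N →
      ((∀ A : Finset ℕ, (∀ n ∈ A, 1 ≤ n) →
          ordinaryHinfNorm A (fun _ => 1) = A.card) ∧
        (∀ (A : Finset ℕ) (ε : ℕ → ℂ), (∀ n ∈ A, 1 ≤ n) → N ≤ A.card →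
          (∀ n ∈ A, ‖ε n‖ = 1) →
          c * Real.sqrt N ≤ ordinaryHinfNorm A ε) ∧
        (∃ (A : Finset ℕ) (ε : ℕ → ℝ), (∀ n ∈ A, 1 ≤ n) ∧ N ≤ A.card ∧
          (∀ n ∈ A, ε n = 1 ∨ ε n = -1) ∧
          ordinaryHinfNorm A (fun n => (ε n : ℂ)) ≤ C * Real.sqrt N)) := by
  refine ⟨1, 2, one_pos, two_pos, fun N hN => ⟨fun A _ => part_one A, ?_, part_three N hN⟩⟩
  intro A ε hA hcard hε
  rw [one_mul]
  have hsq := card_le_sq A ε hA hε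
  have hM0 : 0 ≤ ordinaryHinfNorm A ε := by
    have := le_ciSup (bdd_range A ε fun n hn => (hε n hn).le) (0 : ℝ)
    exact le_trans (norm_nonneg _) this
  calc Real.sqrt N ≤ Real.sqrt (A.card : ℝ) := by
        apply Real.sqrt_le_sqrt
        exact_mod_cast hcard
    _ ≤ Real.sqrt ((ordinaryHinfNorm A ε)^2) := Real.sqrt_le_sqrt hsq
    _ = ordinaryHinfNorm A ε := Real.sqrt_sq hM0
end

section
/- Let λ be any frequency and fix 1 < p ≤ 2. There exist constants c, C, c', C' > 0 such that for every integer N ≥ 1: (i) for every finite A ⊆ ℕ with |A| ≥ N and every unimodular (ε_n)_{n∈A}, liminf_{R→∞} M_{p,R}((ε_n)) ≥ c·N^{1/p'}; (ii) there exists a finite A with |A| ≥ N such that limsup_{R→∞} M_{p,R}((1)_{n∈A}) ≤ C·N^{1/2}; (iii) for every finite A with |A| ≤ N and every unimodular (ε_n), limsup_{R→∞} M_{p,R}((ε_n)) ≤ C'·N^{1/2}; and (iv) there exists a finite A with |A| ≤ N such that liminf_{R→∞} M_{p,R}((1)_{n∈A}) ≥ c'·N^{1/2}. -/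
open MeasureTheory Filter Finset

/-- `M_{p,R}((a_n)_{n∈A}) = ((1/(2R)) ∫_{-R}^{R} |∑_{n∈A} a_n e^{-iλ_n t}|^p dt)^{1/p}`,
whose limit as `R → ∞` defines the `H_p^λ` norm of the `λ`-Dirichlet polynomial
`∑_{n∈A} a_n e^{-λ_n s}`. -/
noncomputable def dirichletMpR (Λ : ℕ → ℝ) (p : ℝ) (A : Finset ℕ) (a : ℕ → ℂ) (R : ℝ) : ℝ :=
  ((1 / (2 * R)) * ∫ t in (-R)..R,
      ‖∑ n ∈ A, a n * Complex.exp (-(Complex.I * (Λ n * t)))‖ ^ p) ^ (1 / p)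

lemma exp_mean_tendsto (μ : ℝ) :
    Tendsto (fun R : ℝ => (1/(2*R) : ℝ) • (∫ t in (-R)..R, Complex.exp (Complex.I * (μ * t))))
      atTop (nhds (if μ = 0 then 1 else 0)) := by
  rcases eq_or_ne μ 0 with h | h
  · simp only [h, if_pos rfl]
    have hev : (fun R : ℝ => (1/(2*R) : ℝ) • (∫ t in (-R)..R, Complex.exp (Complex.I * ((0:ℝ) * t)))) =ᶠ[atTop] (fun _ => (1:ℂ)) := by
      filter_upwards [eventually_gt_atTop (0:ℝ)] with R hR
      simp only [Complex.ofReal_zero, zero_mul, mul_zero, Complex.exp_zero]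
      rw [intervalIntegral.integral_const]
      have h2R : (2*R : ℝ) ≠ 0 := by positivity
      rw [smul_smul]
      rw [show (R - -R) = 2*R by ring]
      rw [one_div, inv_mul_cancel₀ h2R, one_smul]
    exact tendsto_const_nhds.congr' hev.symm
  · simp only [if_neg h]
    apply squeeze_zero_norm' (a := fun R : ℝ => (1/(2*R)) * (2/|μ|)) ?_ ?_
    · filter_upwards [eventually_gt_atTop (0:ℝ)] with R hR
      have hc : (Complex.I * μ : ℂ) ≠ 0 := by simp [Complex.ext_iff, h]
      have h' : ∀ t : ℝ, Complex.I * ((μ:ℂ) * t) = (Complex.I * μ) * t := fun t => by ring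
      have hint : (∫ t in (-R)..R, Complex.exp (Complex.I * (μ * t)))
          = (Complex.exp (Complex.I*μ*(R:ℂ)) - Complex.exp (Complex.I*μ*((-R : ℝ):ℂ))) / (Complex.I * μ) := by
        simp_rw [h']
        exact integral_exp_mul_complex hc
      have habs : ∀ x : ℝ, ‖Complex.exp (Complex.I * μ * (x:ℂ))‖ = 1 := by
        intro x
        rw [Complex.norm_exp]
        rw [show Complex.I * (μ:ℂ) * (x:ℂ) = Complex.I * ((μ*x : ℝ) : ℂ) by push_cast; ring]
        simp [Complex.mul_re]
      have h1 : ‖Complex.exp (Complex.I*μ*(R:ℂ)) - Complex.exp (Complex.I*μ*((-R:ℝ):ℂ))‖ ≤ 2 := by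
        refine (norm_sub_le _ _).trans ?_
        rw [habs R, habs (-R)]; norm_num
      have h2 : ‖(Complex.I * μ : ℂ)‖ = |μ| := by rw [norm_mul]; simp
      have h3 : 0 < |μ| := abs_pos.mpr h
      rw [norm_smul, hint, Real.norm_eq_abs, abs_of_pos (by positivity : (0:ℝ) < 1/(2*R)), norm_div, h2]
      exact mul_le_mul_of_nonneg_left (by gcongr) (by positivity)
    · have hh : Tendsto (fun R : ℝ => (1/(2*R))) atTop (nhds 0) := by
        have : Tendsto (fun R : ℝ => 2*R) atTop atTop :=
          tendsto_id.const_mul_atTop (by norm_num)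
        simp only [one_div]
        exact this.inv_tendsto_atTop
      simpa using hh.mul_const (2/|μ|)

lemma mean_square_tendsto {ι : Type*} (S : Finset ι) (θ : ι → ℝ) (b : ι → ℂ) :
    Tendsto (fun R : ℝ => (1/(2*R)) * ∫ t in (-R)..R,
        ‖∑ s ∈ S, b s * Complex.exp (-(Complex.I * (θ s * t)))‖ ^ 2)
      atTop
      (nhds ((∑ s ∈ S, ∑ u ∈ S, if θ s = θ u then b s * (starRingEnd ℂ) (b u) else 0).re)) := by
  set f : ℝ → ℂ := fun t => ∑ s ∈ S, b s * Complex.exp (-(Complex.I * (θ s * t))) with hfdef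
  have hexpc : ∀ c : ℝ, Continuous fun t : ℝ => Complex.exp (Complex.I * ((c:ℂ) * (t:ℂ))) := by
    intro c
    apply Complex.continuous_exp.comp
    fun_prop
  have hfc : Continuous f := by
    apply continuous_finset_sum
    intro s _
    apply continuous_const.mul
    apply Complex.continuous_exp.comp
    fun_prop
  have hprod : ∀ t : ℝ, f t * (starRingEnd ℂ) (f t)
      = ∑ s ∈ S, ∑ u ∈ S, (b s * (starRingEnd ℂ) (b u)) * Complex.exp (Complex.I * (((θ u - θ s : ℝ):ℂ) * t)) := by
    intro t
    rw [hfdef]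
    simp only
    rw [map_sum, Finset.sum_mul_sum]
    refine Finset.sum_congr rfl fun s _ => Finset.sum_congr rfl fun u _ => ?_
    rw [map_mul, ← Complex.exp_conj, mul_mul_mul_comm, ← Complex.exp_add]
    congr 1
    simp only [map_neg, map_mul, Complex.conj_I, Complex.conj_ofReal]
    push_cast
    ring
  have key : ∀ R : ℝ, (1/(2*R)) * (∫ t in (-R)..R, ‖f t‖ ^ 2)
      = (∑ s ∈ S, ∑ u ∈ S, (b s * (starRingEnd ℂ) (b u)) *
          ((1/(2*R) : ℝ) • ∫ t in (-R)..R, Complex.exp (Complex.I * (((θ u - θ s : ℝ):ℂ) * t)))).re := by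
    intro R
    have h1 : ∀ t : ℝ, (‖f t‖ ^ 2 : ℝ) = (f t * (starRingEnd ℂ) (f t)).re := by
      intro t
      rw [Complex.mul_conj, Complex.ofReal_re]
      exact Complex.sq_norm _
    have hint2 : IntervalIntegrable (fun t => f t * (starRingEnd ℂ) (f t)) volume (-R) R :=
      (hfc.mul (continuous_star.comp hfc)).intervalIntegrable _ _
    have h2' := Complex.reCLM.intervalIntegral_comp_comm hint2
    simp only [Complex.reCLM_apply] at h2'
    have h2 : (∫ t in (-R)..R, ‖f t‖ ^ 2)
        = (∫ t in (-R)..R, f t * (starRingEnd ℂ) (f t)).re := by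
      rw [← h2']
      exact intervalIntegral.integral_congr fun t _ => h1 t
    have h3 : (∫ t in (-R)..R, f t * (starRingEnd ℂ) (f t))
        = ∑ s ∈ S, ∑ u ∈ S, (b s * (starRingEnd ℂ) (b u)) *
            (∫ t in (-R)..R, Complex.exp (Complex.I * (((θ u - θ s : ℝ):ℂ) * t))) := by
      simp_rw [hprod]
      rw [intervalIntegral.integral_finset_sum]
      · refine Finset.sum_congr rfl fun s _ => ?_
        rw [intervalIntegral.integral_finset_sum]
        · exact Finset.sum_congr rfl fun u _ => intervalIntegral.integral_const_mul _ _
        · intro u _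
          exact (continuous_const.mul (hexpc _)).intervalIntegrable _ _
      · intro s _
        exact (continuous_finset_sum _ fun u _ =>
          continuous_const.mul (hexpc _)).intervalIntegrable _ _
    have hs : ((1/(2*R):ℝ) • (∑ s ∈ S, ∑ u ∈ S, (b s * (starRingEnd ℂ) (b u)) *
            (∫ t in (-R)..R, Complex.exp (Complex.I * (((θ u - θ s : ℝ):ℂ) * t)))))
        = ∑ s ∈ S, ∑ u ∈ S, (b s * (starRingEnd ℂ) (b u)) *
            ((1/(2*R) : ℝ) • ∫ t in (-R)..R, Complex.exp (Complex.I * (((θ u - θ s : ℝ):ℂ) * t))) := by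
      rw [Finset.smul_sum]
      refine Finset.sum_congr rfl fun s _ => ?_
      rw [Finset.smul_sum]
      exact Finset.sum_congr rfl fun u _ => (mul_smul_comm _ _ _).symm
    rw [h2, h3, ← hs, Complex.real_smul, Complex.re_ofReal_mul]
  have hlim : Tendsto (fun R : ℝ => ∑ s ∈ S, ∑ u ∈ S, (b s * (starRingEnd ℂ) (b u)) *
        ((1/(2*R) : ℝ) • ∫ t in (-R)..R, Complex.exp (Complex.I * (((θ u - θ s : ℝ):ℂ) * t))))
      atTop (nhds (∑ s ∈ S, ∑ u ∈ S, if θ s = θ u then b s * (starRingEnd ℂ) (b u) else 0)) := by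
    apply tendsto_finset_sum
    intro s _
    apply tendsto_finset_sum
    intro u _
    have h := ((exp_mean_tendsto (θ u - θ s)).const_mul (b s * (starRingEnd ℂ) (b u)))
    have hiff : (θ u - θ s = 0) = (θ s = θ u) := by
      simp [sub_eq_zero, eq_comm]
    simpa [mul_ite, hiff] using h
  have := (Complex.continuous_re.tendsto _).comp hlim
  exact this.congr fun R => (key R).symm

lemma memLp_aux {h : ℝ → ℝ} (hh : Continuous h) (R s : ℝ) :
    MemLp h (ENNReal.ofReal s) (volume.restrict (Set.Ioc (-R) R)) := by
  obtain ⟨C, hC⟩ := (isCompact_Icc (a := -R) (b := R)).exists_bound_of_continuousOn hh.continuousOn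
  refine MemLp.of_bound hh.aestronglyMeasurable.restrict C ?_
  rw [ae_restrict_iff' measurableSet_Ioc]
  exact ae_of_all _ fun t ht => hC t (Set.Ioc_subset_Icc_self ht)

lemma holder_mean {g₁ g₂ : ℝ → ℝ} (h₁ : Continuous g₁) (h₂ : Continuous g₂)
    (h₁0 : ∀ t, 0 ≤ g₁ t) (h₂0 : ∀ t, 0 ≤ g₂ t) {R : ℝ} (hR : 0 < R)
    {r r' : ℝ} (hrr : r.HolderConjugate r') :
    (1/(2*R)) * ∫ t in (-R)..R, g₁ t * g₂ t ≤
      ((1/(2*R)) * ∫ t in (-R)..R, g₁ t ^ r) ^ (1/r) *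
      ((1/(2*R)) * ∫ t in (-R)..R, g₂ t ^ r') ^ (1/r') := by
  have hRR : -R ≤ R := by linarith
  set ν := volume.restrict (Set.Ioc (-R) R) with hν
  have hconv : ∀ h : ℝ → ℝ, (∫ t in (-R)..R, h t) = ∫ t, h t ∂ν := fun h =>
    intervalIntegral.integral_of_le hRR
  have key : ∫ t, g₁ t * g₂ t ∂ν ≤
      (∫ t, g₁ t ^ r ∂ν) ^ (1/r) * (∫ t, g₂ t ^ r' ∂ν) ^ (1/r') :=
    integral_mul_le_Lp_mul_Lq_of_nonneg hrr (ae_of_all _ h₁0) (ae_of_all _ h₂0)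
      (memLp_aux h₁ R r) (memLp_aux h₂ R r')
  rw [hconv, hconv, hconv]
  have h2R : (0:ℝ) < 1/(2*R) := by positivity
  have hint1 : 0 ≤ ∫ t, g₁ t ^ r ∂ν := integral_nonneg fun t => Real.rpow_nonneg (h₁0 t) r
  have hint2 : 0 ≤ ∫ t, g₂ t ^ r' ∂ν := integral_nonneg fun t => Real.rpow_nonneg (h₂0 t) r'
  calc (1/(2*R)) * ∫ t, g₁ t * g₂ t ∂ν
      ≤ (1/(2*R)) * ((∫ t, g₁ t ^ r ∂ν) ^ (1/r) * (∫ t, g₂ t ^ r' ∂ν) ^ (1/r')) :=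
        mul_le_mul_of_nonneg_left key h2R.le
    _ = ((1/(2*R)) ^ (1/r) * (1/(2*R)) ^ (1/r')) *
          ((∫ t, g₁ t ^ r ∂ν) ^ (1/r) * (∫ t, g₂ t ^ r' ∂ν) ^ (1/r')) := by
        rw [← Real.rpow_add h2R, show 1/r + 1/r' = 1 by rw [one_div, one_div]; exact hrr.inv_add_inv_eq_one, Real.rpow_one]
    _ = ((1/(2*R)) * ∫ t, g₁ t ^ r ∂ν) ^ (1/r) * ((1/(2*R)) * ∫ t, g₂ t ^ r' ∂ν) ^ (1/r') := by
        rw [Real.mul_rpow h2R.le hint1, Real.mul_rpow h2R.le hint2]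
        ring

lemma abs_exp_unim (c t : ℝ) : ‖Complex.exp (-(Complex.I * ((c:ℂ) * (t:ℂ))))‖ = 1 := by
  rw [Complex.norm_exp]
  have : (-(Complex.I * ((c:ℂ) * (t:ℂ)))).re = 0 := by
    simp [Complex.mul_re, Complex.mul_im]
  rw [this, Real.exp_zero]

lemma b2_lemma {μ : ℕ → ℝ} (h0 : 0 < μ 0) (hlac : ∀ k, 2 * μ k < μ (k+1)) :
    ∀ a b c d : ℕ, μ a + μ b = μ c + μ d → (a = c ∧ b = d) ∨ (a = d ∧ b = c) := by
  have hpos : ∀ k, 0 < μ k := by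
    intro k; induction k with
    | zero => exact h0
    | succ n ih => nlinarith [hlac n]
  have hmono : StrictMono μ := strictMono_nat_of_lt_succ fun n => by nlinarith [hlac n, hpos n]
  have key : ∀ a b c d : ℕ, max a b < max c d → μ a + μ b < μ c + μ d := by
    intro a b c d h
    have hd : 1 ≤ max c d := by omega
    have h1 : μ a ≤ μ (max c d - 1) := hmono.monotone (by omega)
    have h2 : μ b ≤ μ (max c d - 1) := hmono.monotone (by omega)
    have h3 : 2 * μ (max c d - 1) < μ (max c d) := by
      have := hlac (max c d - 1)
      rwa [Nat.sub_add_cancel hd] at this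
    have h4 : μ (max c d) ≤ μ c + μ d := by
      rcases max_cases c d with ⟨he, _⟩ | ⟨he, _⟩
      · rw [he]; nlinarith [hpos d]
      · rw [he]; nlinarith [hpos c]
    linarith
  intro a b c d heq
  have hmax : max a b = max c d := by
    rcases lt_trichotomy (max a b) (max c d) with h | h | h
    · exact absurd heq (ne_of_lt (key a b c d h))
    · exact h
    · exact absurd heq.symm (ne_of_lt (key c d a b h))
  have hsum : ∀ x y : ℕ, μ x + μ y = μ (max x y) + μ (min x y) := by
    intro x y; rcases le_total x y with h | h
    · rw [max_eq_right h, min_eq_left h, add_comm]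
    · rw [max_eq_left h, min_eq_right h, add_comm]
  have hmin : min a b = min c d := by
    have hμ : μ (min a b) = μ (min c d) := by
      have e1 := hsum a b
      have e2 := hsum c d
      rw [hmax] at e1
      linarith
    exact hmono.injective hμ
  omega

lemma diag_re {ι : Type*} (S : Finset ι) (θ : ι → ℝ) (hθ : Set.InjOn θ S) (b : ι → ℂ)
    (hb : ∀ s ∈ S, ‖b s‖ = 1) :
    (∑ s ∈ S, ∑ u ∈ S, if θ s = θ u then b s * (starRingEnd ℂ) (b u) else 0).re = S.card := by
  classical
  have hrow : ∀ s ∈ S, (∑ u ∈ S, if θ s = θ u then b s * (starRingEnd ℂ) (b u) else 0) = 1 := by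
    intro s hs
    have hc : (∑ u ∈ S, if θ s = θ u then b s * (starRingEnd ℂ) (b u) else 0)
        = ∑ u ∈ S, if u = s then b s * (starRingEnd ℂ) (b u) else 0 := by
      refine Finset.sum_congr rfl fun u hu => ?_
      by_cases h : u = s
      · simp [h]
      · rw [if_neg h, if_neg (fun heq => h (hθ hu hs heq.symm))]
    rw [hc, Finset.sum_ite_eq' S s (fun u => b s * (starRingEnd ℂ) (b u)), if_pos hs,
      Complex.mul_conj, Complex.normSq_eq_norm_sq, hb s hs]
    norm_num
  rw [Finset.sum_congr rfl hrow]
  simp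

lemma count_re_le {N : ℕ} {μ : ℕ → ℝ}
    (hB2 : ∀ a b c d : ℕ, μ a + μ b = μ c + μ d → (a = c ∧ b = d) ∨ (a = d ∧ b = c)) :
    (∑ s ∈ Finset.range N ×ˢ Finset.range N, ∑ u ∈ Finset.range N ×ˢ Finset.range N,
      if μ s.1 + μ s.2 = μ u.1 + μ u.2 then (1:ℂ) * (starRingEnd ℂ) 1 else 0).re
      ≤ 2 * (N:ℝ)^2 := by
  set S2 := Finset.range N ×ˢ Finset.range N with hS2
  have hre : (∑ s ∈ S2, ∑ u ∈ S2,
      if μ s.1 + μ s.2 = μ u.1 + μ u.2 then (1:ℂ) * (starRingEnd ℂ) 1 else 0).re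
      = ∑ s ∈ S2, ∑ u ∈ S2, (if μ s.1 + μ s.2 = μ u.1 + μ u.2 then (1:ℝ) else 0) := by
    rw [Complex.re_sum]
    refine Finset.sum_congr rfl fun s _ => ?_
    rw [Complex.re_sum]
    refine Finset.sum_congr rfl fun u _ => ?_
    rw [apply_ite Complex.re]
    simp
  rw [hre]
  have hinner : ∀ s ∈ S2, (∑ u ∈ S2, if μ s.1 + μ s.2 = μ u.1 + μ u.2 then (1:ℝ) else 0) ≤ 2 := by
    intro s _
    rw [Finset.sum_boole]
    have hsub : S2.filter (fun u => μ s.1 + μ s.2 = μ u.1 + μ u.2)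
        ⊆ {(s.1, s.2), (s.2, s.1)} := by
      intro u hu
      rcases Finset.mem_filter.mp hu with ⟨_, h⟩
      rcases hB2 s.1 s.2 u.1 u.2 h with ⟨h1, h2⟩ | ⟨h1, h2⟩
      · simp [Finset.mem_insert, Prod.ext_iff, h1.symm, h2.symm]
      · simp [Finset.mem_insert, Prod.ext_iff, h1.symm, h2.symm]
    have hcard : (S2.filter (fun u => μ s.1 + μ s.2 = μ u.1 + μ u.2)).card ≤ 2 := by
      refine (Finset.card_le_card hsub).trans ?_
      refine (Finset.card_insert_le _ _).trans ?_
      simp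
    exact_mod_cast hcard
  calc (∑ s ∈ S2, ∑ u ∈ S2, if μ s.1 + μ s.2 = μ u.1 + μ u.2 then (1:ℝ) else 0)
      ≤ ∑ _s ∈ S2, (2:ℝ) := Finset.sum_le_sum hinner
    _ = (S2.card : ℝ) * 2 := by rw [Finset.sum_const]; simp [mul_comm]
    _ ≤ 2 * (N:ℝ)^2 := by
        rw [hS2, Finset.card_product, Finset.card_range]
        push_cast
        ring_nf
        exact le_refl _

lemma mean_rpow_le {g : ℝ → ℝ} (hg : Continuous g) (hg0 : ∀ t, 0 ≤ g t) {R : ℝ} (hR : 0 < R)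
    {a b : ℝ} (ha : 0 < a) (hab : a ≤ b) :
    ((1/(2*R)) * ∫ t in (-R)..R, g t ^ a) ^ (1/a) ≤
      ((1/(2*R)) * ∫ t in (-R)..R, g t ^ b) ^ (1/b) := by
  rcases eq_or_lt_of_le hab with rfl | hlt
  · exact le_refl _
  · have hb : 0 < b := lt_trans ha hlt
    set r := b / a with hrdef
    have hr : 1 < r := (one_lt_div ha).mpr hlt
    have hrr : r.HolderConjugate (Real.conjExponent r) := Real.HolderConjugate.conjExponent hr
    have h2R : (0:ℝ) < 1/(2*R) := by positivity
    have hIb : 0 ≤ (1/(2*R)) * ∫ t in (-R)..R, g t ^ b := by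
      apply mul_nonneg h2R.le
      exact intervalIntegral.integral_nonneg (by linarith) fun u _ => Real.rpow_nonneg (hg0 u) b
    have h := holder_mean (g₁ := fun t => g t ^ a) (g₂ := fun _ => (1:ℝ))
      (hg.rpow_const fun t => Or.inr ha.le) continuous_const
      (fun t => Real.rpow_nonneg (hg0 t) a) (fun _ => zero_le_one) hR hrr
    simp only [mul_one, Real.one_rpow] at h
    have hga : ∀ t : ℝ, (g t ^ a) ^ r = g t ^ b := by
      intro t
      rw [← Real.rpow_mul (hg0 t), hrdef]
      congr 1
      field_simp
    simp only [hga] at h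
    have hconst : (1/(2*R)) * ∫ (_ : ℝ) in (-R)..R, (1:ℝ) = 1 := by
      rw [intervalIntegral.integral_const]
      simp only [smul_eq_mul, mul_one]
      rw [show R - -R = 2*R by ring]
      field_simp
    rw [hconst, Real.one_rpow, mul_one] at h
    have hmono := Real.rpow_le_rpow
      (mul_nonneg h2R.le (intervalIntegral.integral_nonneg (by linarith)
        fun u _ => Real.rpow_nonneg (hg0 u) a)) h (le_of_lt (one_div_pos.mpr ha))
    rw [← Real.rpow_mul hIb] at hmono
    have hexp : (1/r) * (1/a) = 1/b := by
      rw [hrdef, one_div_div]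
      field_simp
    rwa [hexp] at hmono

lemma holder_142 {g : ℝ → ℝ} (hg : Continuous g) (hg0 : ∀ t, 0 ≤ g t) {R : ℝ} (hR : 0 < R) :
    (1/(2*R)) * ∫ t in (-R)..R, g t ^ (2:ℝ) ≤
      ((1/(2*R)) * ∫ t in (-R)..R, g t ^ (1:ℝ)) ^ (2/3 : ℝ) *
      ((1/(2*R)) * ∫ t in (-R)..R, g t ^ (4:ℝ)) ^ (1/3 : ℝ) := by
  have hrr : (3/2 : ℝ).HolderConjugate 3 := Real.holderConjugate_iff.mpr ⟨by norm_num, by norm_num⟩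
  have h := holder_mean (g₁ := fun t => g t ^ (2/3:ℝ)) (g₂ := fun t => g t ^ (4/3:ℝ))
    (hg.rpow_const fun t => Or.inr (by norm_num)) (hg.rpow_const fun t => Or.inr (by norm_num))
    (fun t => Real.rpow_nonneg (hg0 t) _) (fun t => Real.rpow_nonneg (hg0 t) _) hR hrr
  have e1 : ∀ t : ℝ, g t ^ (2/3:ℝ) * g t ^ (4/3:ℝ) = g t ^ (2:ℝ) := by
    intro t
    rw [← Real.rpow_add' (hg0 t) (by norm_num)]
    norm_num
  have e2 : ∀ t : ℝ, (g t ^ (2/3:ℝ)) ^ ((3:ℝ)/2) = g t ^ (1:ℝ) := by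
    intro t; rw [← Real.rpow_mul (hg0 t)]; norm_num
  have e3 : ∀ t : ℝ, (g t ^ (4/3:ℝ)) ^ (3:ℝ) = g t ^ (4:ℝ) := by
    intro t; rw [← Real.rpow_mul (hg0 t)]; norm_num
  simp only [e1, e2, e3] at h
  convert h using 3 <;> norm_num

lemma dirichletMpR_nonneg (Λ : ℕ → ℝ) (p : ℝ) (A : Finset ℕ) (a : ℕ → ℂ) (R : ℝ) :
    0 ≤ dirichletMpR Λ p A a R := by
  apply Real.rpow_nonneg
  rcases lt_trichotomy R 0 with h | h | h
  · apply mul_nonneg_of_nonpos_of_nonpos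
    · apply le_of_lt
      apply div_neg_of_pos_of_neg one_pos
      linarith
    · rw [intervalIntegral.integral_symm]
      apply neg_nonpos.mpr
      exact intervalIntegral.integral_nonneg (by linarith)
        fun u _ => Real.rpow_nonneg (norm_nonneg _) p
  · simp [h]
  · apply mul_nonneg
    · positivity
    · exact intervalIntegral.integral_nonneg (by linarith)
        fun u _ => Real.rpow_nonneg (norm_nonneg _) p

lemma meanI2_tendsto (Λ : ℕ → ℝ) (hinj : Function.Injective Λ) (A : Finset ℕ) (ε : ℕ → ℂ)
    (hε : ∀ n ∈ A, ‖ε n‖ = 1) :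
    Tendsto (fun R : ℝ => (1/(2*R)) * ∫ t in (-R)..R,
      ‖∑ n ∈ A, ε n * Complex.exp (-(Complex.I * (Λ n * t)))‖ ^ (2:ℝ))
      atTop (nhds (A.card)) := by
  have h := mean_square_tendsto A Λ ε
  rw [diag_re A Λ hinj.injOn ε hε] at h
  refine h.congr fun R => ?_
  congr 1
  refine intervalIntegral.integral_congr fun t _ => ?_
  rw [show ((2:ℝ)) = ((2:ℕ):ℝ) by norm_num, Real.rpow_natCast]



section main
variable (Λ : ℕ → ℝ) (p : ℝ)

lemma g_cont (A : Finset ℕ) (ε : ℕ → ℂ) :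
    Continuous fun t : ℝ => ‖∑ n ∈ A, ε n * Complex.exp (-(Complex.I * (Λ n * t)))‖ := by
  apply continuous_norm.comp
  apply continuous_finset_sum
  intro n _
  apply continuous_const.mul
  apply Complex.continuous_exp.comp
  fun_prop

/-- Eventual upper bound for `dirichletMpR` in terms of the `L²` mean. -/
lemma eventually_le_sqrt (hinj : Function.Injective Λ) (hp1 : 1 < p) (hp2 : p ≤ 2)
    (A : Finset ℕ) (ε : ℕ → ℂ) (hε : ∀ n ∈ A, ‖ε n‖ = 1) :
    ∀ᶠ R in atTop, dirichletMpR Λ p A ε R ≤ ((A.card : ℝ) + 1) ^ (1/(2:ℝ)) := by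
  have hp0 : (0:ℝ) < p := lt_trans one_pos hp1
  have hI2 := meanI2_tendsto Λ hinj A ε hε
  filter_upwards [eventually_gt_atTop (0:ℝ),
    hI2.eventually (eventually_le_nhds (lt_add_one (A.card : ℝ)))] with R hR hle
  set g := fun t : ℝ => ‖∑ n ∈ A, ε n * Complex.exp (-(Complex.I * (Λ n * t)))‖ with hgdef
  have hgc : Continuous g := g_cont Λ A ε
  have hg0 : ∀ t, 0 ≤ g t := fun t => norm_nonneg _
  have h1 : dirichletMpR Λ p A ε R ≤
      ((1/(2*R)) * ∫ t in (-R)..R, g t ^ (2:ℝ)) ^ (1/(2:ℝ)) :=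
    mean_rpow_le hgc hg0 hR hp0 hp2
  have h2 : ((1/(2*R)) * ∫ t in (-R)..R, g t ^ (2:ℝ)) ^ (1/(2:ℝ))
      ≤ ((A.card : ℝ) + 1) ^ (1/(2:ℝ)) := by
    apply Real.rpow_le_rpow _ hle (by norm_num)
    apply mul_nonneg (by positivity)
    exact intervalIntegral.integral_nonneg (by linarith)
      fun u _ => Real.rpow_nonneg (hg0 u) _
  exact le_trans h1 h2

/-- Part (iii) bound. -/
lemma part_iii (hinj : Function.Injective Λ) (hp1 : 1 < p) (hp2 : p ≤ 2)
    (N : ℕ) (hN : 1 ≤ N) (A : Finset ℕ) (ε : ℕ → ℂ) (hcard : A.card ≤ N)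
    (hε : ∀ n ∈ A, ‖ε n‖ = 1) :
    limsup (dirichletMpR Λ p A ε) atTop ≤ 2 * Real.sqrt N := by
  apply limsup_le_of_le (isCoboundedUnder_le_of_le atTop
    (fun R => dirichletMpR_nonneg Λ p A ε R))
  filter_upwards [eventually_le_sqrt Λ p hinj hp1 hp2 A ε hε] with R hle
  refine hle.trans ?_
  rw [← Real.sqrt_eq_rpow]
  have h1 : ((A.card : ℝ) + 1) ≤ 4 * N := by
    have : (A.card : ℝ) ≤ N := by exact_mod_cast hcard
    have : (1:ℝ) ≤ N := by exact_mod_cast hN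
    linarith
  calc Real.sqrt ((A.card : ℝ) + 1) ≤ Real.sqrt (4 * N) := Real.sqrt_le_sqrt h1
    _ = 2 * Real.sqrt N := by
        rw [Real.sqrt_mul (by norm_num), show Real.sqrt 4 = 2 by
          rw [show (4:ℝ) = 2^2 by norm_num, Real.sqrt_sq (by norm_num)]]

/-- Part (i) bound. -/
lemma part_i (hinj : Function.Injective Λ) (hp1 : 1 < p) (hp2 : p ≤ 2)
    (N : ℕ) (hN : 1 ≤ N) (A : Finset ℕ) (ε : ℕ → ℂ) (hcard : N ≤ A.card)
    (hε : ∀ n ∈ A, ‖ε n‖ = 1) :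
    (1/2 : ℝ) * (N:ℝ) ^ (1 - 1/p) ≤ liminf (dirichletMpR Λ p A ε) atTop := by
  have hp0 : (0:ℝ) < p := lt_trans one_pos hp1
  have hcN : (1:ℝ) ≤ (N:ℝ) := by exact_mod_cast hN
  have hc1 : (1:ℝ) ≤ (A.card : ℝ) := by
    have : N ≤ A.card := hcard
    have : 1 ≤ A.card := le_trans hN this
    exact_mod_cast this
  have hcpos : (0:ℝ) < (A.card : ℝ) := lt_of_lt_of_le one_pos hc1
  apply le_liminf_of_le (isCoboundedUnder_ge_of_eventually_le atTop
    (eventually_le_sqrt Λ p hinj hp1 hp2 A ε hε))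
  have hI2 := meanI2_tendsto Λ hinj A ε hε
  filter_upwards [eventually_gt_atTop (0:ℝ),
    hI2.eventually (eventually_ge_nhds (half_lt_self hcpos))] with R hR hge
  set g := fun t : ℝ => ‖∑ n ∈ A, ε n * Complex.exp (-(Complex.I * (Λ n * t)))‖ with hgdef
  have hgc : Continuous g := g_cont Λ A ε
  have hg0 : ∀ t, 0 ≤ g t := fun t => norm_nonneg _
  have hgle : ∀ t, g t ≤ (A.card : ℝ) := by
    intro t
    rw [hgdef]
    calc ‖∑ n ∈ A, ε n * Complex.exp (-(Complex.I * (Λ n * t)))‖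
        ≤ ∑ n ∈ A, ‖ε n * Complex.exp (-(Complex.I * (Λ n * t)))‖ :=
          norm_sum_le _ _
      _ = ∑ n ∈ A, (1:ℝ) := by
          refine Finset.sum_congr rfl fun n hn => ?_
          rw [norm_mul, hε n hn, abs_exp_unim, mul_one]
      _ = (A.card : ℝ) := by simp
  -- pointwise comparison
  have hptwise : ∀ t, g t ^ (2:ℝ) ≤ (A.card:ℝ)^((2:ℝ)-p) * g t ^ p := by
    intro t
    rcases eq_or_lt_of_le (hg0 t) with h0 | h0
    · rw [← h0, Real.zero_rpow (by norm_num : (2:ℝ) ≠ 0), Real.zero_rpow (ne_of_gt hp0), mul_zero]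
    · have hsplit : g t ^ (2:ℝ) = g t ^ p * g t ^ ((2:ℝ)-p) := by
        rw [← Real.rpow_add h0]
        ring_nf
      rw [hsplit]
      have h2 : g t ^ ((2:ℝ)-p) ≤ (A.card:ℝ)^((2:ℝ)-p) :=
        Real.rpow_le_rpow (hg0 t) (hgle t) (by linarith)
      calc g t ^ p * g t ^ ((2:ℝ)-p) ≤ g t ^ p * (A.card:ℝ)^((2:ℝ)-p) :=
            mul_le_mul_of_nonneg_left h2 (Real.rpow_nonneg (hg0 t) p)
        _ = (A.card:ℝ)^((2:ℝ)-p) * g t ^ p := mul_comm _ _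
  -- integrate
  have hIle : (1/(2*R)) * ∫ t in (-R)..R, g t ^ (2:ℝ)
      ≤ (A.card:ℝ)^((2:ℝ)-p) * ((1/(2*R)) * ∫ t in (-R)..R, g t ^ p) := by
    have hint : (∫ t in (-R)..R, g t ^ (2:ℝ))
        ≤ ∫ t in (-R)..R, (A.card:ℝ)^((2:ℝ)-p) * g t ^ p := by
      apply intervalIntegral.integral_mono_on (by linarith)
      · exact (hgc.rpow_const fun t => Or.inr (by norm_num)).intervalIntegrable _ _
      · exact (continuous_const.mul (hgc.rpow_const fun t => Or.inr hp0.le)).intervalIntegrable _ _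
      · exact fun x _ => hptwise x
    rw [intervalIntegral.integral_const_mul] at hint
    calc (1/(2*R)) * ∫ t in (-R)..R, g t ^ (2:ℝ)
        ≤ (1/(2*R)) * ((A.card:ℝ)^((2:ℝ)-p) * ∫ t in (-R)..R, g t ^ p) :=
          mul_le_mul_of_nonneg_left hint (by positivity)
      _ = (A.card:ℝ)^((2:ℝ)-p) * ((1/(2*R)) * ∫ t in (-R)..R, g t ^ p) := by ring
  -- lower bound on I_p
  have hrpos : (0:ℝ) < (A.card:ℝ)^((2:ℝ)-p) := Real.rpow_pos_of_pos hcpos _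
  have hIp : (A.card:ℝ)/2 / (A.card:ℝ)^((2:ℝ)-p) ≤ (1/(2*R)) * ∫ t in (-R)..R, g t ^ p := by
    rw [div_le_iff₀ hrpos]
    calc (A.card:ℝ)/2 ≤ (1/(2*R)) * ∫ t in (-R)..R, g t ^ (2:ℝ) := hge
      _ ≤ (A.card:ℝ)^((2:ℝ)-p) * ((1/(2*R)) * ∫ t in (-R)..R, g t ^ p) := hIle
      _ = ((1/(2*R)) * ∫ t in (-R)..R, g t ^ p) * (A.card:ℝ)^((2:ℝ)-p) := mul_comm _ _
  -- simplify the constant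
  have hconst : (A.card:ℝ)/2 / (A.card:ℝ)^((2:ℝ)-p) = (A.card:ℝ)^(p-1) / 2 := by
    have e : (A.card:ℝ)^(p-1) * (A.card:ℝ)^((2:ℝ)-p) = (A.card:ℝ) := by
      rw [← Real.rpow_add hcpos]
      norm_num
    field_simp
    nlinarith [e]
  rw [hconst] at hIp
  -- raise to power 1/p
  have hmono := Real.rpow_le_rpow (by positivity) hIp (le_of_lt (one_div_pos.mpr hp0))
  have hfinal : (1/2 : ℝ) * (N:ℝ) ^ (1 - 1/p) ≤ ((A.card:ℝ)^(p-1) / 2) ^ (1/p) := by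
    rw [Real.div_rpow (Real.rpow_nonneg hcpos.le _) (by norm_num)]
    rw [← Real.rpow_mul hcpos.le]
    have hexp : (p-1) * (1/p) = 1 - 1/p := by field_simp
    rw [hexp]
    have h2le : (2:ℝ)^(1/p) ≤ 2 := by
      calc (2:ℝ)^(1/p) ≤ (2:ℝ)^(1:ℝ) :=
            Real.rpow_le_rpow_of_exponent_le (by norm_num)
              (by rw [div_le_one hp0]; linarith)
        _ = 2 := Real.rpow_one 2
    have hNle : (N:ℝ)^(1-1/p) ≤ (A.card:ℝ)^(1-1/p) := by
      apply Real.rpow_le_rpow (by positivity) (by exact_mod_cast hcard)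
      have : 1/p ≤ 1 := by rw [div_le_one hp0]; linarith
      linarith
    calc (1/2 : ℝ) * (N:ℝ) ^ (1 - 1/p) = (N:ℝ) ^ (1 - 1/p) / 2 := by ring
      _ ≤ (A.card:ℝ) ^ (1 - 1/p) / (2:ℝ)^(1/p) :=
          div_le_div₀ (Real.rpow_nonneg hcpos.le _) hNle
            (Real.rpow_pos_of_pos (by norm_num) _) h2le
  refine le_trans hfinal ?_
  -- M R = (I_p)^{1/p}
  show ((A.card:ℝ)^(p-1) / 2) ^ (1/p) ≤ dirichletMpR Λ p A ε R
  exact hmono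

end main

lemma part_iv (Λ : ℕ → ℝ) (hmono : StrictMono Λ) (hunb : Tendsto Λ atTop atTop)
    (p : ℝ) (hp1 : 1 < p) (hp2 : p ≤ 2) (N : ℕ) (hN : 1 ≤ N) :
    ∃ A : Finset ℕ, A.card ≤ N ∧
      (3/8 : ℝ) * Real.sqrt N ≤ liminf (dirichletMpR Λ p A fun _ => 1) atTop := by
  classical
  have hp0 : (0:ℝ) < p := lt_trans one_pos hp1
  -- construct the lacunary subsequence
  have hex : ∀ x : ℝ, ∃ m : ℕ, x < Λ m := fun x =>
    (hunb.eventually (eventually_gt_atTop x)).exists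
  choose F hF using hex
  let n : ℕ → ℕ := fun k => Nat.rec (F 1) (fun _ nk => F (2 * Λ nk)) k
  set μ : ℕ → ℝ := fun k => Λ (n k) with hμdef
  have hμ0 : 0 < μ 0 := lt_trans one_pos (hF 1)
  have hμlac : ∀ k, 2 * μ k < μ (k+1) := fun k => hF (2 * Λ (n k))
  have hμpos : ∀ k, 0 < μ k := by
    intro k; induction k with
    | zero => exact hμ0
    | succ m ih => nlinarith [hμlac m]
  have hμmono : StrictMono μ := strictMono_nat_of_lt_succ fun m => by nlinarith [hμlac m, hμpos m]
  have hB2 := b2_lemma hμ0 hμlac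
  have hninj : Function.Injective n := fun a b h => hμmono.injective (by rw [hμdef]; simp only; rw [h])
  refine ⟨(Finset.range N).image n, ?_, ?_⟩
  · exact le_trans (Finset.card_image_le) (by simp)
  set A := (Finset.range N).image n with hAdef
  have hcardA : A.card = N := by
    rw [hAdef, Finset.card_image_of_injective _ hninj, Finset.card_range]
  -- the polynomial
  set f : ℝ → ℂ := fun t => ∑ m ∈ A, (1:ℂ) * Complex.exp (-(Complex.I * (Λ m * t))) with hfdef
  set g : ℝ → ℝ := fun t => ‖f t‖ with hgdef
  have hgc : Continuous g := g_cont Λ A _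
  have hg0 : ∀ t, 0 ≤ g t := fun t => norm_nonneg _
  have hNpos : (0:ℝ) < N := by exact_mod_cast hN
  have hN1 : (1:ℝ) ≤ N := by exact_mod_cast hN
  -- f as a sum over range N
  have hf_eq : ∀ t : ℝ, f t = ∑ k ∈ Finset.range N, Complex.exp (-(Complex.I * (μ k * t))) := by
    intro t
    rw [hfdef]
    simp only
    rw [hAdef, Finset.sum_image (fun a _ b _ h => hninj h)]
    exact Finset.sum_congr rfl fun k _ => one_mul _
  -- Y limit
  have hY : Tendsto (fun R : ℝ => (1/(2*R)) * ∫ t in (-R)..R, g t ^ (2:ℝ))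
      atTop (nhds (N:ℝ)) := by
    have := meanI2_tendsto Λ hmono.injective A (fun _ => 1) (fun _ _ => by simp)
    rw [hcardA] at this
    exact this
  -- Z limit
  set S2 := Finset.range N ×ˢ Finset.range N with hS2def
  set θ2 : ℕ × ℕ → ℝ := fun q => μ q.1 + μ q.2 with hθ2def
  have hsq : ∀ t : ℝ, (∑ q ∈ S2, (1:ℂ) * Complex.exp (-(Complex.I * (θ2 q * t))))
      = (f t)^2 := by
    intro t
    rw [hf_eq t, sq, Finset.sum_mul_sum, hS2def, Finset.sum_product]
    refine Finset.sum_congr rfl fun j _ => Finset.sum_congr rfl fun k _ => ?_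
    rw [one_mul, ← Complex.exp_add]
    congr 1
    rw [hθ2def]
    push_cast
    ring
  have hg4 : ∀ t : ℝ, ‖∑ q ∈ S2, (1:ℂ) * Complex.exp (-(Complex.I * (θ2 q * t)))‖ ^ 2
      = g t ^ (4:ℝ) := by
    intro t
    rw [hsq t, norm_pow, hgdef]
    rw [show ((4:ℝ)) = ((4:ℕ):ℝ) by norm_num, Real.rpow_natCast]
    ring
  set L : ℝ := (∑ s ∈ S2, ∑ u ∈ S2,
      if θ2 s = θ2 u then (1:ℂ) * (starRingEnd ℂ) 1 else 0).re with hLdef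
  have hLle : L ≤ 2 * (N:ℝ)^2 := by
    rw [hLdef, hθ2def]
    exact count_re_le hB2
  have hZ : Tendsto (fun R : ℝ => (1/(2*R)) * ∫ t in (-R)..R, g t ^ (4:ℝ))
      atTop (nhds L) := by
    have h := mean_square_tendsto S2 θ2 (fun _ => (1:ℂ))
    refine h.congr fun R => ?_
    congr 1
    exact intervalIntegral.integral_congr fun t _ => hg4 t
  -- eventual lower bound
  have hYev : ∀ᶠ R in atTop, (3/4 : ℝ) * N ≤ (1/(2*R)) * ∫ t in (-R)..R, g t ^ (2:ℝ) :=
    hY.eventually (eventually_ge_nhds (by nlinarith))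
  have hZev : ∀ᶠ R in atTop, (1/(2*R)) * ∫ t in (-R)..R, g t ^ (4:ℝ) ≤ 3 * (N:ℝ)^2 :=
    hZ.eventually (eventually_le_nhds (by nlinarith))
  apply le_liminf_of_le (isCoboundedUnder_ge_of_eventually_le atTop
    (eventually_le_sqrt Λ p hmono.injective hp1 hp2 A (fun _ => 1) (fun _ _ => by simp)))
  filter_upwards [eventually_gt_atTop (0:ℝ), hYev, hZev] with R hR hYge hZle
  set X := (1/(2*R)) * ∫ t in (-R)..R, g t ^ (1:ℝ) with hXdef
  set Y := (1/(2*R)) * ∫ t in (-R)..R, g t ^ (2:ℝ) with hYdef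
  set Z := (1/(2*R)) * ∫ t in (-R)..R, g t ^ (4:ℝ) with hZdef
  have hX0 : 0 ≤ X := by
    apply mul_nonneg (by positivity)
    exact intervalIntegral.integral_nonneg (by linarith)
      fun u _ => Real.rpow_nonneg (hg0 u) _
  have hZ0 : 0 ≤ Z := by
    apply mul_nonneg (by positivity)
    exact intervalIntegral.integral_nonneg (by linarith)
      fun u _ => Real.rpow_nonneg (hg0 u) _
  have hY0 : (0:ℝ) ≤ Y := le_trans (by positivity) hYge
  have hholder : Y ≤ X ^ (2/3:ℝ) * Z ^ (1/3:ℝ) := holder_142 hgc hg0 hR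
  -- cube it
  have hcube : Y^3 ≤ X^2 * Z := by
    calc Y^3 ≤ (X ^ (2/3:ℝ) * Z ^ (1/3:ℝ))^3 := pow_le_pow_left₀ hY0 hholder 3
      _ = (X ^ (2/3:ℝ))^3 * (Z ^ (1/3:ℝ))^3 := by ring
      _ = X^2 * Z := by
          rw [← Real.rpow_natCast (X ^ (2/3:ℝ)) 3, ← Real.rpow_natCast (Z ^ (1/3:ℝ)) 3,
            ← Real.rpow_mul hX0, ← Real.rpow_mul hZ0]
          norm_num
  have hXsq : (9/64 : ℝ) * N ≤ X^2 := by
    have hY3 : ((3/4:ℝ) * N)^3 ≤ Y^3 := pow_le_pow_left₀ (by positivity) hYge 3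
    have hZX : X^2 * Z ≤ X^2 * (3 * (N:ℝ)^2) := mul_le_mul_of_nonneg_left hZle (sq_nonneg X)
    have hchain : (27/64:ℝ) * (N:ℝ)^3 ≤ X^2 * (3 * (N:ℝ)^2) := by nlinarith
    have hdiv : (27/64:ℝ) * (N:ℝ)^3 / (3 * (N:ℝ)^2) ≤ X^2 :=
      (div_le_iff₀ (by positivity)).mpr hchain
    have heq : (27/64:ℝ) * (N:ℝ)^3 / (3 * (N:ℝ)^2) = (9/64:ℝ) * N := by
      field_simp
      ring
    rw [heq] at hdiv
    exact hdiv
  have hXge : (3/8 : ℝ) * Real.sqrt N ≤ X := by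
    have hsq' : ((3/8 : ℝ) * Real.sqrt N)^2 ≤ X^2 := by
      rw [mul_pow, Real.sq_sqrt hNpos.le]
      nlinarith
    exact le_of_pow_le_pow_left₀ two_ne_zero hX0 hsq'
  refine le_trans hXge ?_
  -- X ≤ M R
  have h := mean_rpow_le hgc hg0 hR one_pos (le_of_lt hp1)
  rw [show (1/(1:ℝ)) = 1 by norm_num, Real.rpow_one] at h
  calc X ≤ ((1/(2*R)) * ∫ t in (-R)..R, g t ^ p) ^ (1/p) := h
    _ = dirichletMpR Λ p A (fun _ => 1) R := rfl

/-- Fundamental functions of the canonical basis of `H_p^λ`, `1 < p ≤ 2`, for an arbitrary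
frequency `λ`.  Here `1/p' = 1 - 1/p`. -/
theorem fundamental_functions_Hp_general_le_two (Λ : ℕ → ℝ) (hmono : StrictMono Λ)
    (hpos : ∀ n, 0 ≤ Λ n) (hunb : Tendsto Λ atTop atTop)
    (p : ℝ) (hp1 : 1 < p) (hp2 : p ≤ 2) :
    ∃ c C c' C' : ℝ, 0 < c ∧ 0 < C ∧ 0 < c' ∧ 0 < C' ∧ ∀ N : ℕ, 1 ≤ N →
      ((∀ (A : Finset ℕ) (ε : ℕ → ℂ), N ≤ A.card → (∀ n ∈ A, ‖ε n‖ = 1) →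
          c * (N : ℝ) ^ (1 - 1 / p) ≤ liminf (dirichletMpR Λ p A ε) atTop) ∧
        (∃ A : Finset ℕ, N ≤ A.card ∧
          limsup (dirichletMpR Λ p A fun _ => 1) atTop ≤ C * Real.sqrt N) ∧
        (∀ (A : Finset ℕ) (ε : ℕ → ℂ), A.card ≤ N → (∀ n ∈ A, ‖ε n‖ = 1) →
          limsup (dirichletMpR Λ p A ε) atTop ≤ C' * Real.sqrt N) ∧
        (∃ A : Finset ℕ, A.card ≤ N ∧
          c' * Real.sqrt N ≤ liminf (dirichletMpR Λ p A fun _ => 1) atTop)) := by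
  refine ⟨1/2, 2, 3/8, 2, by norm_num, by norm_num, by norm_num, by norm_num, fun N hN => ?_⟩
  refine ⟨fun A ε hcard hε => part_i Λ p hmono.injective hp1 hp2 N hN A ε hcard hε,
    ⟨Finset.range N, by simp, ?_⟩,
    fun A ε hcard hε => part_iii Λ p hmono.injective hp1 hp2 N hN A ε hcard hε,
    part_iv Λ hmono hunb p hp1 hp2 N hN⟩
  exact part_iii Λ p hmono.injective hp1 hp2 N hN (Finset.range N) (fun _ => 1)
    (by simp) (fun _ _ => by simp)
end

section
/- Let λ be any frequency and fix 2 < p < ∞. There exist constants c, C, c', C' > 0 such that for every integer N ≥ 1: (i) for every finite A ⊆ ℕ with |A| ≥ N and every unimodular (ε_n)_{n∈A}, liminf_{R→∞} M_{p,R}((ε_n)) ≥ c·N^{1/2}; (ii) there exists a finite A with |A| ≥ N such that limsup_{R→∞} M_{p,R}((1)_{n∈A}) ≤ C·N^{1/2}; (iii) for every finite A with |A| ≤ N and every unimodular (ε_n), limsup_{R→∞} M_{p,R}((ε_n)) ≤ C'·N^{1/p'}; and (iv) there exists a finite A with |A| ≤ N such that liminf_{R→∞} M_{p,R}((1)_{n∈A})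 ≥ c'·N^{1/2}. -/
open MeasureTheory Filter Finset
open scoped Topology ComplexConjugate

namespace DirichletFund

lemma norm_exp_im (z : ℂ) (hz : z.re = 0) : ‖Complex.exp z‖ = 1 := by
  rw [Complex.norm_exp, hz, Real.exp_zero]



lemma avg_exp_tendsto (θ : ℝ) :
    Tendsto (fun R : ℝ => (1/(2*R) : ℂ) * ∫ t in (-R)..R, Complex.exp (Complex.I * (θ * t)))
      atTop (𝓝 (if θ = 0 then 1 else 0)) := by
  by_cases hθ : θ = 0
  · simp only [hθ, if_pos rfl]
    have h : (fun _ : ℝ => (1:ℂ)) =ᶠ[atTop] (fun R : ℝ => (1/(2*R) : ℂ) *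
        ∫ t in (-R)..R, Complex.exp (Complex.I * ((0:ℝ) * t))) := by
      filter_upwards [eventually_gt_atTop (0:ℝ)] with R hR
      have hR' : (R : ℂ) ≠ 0 := by exact_mod_cast hR.ne'
      simp only [Complex.ofReal_zero, zero_mul, Complex.ofReal_mul, mul_zero, Complex.exp_zero]
      rw [intervalIntegral.integral_const]
      push_cast
      field_simp
      rw [Complex.real_smul]; push_cast; ring
    exact Tendsto.congr' h tendsto_const_nhds
  · simp only [if_neg hθ]
    have hc : (Complex.I * θ : ℂ) ≠ 0 :=
      mul_ne_zero Complex.I_ne_zero (by exact_mod_cast hθ)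
    have key : ∀ᶠ R : ℝ in atTop,
        ‖(1/(2*R) : ℂ) * ∫ t in (-R)..R, Complex.exp (Complex.I * (θ * t))‖
          ≤ (1/R) * (1/|θ|) := by
      filter_upwards [eventually_gt_atTop (0:ℝ)] with R hR
      have hint : (∫ t in (-R)..R, Complex.exp (Complex.I * (θ * t)))
          = (Complex.exp ((Complex.I * θ) * R) - Complex.exp ((Complex.I * θ) * (-R : ℝ))) /
            (Complex.I * θ) := by
        have := integral_exp_mul_complex (a := -R) (b := R) hc
        simp_rw [show ∀ t : ℝ, Complex.I * ((θ : ℂ) * t) = (Complex.I * θ) * t from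
          fun t => by ring]
        exact this
      rw [hint, norm_mul]
      have h1 : ‖Complex.exp ((Complex.I * θ) * R) -
          Complex.exp ((Complex.I * θ) * (-R : ℝ))‖ ≤ 2 := by
        refine (norm_sub_le _ _).trans ?_
        rw [norm_exp_im _ (by simp), norm_exp_im _ (by simp)]; norm_num
      have h2 : ‖(Complex.I * θ : ℂ)‖ = |θ| := by
        rw [norm_mul, Complex.norm_I, one_mul, Complex.norm_real, Real.norm_eq_abs]
      have h3 : ‖(1/(2*(R:ℂ)) : ℂ)‖ = 1/(2*R) := by
        rw [norm_div, norm_one, norm_mul, Complex.norm_real, Real.norm_eq_abs,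
          abs_of_pos hR]
        norm_num
      rw [h3, norm_div, h2]
      have hθ' : (0:ℝ) < |θ| := abs_pos.mpr hθ
      calc 1/(2*R) * (‖Complex.exp ((Complex.I * θ) * R) -
            Complex.exp ((Complex.I * θ) * (-R : ℝ))‖ / |θ|)
          ≤ 1/(2*R) * (2/|θ|) := by gcongr
        _ = (1/R) * (1/|θ|) := by field_simp
    have h0 : Tendsto (fun R : ℝ => (1/R) * (1/|θ|)) atTop (𝓝 0) := by
      simpa [one_div] using tendsto_inv_atTop_zero.mul_const (1/|θ|)
    exact squeeze_zero_norm' key h0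

lemma cont_exp_term (θ : ℝ) : Continuous fun t : ℝ => Complex.exp (Complex.I * (θ * t)) := by
  fun_prop

lemma avg_exp_sum_tendsto {ι : Type*} (S : Finset ι) (c : ι → ℂ) (θ : ι → ℝ) :
    Tendsto (fun R : ℝ => (1/(2*R) : ℂ) *
        ∫ t in (-R)..R, ∑ j ∈ S, c j * Complex.exp (Complex.I * (θ j * t)))
      atTop (𝓝 (∑ j ∈ S with θ j = 0, c j)) := by
  have hint : ∀ R : ℝ, ((1/(2*R) : ℂ) *
      ∫ t in (-R)..R, ∑ j ∈ S, c j * Complex.exp (Complex.I * (θ j * t)))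
      = ∑ j ∈ S, c j * ((1/(2*R) : ℂ) * ∫ t in (-R)..R, Complex.exp (Complex.I * (θ j * t))) := by
    intro R
    rw [intervalIntegral.integral_finset_sum (fun j _ =>
      ((by fun_prop : Continuous fun t : ℝ => c j * Complex.exp (Complex.I * (θ j * t))).intervalIntegrable _ _)), Finset.mul_sum]
    exact Finset.sum_congr rfl fun j _ => by
      rw [intervalIntegral.integral_const_mul]; ring
  simp_rw [hint]
  have := tendsto_finset_sum S (fun j (_ : j ∈ S) => (avg_exp_tendsto (θ j)).const_mul (c j))
  convert this using 2
  rw [Finset.sum_filter]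
  exact Finset.sum_congr rfl fun j _ => by split <;> simp



lemma cont_exp_term' (c : ℂ) (θ : ℝ) : Continuous fun t : ℝ => c * Complex.exp (Complex.I * (θ * t)) := by
  fun_prop

-- real average of a finite complex exponential sum, via real parts
lemma avg_re_tendsto {ι : Type*} (S : Finset ι) (c : ι → ℂ) (θ : ι → ℝ) :
    Tendsto (fun R : ℝ => (1/(2*R) : ℝ) *
        ∫ t in (-R)..R, (∑ j ∈ S, c j * Complex.exp (Complex.I * (θ j * t))).re)
      atTop (𝓝 (∑ j ∈ S with θ j = 0, c j).re) := by
  have key : ∀ R : ℝ, ((1/(2*R) : ℝ) *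
      ∫ t in (-R)..R, (∑ j ∈ S, c j * Complex.exp (Complex.I * (θ j * t))).re)
      = ((1/(2*R) : ℂ) * ∫ t in (-R)..R, ∑ j ∈ S, c j * Complex.exp (Complex.I * (θ j * t))).re := by
    intro R
    have hi : IntervalIntegrable (fun t : ℝ => ∑ j ∈ S, c j * Complex.exp (Complex.I * (θ j * t)))
        MeasureTheory.volume (-R) R :=
      (continuous_finset_sum S fun j _ => cont_exp_term' (c j) (θ j)).intervalIntegrable _ _
    have := (Complex.reCLM.intervalIntegral_comp_comm hi (a := -R) (b := R)).symm
    simp only [Complex.reCLM_apply] at this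
    rw [← this]
    rw [show (1/(2*R) : ℂ) = ((1/(2*R) : ℝ) : ℂ) by push_cast; ring]
    rw [Complex.re_ofReal_mul]
  simp_rw [key]
  exact (Complex.continuous_re.tendsto _).comp (avg_exp_sum_tendsto S c θ)

lemma tendsto_avg_sq (Λ : ℕ → ℝ) (hinj : Function.Injective Λ) (A : Finset ℕ) (ε : ℕ → ℂ)
    (hε : ∀ n ∈ A, ‖ε n‖ = 1) :
    Tendsto (fun R : ℝ => (1/(2*R)) * ∫ t in (-R)..R,
        ‖∑ n ∈ A, ε n * Complex.exp (-(Complex.I * (Λ n * t)))‖ ^ (2:ℝ))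
      atTop (𝓝 (A.card)) := by
  have hpt : ∀ t : ℝ,
      ‖∑ n ∈ A, ε n * Complex.exp (-(Complex.I * (Λ n * t)))‖ ^ (2:ℝ)
      = (∑ q ∈ A ×ˢ A, (ε q.1 * conj (ε q.2)) *
          Complex.exp (Complex.I * (((Λ q.2 - Λ q.1 : ℝ) : ℂ) * t))).re := by
    intro t
    set z := ∑ n ∈ A, ε n * Complex.exp (-(Complex.I * (Λ n * t))) with hz
    have h1 : ‖z‖ ^ (2:ℝ) = (z * conj z).re := by
      rw [show (2:ℝ) = ((2:ℕ):ℝ) by norm_num, Real.rpow_natCast, Complex.sq_norm,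
        Complex.mul_conj, Complex.ofReal_re]
    rw [h1, hz, map_sum, Finset.sum_mul_sum]
    rw [← Finset.sum_product']
    congr 1
    apply Finset.sum_congr rfl
    rintro ⟨m, n⟩ _
    simp only
    rw [map_mul, ← Complex.exp_conj]
    have hconj : (starRingEnd ℂ) (-(Complex.I * (Λ n * t))) = Complex.I * (Λ n * t) := by
      simp [Complex.ext_iff]
    rw [hconj]
    rw [mul_mul_mul_comm, ← Complex.exp_add]
    congr 2
    push_cast
    ring
  simp_rw [hpt]
  have h := avg_re_tendsto (A ×ˢ A) (fun q => ε q.1 * conj (ε q.2)) (fun q => Λ q.2 - Λ q.1)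
  have hfil : {q ∈ A ×ˢ A | Λ q.2 - Λ q.1 = 0} = A.diag := by
    ext ⟨m, n⟩
    simp only [Finset.mem_filter, Finset.mem_product, Finset.mem_diag, sub_eq_zero]
    constructor
    · rintro ⟨⟨hm, hn⟩, h⟩
      exact ⟨hm, (hinj h).symm⟩
    · rintro ⟨hm, rfl⟩
      exact ⟨⟨hm, hm⟩, rfl⟩
  have hval : (∑ j ∈ {q ∈ A ×ˢ A | Λ q.2 - Λ q.1 = 0}, ε j.1 * conj (ε j.2)).re
      = (A.card : ℝ) := by
    rw [hfil, Finset.sum_diag]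
    have : ∀ a ∈ A, ε a * conj (ε a) = 1 := by
      intro a ha
      rw [Complex.mul_conj, Complex.normSq_eq_norm_sq, hε a ha]
      norm_num
    rw [Finset.sum_congr rfl this]
    simp
  rw [hval] at h
  exact h



lemma tendsto_avg_pow (Λ : ℕ → ℝ) (A : Finset ℕ) (k : ℕ) (hk : 1 ≤ k) :
    Tendsto (fun R : ℝ => (1/(2*R)) * ∫ t in (-R)..R,
        ‖∑ n ∈ A, (1:ℂ) * Complex.exp (-(Complex.I * (Λ n * t)))‖ ^ (2*(k:ℝ)))
      atTop (𝓝 (#{q ∈ (Fintype.piFinset fun _ : Fin k => A) ×ˢ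
          (Fintype.piFinset fun _ : Fin k => A) | ∑ i, Λ (q.1 i) = ∑ i, Λ (q.2 i)})) := by
  set PP := Fintype.piFinset fun _ : Fin k => A with hPP
  have hpt : ∀ t : ℝ,
      ‖∑ n ∈ A, (1:ℂ) * Complex.exp (-(Complex.I * (Λ n * t)))‖ ^ (2*(k:ℝ))
      = (∑ q ∈ PP ×ˢ PP, (1:ℂ) *
          Complex.exp (Complex.I * (((∑ i, Λ (q.2 i)) - ∑ i, Λ (q.1 i) : ℝ) * t))).re := by
    intro t
    set z := ∑ n ∈ A, (1:ℂ) * Complex.exp (-(Complex.I * (Λ n * t))) with hz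
    have hzk : z ^ k = ∑ ν ∈ PP, Complex.exp (-(Complex.I * ((∑ i, Λ (ν i) : ℝ) * t))) := by
      have h1 : z ^ k = ∏ _i : Fin k, z := by
        rw [Finset.prod_const, Finset.card_univ, Fintype.card_fin]
      rw [h1, hz, Finset.prod_univ_sum]
      apply Finset.sum_congr rfl
      intro ν _
      simp only [one_mul]
      rw [← Complex.exp_sum]
      congr 1
      push_cast
      rw [Finset.sum_mul, Finset.mul_sum, ← Finset.sum_neg_distrib]
    have habs : ‖z‖ ^ (2*(k:ℝ)) = (z ^ k * conj (z ^ k)).re := by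
      rw [show (2*(k:ℝ)) = ((2*k : ℕ) : ℝ) by push_cast; ring, Real.rpow_natCast,
        show 2*k = k*2 by ring, pow_mul, ← norm_pow, Complex.sq_norm, Complex.mul_conj,
        Complex.ofReal_re]
    rw [habs, hzk, map_sum, Finset.sum_mul_sum, ← Finset.sum_product']
    congr 1
    apply Finset.sum_congr rfl
    rintro ⟨ν, μ⟩ _
    simp only [one_mul]
    rw [← Complex.exp_conj]
    have hconj : (starRingEnd ℂ) (-(Complex.I * ((∑ i, Λ (μ i) : ℝ) * t)))
        = Complex.I * ((∑ i, Λ (μ i) : ℝ) * t) := by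
      simp [Complex.ext_iff]
    rw [hconj, ← Complex.exp_add]
    congr 1
    push_cast
    ring
  simp_rw [hpt]
  have h := avg_re_tendsto (PP ×ˢ PP) (fun _ => (1:ℂ))
    (fun q => (∑ i, Λ (q.2 i)) - ∑ i, Λ (q.1 i))
  have hfil : {q ∈ PP ×ˢ PP | (∑ i, Λ (q.2 i)) - ∑ i, Λ (q.1 i) = 0}
      = {q ∈ PP ×ˢ PP | ∑ i, Λ (q.1 i) = ∑ i, Λ (q.2 i)} := by
    apply Finset.filter_congr
    intro q _
    rw [sub_eq_zero, eq_comm]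
  rw [hfil] at h
  have hval : (∑ _q ∈ {q ∈ PP ×ˢ PP | ∑ i, Λ (q.1 i) = ∑ i, Λ (q.2 i)}, (1:ℂ)).re
      = (#{q ∈ PP ×ˢ PP | ∑ i, Λ (q.1 i) = ∑ i, Λ (q.2 i)} : ℝ) := by
    simp
  rw [hval] at h
  exact h




lemma jensen_avg {R : ℝ} (hR : 0 < R) {g : ℝ → ℝ} (hg : Continuous g) (hg0 : ∀ t, 0 ≤ g t)
    {s : ℝ} (hs : 1 ≤ s) :
    ((1/(2*R)) * ∫ t in (-R)..R, g t) ^ s ≤ (1/(2*R)) * ∫ t in (-R)..R, g t ^ s := by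
  have hs0 : (0:ℝ) ≤ s := by linarith
  set μ := volume.restrict (Set.Ioc (-R) R) with hμdef
  have hμuniv : μ Set.univ = ENNReal.ofReal (2*R) := by
    rw [hμdef, Measure.restrict_apply_univ, Real.volume_Ioc]
    ring_nf
  have hfin : IsFiniteMeasure μ := ⟨by rw [hμuniv]; exact ENNReal.ofReal_lt_top⟩
  have hμne : μ Set.univ ≠ 0 := by
    rw [hμuniv]
    simp only [ne_eq, ENNReal.ofReal_eq_zero, not_le]
    linarith
  have hne : NeZero μ := by
    constructor
    intro h
    exact hμne (by rw [h]; rfl)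
  have havg : ∀ h : ℝ → ℝ, ⨍ x, h x ∂μ = (1/(2*R)) * ∫ t in (-R)..R, h t := by
    intro h
    rw [average_eq, measureReal_def, hμuniv, ENNReal.toReal_ofReal (by positivity),
      intervalIntegral.integral_of_le (by linarith), smul_eq_mul]
    congr 1
    rw [one_div]
  have key := (convexOn_rpow hs).map_average_le
    (f := g) (μ := μ)
    (fun x (hx : x ∈ Set.Ici (0:ℝ)) =>
      (Real.continuousAt_rpow_const x s (Or.inr hs0)).continuousWithinAt)
    isClosed_Ici
    (Filter.Eventually.of_forall fun t => hg0 t)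
    (hg.integrableOn_Ioc)
    ((hg.rpow_const fun x => Or.inr hs0).integrableOn_Ioc)
  rw [havg, havg] at key
  exact key

lemma abs_sum_continuous (Λ : ℕ → ℝ) (A : Finset ℕ) (a : ℕ → ℂ) :
    Continuous fun t : ℝ => ‖∑ n ∈ A, a n * Complex.exp (-(Complex.I * (Λ n * t)))‖ :=
  continuous_norm.comp (by fun_prop)

lemma avg_nonneg {R : ℝ} (hR : 0 < R) {g : ℝ → ℝ} (hg0 : ∀ t, 0 ≤ g t) :
    0 ≤ (1/(2*R)) * ∫ t in (-R)..R, g t := by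
  have : 0 ≤ ∫ t in (-R)..R, g t :=
    intervalIntegral.integral_nonneg (by linarith) (fun t _ => hg0 t)
  positivity

lemma dirichletMpR_mono (Λ : ℕ → ℝ) (A : Finset ℕ) (a : ℕ → ℂ) {q1 q2 : ℝ}
    (h1 : 0 < q1) (h2 : q1 ≤ q2) {R : ℝ} (hR : 0 < R) :
    dirichletMpR Λ q1 A a R ≤ dirichletMpR Λ q2 A a R := by
  set F : ℝ → ℝ := fun t =>
    ‖∑ n ∈ A, a n * Complex.exp (-(Complex.I * (Λ n * t)))‖ with hF
  have hFc : Continuous F := abs_sum_continuous Λ A a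
  have hF0 : ∀ t, 0 ≤ F t := fun t => norm_nonneg _
  have h20 : 0 < q2 := lt_of_lt_of_le h1 h2
  have hs : 1 ≤ q2 / q1 := (one_le_div h1).mpr h2
  have key := jensen_avg hR (g := fun t => F t ^ q1)
    (hFc.rpow_const fun x => Or.inr h1.le) (fun t => Real.rpow_nonneg (hF0 t) _) hs
  have hpt : ∀ t : ℝ, (F t ^ q1) ^ (q2/q1) = F t ^ q2 := by
    intro t
    rw [← Real.rpow_mul (hF0 t)]
    congr 1
    field_simp
  simp_rw [hpt] at key
  have hA1 : 0 ≤ (1/(2*R)) * ∫ t in (-R)..R, F t ^ q1 :=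
    avg_nonneg hR fun t => Real.rpow_nonneg (hF0 t) _
  show ((1/(2*R)) * ∫ t in (-R)..R, F t ^ q1) ^ (1/q1)
      ≤ ((1/(2*R)) * ∫ t in (-R)..R, F t ^ q2) ^ (1/q2)
  calc ((1/(2*R)) * ∫ t in (-R)..R, F t ^ q1) ^ (1/q1)
      = (((1/(2*R)) * ∫ t in (-R)..R, F t ^ q1) ^ (q2/q1)) ^ (1/q2) := by
        rw [← Real.rpow_mul hA1]
        congr 1
        field_simp
    _ ≤ ((1/(2*R)) * ∫ t in (-R)..R, F t ^ q2) ^ (1/q2) := by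
        apply Real.rpow_le_rpow (Real.rpow_nonneg hA1 _) key (by positivity)

lemma dirichletMpR_le_card (Λ : ℕ → ℝ) (A : Finset ℕ) (a : ℕ → ℂ)
    (ha : ∀ n ∈ A, ‖a n‖ = 1) {p : ℝ} (hp : 0 < p) {R : ℝ} (hR : 0 < R) :
    dirichletMpR Λ p A a R ≤ A.card := by
  set F : ℝ → ℝ := fun t =>
    ‖∑ n ∈ A, a n * Complex.exp (-(Complex.I * (Λ n * t)))‖ with hF
  have hFc : Continuous F := abs_sum_continuous Λ A a
  have hF0 : ∀ t, 0 ≤ F t := fun t => norm_nonneg _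
  have hFle : ∀ t, F t ≤ A.card := by
    intro t
    rw [hF]
    calc ‖∑ n ∈ A, a n * Complex.exp (-(Complex.I * (Λ n * t)))‖
        ≤ ∑ n ∈ A, ‖a n * Complex.exp (-(Complex.I * (Λ n * t)))‖ :=
          norm_sum_le _ _
      _ = ∑ n ∈ A, (1:ℝ) := by
          apply Finset.sum_congr rfl
          intro n hn
          rw [norm_mul, ha n hn, one_mul]
          apply norm_exp_im
          simp
      _ = A.card := by simp
  have hint : (1/(2*R)) * (∫ t in (-R)..R, F t ^ p) ≤ ((A.card : ℝ)) ^ p := by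
    have hmono : (∫ t in (-R)..R, F t ^ p) ≤ ∫ _t in (-R)..R, ((A.card : ℝ)) ^ p := by
      apply intervalIntegral.integral_mono_on (by linarith)
      · exact (hFc.rpow_const fun x => Or.inr hp.le).intervalIntegrable _ _
      · exact intervalIntegrable_const
      · intro t _
        exact Real.rpow_le_rpow (hF0 t) (hFle t) hp.le
    rw [intervalIntegral.integral_const, smul_eq_mul] at hmono
    calc (1/(2*R)) * (∫ t in (-R)..R, F t ^ p)
        ≤ (1/(2*R)) * ((R - -R) * ((A.card : ℝ)) ^ p) := by
          apply mul_le_mul_of_nonneg_left hmono (by positivity)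
      _ = ((A.card : ℝ)) ^ p := by field_simp; ring
  show ((1/(2*R)) * ∫ t in (-R)..R, F t ^ p) ^ (1/p) ≤ (A.card : ℝ)
  calc ((1/(2*R)) * ∫ t in (-R)..R, F t ^ p) ^ (1/p)
      ≤ (((A.card : ℝ)) ^ p) ^ (1/p) :=
        Real.rpow_le_rpow (avg_nonneg hR fun t => Real.rpow_nonneg (hF0 t) _) hint (by positivity)
    _ = (A.card : ℝ) := by
        rw [← Real.rpow_mul (Nat.cast_nonneg _)]
        rw [mul_one_div_cancel hp.ne', Real.rpow_one]




lemma superinc_inj (Λ : ℕ → ℝ) (hpos : ∀ n, 0 ≤ Λ n) (k : ℕ) :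
    ∀ A : Finset ℕ, (∀ n ∈ A, (k : ℝ) * (∑ m ∈ A with m < n, Λ m) < Λ n) →
    ∀ c d : ℕ → ℕ, (∀ n, c n ≤ k) → (∀ n, d n ≤ k) →
      (∑ n ∈ A, (c n : ℝ) * Λ n) = (∑ n ∈ A, (d n : ℝ) * Λ n) → ∀ n ∈ A, c n = d n := by
  intro A
  induction A using Finset.induction_on_max with
  | empty => intro _ _ _ _ _ _ n hn; exact absurd hn (Finset.notMem_empty n)
  | insert a s ha ih =>
    intro hsup c d hc hd hsum
    have hsub : ∀ n ∈ s, {m ∈ s | m < n} = {m ∈ insert a s | m < n} := by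
      intro n hn
      ext m
      simp only [Finset.mem_filter, Finset.mem_insert]
      constructor
      · rintro ⟨hm, hlt⟩; exact ⟨Or.inr hm, hlt⟩
      · rintro ⟨hm | hm, hlt⟩
        · exact absurd (hlt.trans (ha n hn)) (by simp [hm])
        · exact ⟨hm, hlt⟩
    have hfila : {m ∈ insert a s | m < a} = s := by
      ext m
      simp only [Finset.mem_filter, Finset.mem_insert]
      constructor
      · rintro ⟨hm | hm, hlt⟩
        · exact absurd hlt (by simp [hm])
        · exact hm
      · intro hm; exact ⟨Or.inr hm, ha m hm⟩
    have hanotmem : a ∉ s := fun h => lt_irrefl a (ha a h)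
    rw [Finset.sum_insert hanotmem, Finset.sum_insert hanotmem] at hsum
    have hS0 : (0:ℝ) ≤ ∑ m ∈ s, Λ m := Finset.sum_nonneg fun m _ => hpos m
    have hsupa : (k:ℝ) * (∑ m ∈ s, Λ m) < Λ a := by
      have := hsup a (Finset.mem_insert_self a s)
      rwa [hfila] at this
    have hΛa : 0 < Λ a := lt_of_le_of_lt (by positivity) hsupa
    have hcb : (∑ n ∈ s, (c n : ℝ) * Λ n) ≤ (k:ℝ) * ∑ m ∈ s, Λ m := by
      rw [Finset.mul_sum]
      apply Finset.sum_le_sum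
      intro m _
      exact mul_le_mul_of_nonneg_right (by exact_mod_cast hc m) (hpos m)
    have hdb : (∑ n ∈ s, (d n : ℝ) * Λ n) ≤ (k:ℝ) * ∑ m ∈ s, Λ m := by
      rw [Finset.mul_sum]
      apply Finset.sum_le_sum
      intro m _
      exact mul_le_mul_of_nonneg_right (by exact_mod_cast hd m) (hpos m)
    have hc0 : (0:ℝ) ≤ ∑ n ∈ s, (c n : ℝ) * Λ n :=
      Finset.sum_nonneg fun m _ => mul_nonneg (Nat.cast_nonneg _) (hpos m)
    have hd0 : (0:ℝ) ≤ ∑ n ∈ s, (d n : ℝ) * Λ n :=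
      Finset.sum_nonneg fun m _ => mul_nonneg (Nat.cast_nonneg _) (hpos m)
    have hca : c a = d a := by
      by_contra hne
      rcases Nat.lt_or_ge (c a) (d a) with hlt | hge
      · have h1 : ((c a : ℝ) + 1) ≤ (d a : ℝ) := by exact_mod_cast hlt
        nlinarith
      · have hlt : d a < c a := lt_of_le_of_ne hge (fun h => hne h.symm)
        have h1 : ((d a : ℝ) + 1) ≤ (c a : ℝ) := by exact_mod_cast hlt
        nlinarith
    have hsum' : (∑ n ∈ s, (c n : ℝ) * Λ n) = ∑ n ∈ s, (d n : ℝ) * Λ n := by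
      rw [hca] at hsum
      linarith
    intro n hn
    rcases Finset.mem_insert.mp hn with rfl | hn'
    · exact hca
    · exact ih (fun m hm => (hsub m hm) ▸ hsup m (Finset.mem_insert_of_mem hm)) c d hc hd hsum' n hn'

lemma exists_perm_comp {k : ℕ} {ν μ : Fin k → ℕ} (h : (List.ofFn ν).Perm (List.ofFn μ)) :
    ∃ σ : Equiv.Perm (Fin k), ν ∘ σ = μ := by
  have h1 : (List.ofFn (ν ∘ Tuple.sort ν)).Perm (List.ofFn (μ ∘ Tuple.sort μ)) :=
    ((Equiv.Perm.ofFn_comp_perm (Tuple.sort ν) ν).trans h).trans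
      (Equiv.Perm.ofFn_comp_perm (Tuple.sort μ) μ).symm
  have e : ν ∘ Tuple.sort ν = μ ∘ Tuple.sort μ :=
    List.ofFn_injective (h1.eq_of_sortedLE
      (Tuple.monotone_sort ν).sortedLE_ofFn (Tuple.monotone_sort μ).sortedLE_ofFn)
  refine ⟨(Tuple.sort μ).symm.trans (Tuple.sort ν), ?_⟩
  ext x
  have := congrFun e ((Tuple.sort μ).symm x)
  simpa using this

-- sums determine counts, counts determine multisets, multisets determine up to permutation
lemma sum_eq_count_sum (Λ : ℕ → ℝ) {k : ℕ} (A : Finset ℕ) (ν : Fin k → ℕ)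
    (hν : ∀ i, ν i ∈ A) :
    (∑ i, Λ (ν i)) = ∑ n ∈ A, ((((List.ofFn ν : Multiset ℕ)).count n : ℝ)) * Λ n := by
  set M : Multiset ℕ := (List.ofFn ν : Multiset ℕ) with hM
  have h1 : (∑ i, Λ (ν i)) = (M.map Λ).sum := by
    rw [hM]
    rw [Multiset.map_coe, Multiset.sum_coe, List.map_ofFn, List.sum_ofFn]
    rfl
  rw [h1, Finset.sum_multiset_map_count]
  have hsub : M.toFinset ⊆ A := by
    intro n hn
    rw [Multiset.mem_toFinset, hM] at hn
    rw [Multiset.mem_coe, List.mem_ofFn] at hn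
    obtain ⟨i, rfl⟩ := hn
    exact hν i
  rw [Finset.sum_subset hsub]
  · apply Finset.sum_congr rfl
    intro n _
    rw [nsmul_eq_mul]
  · intro n _ hn
    rw [Multiset.mem_toFinset] at hn
    rw [Multiset.count_eq_zero_of_notMem hn]
    simp

lemma card_pairs_le (Λ : ℕ → ℝ) (hpos : ∀ n, 0 ≤ Λ n) (k : ℕ) (A : Finset ℕ)
    (hsup : ∀ n ∈ A, (k : ℝ) * (∑ m ∈ A with m < n, Λ m) < Λ n) :
    #{q ∈ (Fintype.piFinset fun _ : Fin k => A) ×ˢ (Fintype.piFinset fun _ : Fin k => A) |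
        ∑ i, Λ (q.1 i) = ∑ i, Λ (q.2 i)}
      ≤ #A ^ k * k.factorial := by
  classical
  set PP := Fintype.piFinset fun _ : Fin k => A with hPP
  set E := {q ∈ PP ×ˢ PP | ∑ i, Λ (q.1 i) = ∑ i, Λ (q.2 i)} with hE
  have hex : ∀ q ∈ E, ∃ σ : Equiv.Perm (Fin k), q.1 ∘ σ = q.2 := by
    rintro ⟨ν, μ⟩ hq
    rw [hE, Finset.mem_filter, Finset.mem_product] at hq
    obtain ⟨⟨hν, hμ⟩, hsum⟩ := hq
    have hνA : ∀ i, ν i ∈ A := fun i => (Fintype.mem_piFinset.mp hν) i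
    have hμA : ∀ i, μ i ∈ A := fun i => (Fintype.mem_piFinset.mp hμ) i
    have hcount : ∀ n ∈ A, ((List.ofFn ν : Multiset ℕ)).count n
        = ((List.ofFn μ : Multiset ℕ)).count n := by
      apply superinc_inj Λ hpos k A hsup
      · intro n
        calc ((List.ofFn ν : Multiset ℕ)).count n ≤ Multiset.card (List.ofFn ν : Multiset ℕ) :=
            Multiset.count_le_card _ _
          _ = k := by rw [Multiset.coe_card, List.length_ofFn]
      · intro n
        calc ((List.ofFn μ : Multiset ℕ)).count n ≤ Multiset.card (List.ofFn μ : Multiset ℕ) :=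
            Multiset.count_le_card _ _
          _ = k := by rw [Multiset.coe_card, List.length_ofFn]
      · rw [← sum_eq_count_sum Λ A ν hνA, ← sum_eq_count_sum Λ A μ hμA]
        exact hsum
    have hMeq : (List.ofFn ν : Multiset ℕ) = (List.ofFn μ : Multiset ℕ) := by
      ext b
      by_cases hb : b ∈ A
      · exact hcount b hb
      · rw [Multiset.count_eq_zero_of_notMem, Multiset.count_eq_zero_of_notMem]
        · intro hmem
          rw [Multiset.mem_coe, List.mem_ofFn] at hmem
          obtain ⟨i, rfl⟩ := hmem
          exact hb (hμA i)
        · intro hmem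
          rw [Multiset.mem_coe, List.mem_ofFn] at hmem
          obtain ⟨i, rfl⟩ := hmem
          exact hb (hνA i)
    exact exists_perm_comp (Multiset.coe_eq_coe.mp hMeq)
  set φ : (Fin k → ℕ) × (Fin k → ℕ) → (Fin k → ℕ) × Equiv.Perm (Fin k) :=
    fun q => (q.1, if h : ∃ σ : Equiv.Perm (Fin k), q.1 ∘ σ = q.2 then h.choose else 1) with hφ
  have hcard : E.card ≤ (PP ×ˢ (Finset.univ : Finset (Equiv.Perm (Fin k)))).card := by
    apply Finset.card_le_card_of_injOn φ
    · intro q hq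
      rw [Finset.mem_coe] at hq ⊢
      rw [Finset.mem_product]
      constructor
      · rw [hE, Finset.mem_filter, Finset.mem_product] at hq
        exact hq.1.1
      · exact Finset.mem_univ _
    · intro q hq q' hq' heq
      have h1 := hex q hq
      have h2 := hex q' hq'
      rw [hφ] at heq
      simp only [dif_pos h1, dif_pos h2, Prod.mk.injEq] at heq
      obtain ⟨e1, e2⟩ := heq
      have s1 := h1.choose_spec
      have s2 := h2.choose_spec
      apply Prod.ext e1
      rw [← s1, ← s2]
      rw [e2, e1]
  calc E.card ≤ (PP ×ˢ (Finset.univ : Finset (Equiv.Perm (Fin k)))).card := hcard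
    _ = #A ^ k * k.factorial := by
      rw [Finset.card_product, Fintype.card_piFinset]
      rw [Finset.prod_const, Finset.card_univ, Fintype.card_fin, Finset.card_univ]
      rw [Fintype.card_perm, Fintype.card_fin]

lemma exists_superinc (Λ : ℕ → ℝ) (hpos : ∀ n, 0 ≤ Λ n) (hunb : Tendsto Λ atTop atTop) (k : ℕ) :
    ∃ g : ℕ → ℕ, StrictMono g ∧ ∀ j : ℕ, (k:ℝ) * (∑ i ∈ Finset.range j, Λ (g i)) < Λ (g j) := by
  have key : ∀ (m : ℕ) (B : ℝ), ∃ n, m < n ∧ B < Λ n := by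
    intro m B
    have h1 : ∀ᶠ n in atTop, B < Λ n := hunb.eventually (eventually_gt_atTop B)
    have h2 : ∀ᶠ n in (atTop : Filter ℕ), m < n := eventually_gt_atTop m
    exact (h2.and h1).exists
  have key0 : ∃ n, (0:ℝ) < Λ n := by
    obtain ⟨n, _, hn⟩ := key 0 0
    exact ⟨n, hn⟩
  -- recursive construction
  let g : ℕ → ℕ := fun j => Nat.rec key0.choose
    (fun _j prev => (key prev (((k:ℝ) + 1) * Λ prev)).choose) j
  have hg0 : (0:ℝ) < Λ (g 0) := key0.choose_spec
  have hgs : ∀ j, g j < g (j+1) ∧ ((k:ℝ)+1) * Λ (g j) < Λ (g (j+1)) :=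
    fun j => (key (g j) (((k:ℝ)+1) * Λ (g j))).choose_spec
  refine ⟨g, strictMono_nat_of_lt_succ (fun j => (hgs j).1), ?_⟩
  intro j
  induction j with
  | zero => simpa using hg0
  | succ j ih =>
    rw [Finset.sum_range_succ]
    have h2 := (hgs j).2
    have h3 : (0:ℝ) ≤ Λ (g j) := hpos _
    nlinarith


lemma avg_interp (Λ : ℕ → ℝ) (A : Finset ℕ) (a : ℕ → ℂ)
    {p : ℝ} (hp2 : 2 ≤ p) {B : ℝ} (hB : (A.card : ℝ) ≤ B)
    (ha : ∀ n ∈ A, ‖a n‖ = 1) {R : ℝ} (hR : 0 < R) :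
    (1/(2*R)) * (∫ t in (-R)..R,
        ‖∑ n ∈ A, a n * Complex.exp (-(Complex.I * (Λ n * t)))‖ ^ p)
      ≤ B ^ (p-2) * ((1/(2*R)) * ∫ t in (-R)..R,
        ‖∑ n ∈ A, a n * Complex.exp (-(Complex.I * (Λ n * t)))‖ ^ (2:ℝ)) := by
  set F : ℝ → ℝ := fun t =>
    ‖∑ n ∈ A, a n * Complex.exp (-(Complex.I * (Λ n * t)))‖ with hF
  have hFc : Continuous F := abs_sum_continuous Λ A a
  have hF0 : ∀ t, 0 ≤ F t := fun t => norm_nonneg _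
  have hB0 : (0:ℝ) ≤ B := le_trans (Nat.cast_nonneg _) hB
  have hFle : ∀ t, F t ≤ B := by
    intro t
    refine le_trans ?_ hB
    rw [hF]
    calc ‖∑ n ∈ A, a n * Complex.exp (-(Complex.I * (Λ n * t)))‖
        ≤ ∑ n ∈ A, ‖a n * Complex.exp (-(Complex.I * (Λ n * t)))‖ :=
          norm_sum_le _ _
      _ = ∑ n ∈ A, (1:ℝ) := by
          refine Finset.sum_congr rfl fun n hn => ?_
          rw [norm_mul, ha n hn, one_mul]
          exact norm_exp_im _ (by simp)
      _ = A.card := by simp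
  have hpt : ∀ t, F t ^ p ≤ B ^ (p-2) * F t ^ (2:ℝ) := by
    intro t
    have h1 : F t ^ p = F t ^ (p-2) * F t ^ (2:ℝ) := by
      rw [← Real.rpow_add' (hF0 t) (by linarith : p - 2 + 2 ≠ 0)]
      norm_num
    rw [h1]
    apply mul_le_mul_of_nonneg_right _ (Real.rpow_nonneg (hF0 t) _)
    exact Real.rpow_le_rpow (hF0 t) (hFle t) (by linarith)
  have hmono : (∫ t in (-R)..R, F t ^ p) ≤ ∫ t in (-R)..R, B ^ (p-2) * F t ^ (2:ℝ) := by
    apply intervalIntegral.integral_mono_on (by linarith)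
    · exact (hFc.rpow_const fun x => Or.inr (by linarith)).intervalIntegrable _ _
    · exact (continuous_const.mul (hFc.rpow_const fun x => Or.inr (by norm_num))).intervalIntegrable _ _
    · intro t _
      exact hpt t
  rw [intervalIntegral.integral_const_mul] at hmono
  calc (1/(2*R)) * (∫ t in (-R)..R, F t ^ p)
      ≤ (1/(2*R)) * (B ^ (p-2) * ∫ t in (-R)..R, F t ^ (2:ℝ)) :=
        mul_le_mul_of_nonneg_left hmono (by positivity)
    _ = B ^ (p-2) * ((1/(2*R)) * ∫ t in (-R)..R, F t ^ (2:ℝ)) := by ring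

end DirichletFund
open DirichletFund in
/-- Fundamental functions of the canonical basis of `H_p^λ`, `2 < p < ∞`, for an arbitrary
frequency `λ`.  Here `1/p' = 1 - 1/p`. -/
theorem fundamental_functions_Hp_general_gt_two (Λ : ℕ → ℝ) (hmono : StrictMono Λ)
    (hpos : ∀ n, 0 ≤ Λ n) (hunb : Tendsto Λ atTop atTop)
    (p : ℝ) (hp : 2 < p) :
    ∃ c C c' C' : ℝ, 0 < c ∧ 0 < C ∧ 0 < c' ∧ 0 < C' ∧ ∀ N : ℕ, 1 ≤ N →
      ((∀ (A : Finset ℕ) (ε : ℕ → ℂ), N ≤ A.card → (∀ n ∈ A, ‖ε n‖ = 1) →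
          c * Real.sqrt N ≤ liminf (dirichletMpR Λ p A ε) atTop) ∧
        (∃ A : Finset ℕ, N ≤ A.card ∧
          limsup (dirichletMpR Λ p A fun _ => 1) atTop ≤ C * Real.sqrt N) ∧
        (∀ (A : Finset ℕ) (ε : ℕ → ℂ), A.card ≤ N → (∀ n ∈ A, ‖ε n‖ = 1) →
          limsup (dirichletMpR Λ p A ε) atTop ≤ C' * (N : ℝ) ^ (1 - 1 / p)) ∧
        (∃ A : Finset ℕ, A.card ≤ N ∧
          c' * Real.sqrt N ≤ liminf (dirichletMpR Λ p A fun _ => 1) atTop)) := by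
  have hp0 : (0:ℝ) < p := by linarith
  set k : ℕ := ⌈p/2⌉₊ with hk
  have hk1 : 1 ≤ k := Nat.one_le_ceil_iff.mpr (by linarith)
  have hkp : p ≤ 2*(k:ℝ) := by
    have := Nat.le_ceil (p/2)
    rw [← hk] at this
    linarith
  have hkfac1 : (1:ℝ) ≤ (k.factorial : ℝ) := by
    exact_mod_cast Nat.one_le_iff_ne_zero.mpr (Nat.factorial_ne_zero k)
  obtain ⟨g, hgmono, hgsup⟩ := exists_superinc Λ hpos hunb k
  refine ⟨1, (k.factorial : ℝ), 1, 2, one_pos, by exact_mod_cast k.factorial_pos, one_pos,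
    by norm_num, fun N hN => ?_⟩
  have hN1 : (1:ℝ) ≤ (N:ℝ) := by exact_mod_cast hN
  -- lower bound helper (parts i and iv)
  have lower : ∀ (A : Finset ℕ) (ε : ℕ → ℂ), N ≤ A.card → (∀ n ∈ A, ‖ε n‖ = 1) →
      1 * Real.sqrt N ≤ liminf (dirichletMpR Λ p A ε) atTop := by
    intro A ε hcard hε
    have havg2 := tendsto_avg_sq Λ hmono.injective A ε hε
    have T2 : Tendsto (dirichletMpR Λ 2 A ε) atTop (𝓝 ((A.card : ℝ) ^ (1/(2:ℝ)))) :=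
      ((Real.continuousAt_rpow_const ((A.card : ℕ):ℝ) (1/(2:ℝ))
        (Or.inr (by norm_num))).tendsto).comp havg2
    have hev : ∀ᶠ R in atTop, dirichletMpR Λ 2 A ε R ≤ dirichletMpR Λ p A ε R := by
      filter_upwards [eventually_gt_atTop (0:ℝ)] with R hR
      exact dirichletMpR_mono Λ A ε (by norm_num) (by linarith) hR
    have hcobp : IsCoboundedUnder (· ≥ ·) atTop (dirichletMpR Λ p A ε) := by
      apply isCoboundedUnder_ge_of_eventually_le atTop (x := (A.card : ℝ))
      filter_upwards [eventually_gt_atTop (0:ℝ)] with R hR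
      exact dirichletMpR_le_card Λ A ε hε hp0 hR
    have hbdd2 : IsBoundedUnder (· ≥ ·) atTop (dirichletMpR Λ 2 A ε) :=
      T2.isBoundedUnder_ge
    calc 1 * Real.sqrt N = Real.sqrt N := one_mul _
      _ ≤ (A.card : ℝ) ^ (1/(2:ℝ)) := by
          rw [← Real.sqrt_eq_rpow]
          exact Real.sqrt_le_sqrt (by exact_mod_cast hcard)
      _ = liminf (dirichletMpR Λ 2 A ε) atTop := T2.liminf_eq.symm
      _ ≤ liminf (dirichletMpR Λ p A ε) atTop := liminf_le_liminf hev hbdd2 hcobp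
  refine ⟨lower, ?_, ?_, ?_⟩
  · -- part (ii)
    refine ⟨(Finset.range N).image g, ?_, ?_⟩
    · rw [Finset.card_image_of_injective _ hgmono.injective, Finset.card_range]
    set A := (Finset.range N).image g with hA
    have hcardA : A.card = N := by
      rw [hA, Finset.card_image_of_injective _ hgmono.injective, Finset.card_range]
    have hsup : ∀ n ∈ A, (k:ℝ) * (∑ m ∈ A with m < n, Λ m) < Λ n := by
      intro n hn
      rw [hA, Finset.mem_image] at hn
      obtain ⟨j, hj, rfl⟩ := hn
      rw [Finset.mem_range] at hj
      have hfil : {m ∈ A | m < g j} = (Finset.range j).image g := by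
        ext m
        rw [Finset.mem_filter, hA, Finset.mem_image, Finset.mem_image]
        constructor
        · rintro ⟨⟨i, hi, rfl⟩, hlt⟩
          exact ⟨i, Finset.mem_range.mpr (hgmono.lt_iff_lt.mp hlt), rfl⟩
        · rintro ⟨i, hi, rfl⟩
          rw [Finset.mem_range] at hi
          exact ⟨⟨i, Finset.mem_range.mpr (hi.trans hj), rfl⟩, hgmono hi⟩
      rw [hfil, Finset.sum_image (fun a _ b _ h => hgmono.injective h)]
      exact hgsup j
    have havg := tendsto_avg_pow Λ A k hk1
    have hcount := card_pairs_le Λ hpos k A hsup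
    set m : ℕ := #{q ∈ (Fintype.piFinset fun _ : Fin k => A) ×ˢ
        (Fintype.piFinset fun _ : Fin k => A) |
        ∑ i, Λ (q.1 i) = ∑ i, Λ (q.2 i)} with hm
    have hkR0 : (0:ℝ) < 2*(k:ℝ) := by positivity
    have T2k : Tendsto (dirichletMpR Λ (2*(k:ℝ)) A (fun _ => 1)) atTop
        (𝓝 ((m:ℝ) ^ (1/(2*(k:ℝ))))) :=
      ((Real.continuousAt_rpow_const ((m:ℕ):ℝ) (1/(2*(k:ℝ)))
        (Or.inr (by positivity))).tendsto).comp havg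
    have hev : ∀ᶠ R in atTop, dirichletMpR Λ p A (fun _ => 1) R
        ≤ dirichletMpR Λ (2*(k:ℝ)) A (fun _ => 1) R := by
      filter_upwards [eventually_gt_atTop (0:ℝ)] with R hR
      exact dirichletMpR_mono Λ A _ hp0 hkp hR
    have hcob : IsCoboundedUnder (· ≤ ·) atTop (dirichletMpR Λ p A fun _ => 1) := by
      apply isCoboundedUnder_le_of_eventually_le atTop (x := 0)
      filter_upwards [eventually_gt_atTop (0:ℝ)] with R hR
      exact Real.rpow_nonneg
        (avg_nonneg hR fun t => Real.rpow_nonneg (norm_nonneg _) _) _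
    have hlim : limsup (dirichletMpR Λ p A fun _ => 1) atTop ≤ (m:ℝ) ^ (1/(2*(k:ℝ))) := by
      calc limsup (dirichletMpR Λ p A fun _ => 1) atTop
          ≤ limsup (dirichletMpR Λ (2*(k:ℝ)) A fun _ => 1) atTop :=
            limsup_le_limsup hev hcob T2k.isBoundedUnder_le
        _ = (m:ℝ) ^ (1/(2*(k:ℝ))) := T2k.limsup_eq
    refine hlim.trans ?_
    have hmle : (m:ℝ) ≤ (N:ℝ)^(k:ℕ) * (k.factorial : ℝ) := by
      have h := hcount
      rw [hcardA] at h
      exact_mod_cast h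
    calc (m:ℝ) ^ (1/(2*(k:ℝ)))
        ≤ ((N:ℝ)^(k:ℕ) * (k.factorial:ℝ)) ^ (1/(2*(k:ℝ))) :=
          Real.rpow_le_rpow (Nat.cast_nonneg _) hmle (by positivity)
      _ = ((N:ℝ)^(k:ℕ)) ^ (1/(2*(k:ℝ))) * ((k.factorial:ℝ)) ^ (1/(2*(k:ℝ))) :=
          Real.mul_rpow (by positivity) (by positivity)
      _ = Real.sqrt N * ((k.factorial:ℝ)) ^ (1/(2*(k:ℝ))) := by
          congr 1
          rw [← Real.rpow_natCast (N:ℝ) k, ← Real.rpow_mul (Nat.cast_nonneg _),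
            Real.sqrt_eq_rpow]
          congr 1
          have hk0 : (k:ℝ) ≠ 0 := by positivity
          field_simp
      _ ≤ Real.sqrt N * (k.factorial:ℝ) := by
          apply mul_le_mul_of_nonneg_left _ (Real.sqrt_nonneg _)
          nth_rewrite 2 [← Real.rpow_one ((k.factorial:ℝ))]
          apply Real.rpow_le_rpow_of_exponent_le hkfac1
          rw [div_le_one hkR0]
          have : (1:ℝ) ≤ (k:ℝ) := by exact_mod_cast hk1
          linarith
      _ = (k.factorial:ℝ) * Real.sqrt N := by ring
  · -- part (iii)
    intro A ε hcard hε
    have havg2 := tendsto_avg_sq Λ hmono.injective A ε hε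
    have hcardN : (A.card : ℝ) ≤ (N:ℝ) := by exact_mod_cast hcard
    have hlt : (A.card : ℝ) < 2*(N:ℝ) := by linarith
    have hev2 := havg2.eventually (eventually_le_nhds hlt)
    have hcob : IsCoboundedUnder (· ≤ ·) atTop (dirichletMpR Λ p A ε) := by
      apply isCoboundedUnder_le_of_eventually_le atTop (x := 0)
      filter_upwards [eventually_gt_atTop (0:ℝ)] with R hR
      exact Real.rpow_nonneg
        (avg_nonneg hR fun t => Real.rpow_nonneg (norm_nonneg _) _) _
    apply limsup_le_of_le hcob
    filter_upwards [hev2, eventually_gt_atTop (0:ℝ)] with R h2 hR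
    have hN0 : (0:ℝ) < N := by linarith
    have hinterp := avg_interp Λ A ε hp.le (B := (N:ℝ)) hcardN hε hR
    have havgle : (1/(2*R)) * (∫ t in (-R)..R,
        ‖∑ n ∈ A, ε n * Complex.exp (-(Complex.I * (Λ n * t)))‖ ^ p)
        ≤ (N:ℝ)^(p-2) * (2*(N:ℝ)) :=
      hinterp.trans (mul_le_mul_of_nonneg_left h2 (by positivity))
    have hstep : dirichletMpR Λ p A ε R ≤ ((N:ℝ)^(p-2) * (2*(N:ℝ))) ^ (1/p) := by
      apply Real.rpow_le_rpow
        (avg_nonneg hR fun t => Real.rpow_nonneg (norm_nonneg _) _) havgle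
        (by positivity)
    refine hstep.trans ?_
    have e1 : (N:ℝ)^(p-2) * (2*(N:ℝ)) = 2 * (N:ℝ)^(p-1) := by
      rw [show (N:ℝ)^(p-1) = (N:ℝ)^(p-2) * (N:ℝ)^(1:ℝ) by
        rw [← Real.rpow_add hN0]; ring_nf, Real.rpow_one]
      ring
    rw [e1, Real.mul_rpow (by norm_num) (Real.rpow_nonneg hN0.le _),
      ← Real.rpow_mul hN0.le]
    have e2 : (p-1) * (1/p) = 1 - 1/p := by field_simp
    rw [e2]
    apply mul_le_mul_of_nonneg_right _ (Real.rpow_nonneg hN0.le _)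
    calc (2:ℝ) ^ (1/p) ≤ (2:ℝ) ^ (1:ℝ) :=
        Real.rpow_le_rpow_of_exponent_le (by norm_num)
          (by rw [div_le_one hp0]; linarith)
      _ = 2 := Real.rpow_one _
  · -- part (iv)
    exact ⟨Finset.range N, by rw [Finset.card_range],
      lower (Finset.range N) (fun _ => 1) (by rw [Finset.card_range]) (fun n _ => by simp)⟩
end

section
/- Let λ be any frequency. Then: (i) for every finite set A ⊆ ℕ, sup_{t∈ℝ} |∑_{n∈A} e^{-iλ_n t}| = |A| (so the lower and upper democracy functions of {e^{-λ_n s}} in H_∞^λ are exactly N); and (ii) there exists a constant c > 0 such that for every finite A ⊆ ℕ and every unimodular (ε_n)_{n∈A}, sup_{t∈ℝ} |∑_{n∈A} ε_n e^{-iλ_n t}| ≥ c·|A|^{1/2} (so the lower super-democracy function of {e^{-λ_n s}} in H_∞^λ is at least a constant times N^{1/2}). -/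
open Filter Finset
open Complex Topology

/-- The `H_∞^λ` norm of the `λ`-Dirichlet polynomial `∑_{n∈A} a_n e^{-λ_n s}`:
`sup_{t∈ℝ} |∑_{n∈A} a_n e^{-iλ_n t}|`. -/
noncomputable def dirichletSupNorm (Λ : ℕ → ℝ) (A : Finset ℕ) (a : ℕ → ℂ) : ℝ :=
  ⨆ t : ℝ, ‖∑ n ∈ A, a n * Complex.exp (-(Complex.I * (Λ n * t)))‖

set_option maxHeartbeats 800000 in
lemma aux_key (Λ : ℕ → ℝ) (hinj : Function.Injective Λ)
    (A : Finset ℕ) (ε : ℕ → ℂ) (hε : ∀ n ∈ A, ‖ε n‖ = 1) :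
    0 ≤ dirichletSupNorm Λ A ε ∧ (A.card : ℝ) ≤ (dirichletSupNorm Λ A ε)^2 := by
  set f : ℝ → ℂ := fun t => ∑ n ∈ A, ε n * Complex.exp (-(Complex.I * (Λ n * t))) with hf
  set S := dirichletSupNorm Λ A ε with hSdef
  have hbd : ∀ t, ‖f t‖ ≤ A.card := by
    intro t
    calc ‖f t‖ ≤ ∑ n ∈ A, ‖ε n * Complex.exp (-(Complex.I * (Λ n * t)))‖ :=
          norm_sum_le _ _
      _ = ∑ n ∈ A, (1:ℝ) := by
          refine Finset.sum_congr rfl fun n hn => ?_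
          rw [norm_mul, hε n hn]
          simp [Complex.norm_exp]
      _ = A.card := by simp
  have hbdd : BddAbove (Set.range fun t => ‖f t‖) :=
    ⟨A.card, by rintro x ⟨t, rfl⟩; exact hbd t⟩
  have hfS : ∀ t, ‖f t‖ ≤ S := fun t => le_ciSup hbdd t
  have hS0 : 0 ≤ S := le_trans (norm_nonneg _) (hfS 0)
  refine ⟨hS0, ?_⟩
  set X : ℕ → ℕ → ℝ → ℂ := fun m n t => (ε m * (starRingEnd ℂ) (ε n))
      * Complex.exp ((Complex.I * ((Λ n : ℂ) - (Λ m : ℂ))) * t) with hX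
  have hexpand : ∀ t : ℝ, f t * (starRingEnd ℂ) (f t) = ∑ m ∈ A, ∑ n ∈ A, X m n t := by
    intro t
    rw [hf, map_sum, Finset.sum_mul_sum]
    refine Finset.sum_congr rfl fun m hm => Finset.sum_congr rfl fun n hn => ?_
    rw [hX, map_mul]
    have h1 : (starRingEnd ℂ) (Complex.exp (-(Complex.I * (Λ n * t))))
        = Complex.exp (Complex.I * (Λ n * t)) := by
      rw [← Complex.exp_conj]; congr 1; simp
    rw [h1, mul_mul_mul_comm, ← Complex.exp_add]
    congr 1
    ring_nf
  set C : ℝ := ∑ m ∈ A, ∑ n ∈ A.erase m, 2 / |Λ n - Λ m| with hC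
  have hC0 : 0 ≤ C := by
    apply Finset.sum_nonneg; intro m _; apply Finset.sum_nonneg; intro n _
    positivity
  have hkey : ∀ T : ℝ, 0 < T → (A.card : ℝ) * T ≤ S^2 * T + C := by
    intro T hT
    have hcont : ∀ m n : ℕ, IntervalIntegrable (X m n) MeasureTheory.volume 0 T := by
      intro m n
      apply Continuous.intervalIntegrable
      exact continuous_const.mul (Complex.continuous_exp.comp
        (continuous_const.mul Complex.continuous_ofReal))
    have h2 : ∀ m : ℕ, (∫ t in (0:ℝ)..T, ∑ n ∈ A, X m n t)
        = ∑ n ∈ A, ∫ t in (0:ℝ)..T, X m n t :=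
      fun m => intervalIntegral.integral_finset_sum (fun n _ => hcont m n)
    have h1 : (∫ t in (0:ℝ)..T, ∑ m ∈ A, ∑ n ∈ A, X m n t)
        = ∑ m ∈ A, ∫ t in (0:ℝ)..T, ∑ n ∈ A, X m n t :=
      intervalIntegral.integral_finset_sum (f := fun m t => ∑ n ∈ A, X m n t)
        (fun m _ => by
          apply Continuous.intervalIntegrable
          apply continuous_finset_sum
          intro n _
          simp only [hX]
          exact continuous_const.mul (Complex.continuous_exp.comp
            (continuous_const.mul Complex.continuous_ofReal)))
    have h3 : ∀ m n : ℕ, (∫ t in (0:ℝ)..T, X m n t) = (ε m * (starRingEnd ℂ) (ε n))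
        * ∫ t in (0:ℝ)..T, Complex.exp ((Complex.I * ((Λ n : ℂ) - (Λ m : ℂ))) * t) :=
      fun m n => intervalIntegral.integral_const_mul _ _
    have hint : (∫ t in (0:ℝ)..T, f t * (starRingEnd ℂ) (f t))
        = ∑ m ∈ A, ∑ n ∈ A, ∫ t in (0:ℝ)..T, X m n t := by
      calc (∫ t in (0:ℝ)..T, f t * (starRingEnd ℂ) (f t))
          = ∫ t in (0:ℝ)..T, ∑ m ∈ A, ∑ n ∈ A, X m n t :=
            intervalIntegral.integral_congr fun t _ => hexpand t
        _ = _ := by rw [h1]; exact Finset.sum_congr rfl fun m _ => h2 m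
    have hsplit : (∫ t in (0:ℝ)..T, f t * (starRingEnd ℂ) (f t))
        = (A.card : ℂ) * T + ∑ m ∈ A, ∑ n ∈ A.erase m, ∫ t in (0:ℝ)..T, X m n t := by
      rw [hint]
      have hd : ∀ m ∈ A, (∑ n ∈ A, ∫ t in (0:ℝ)..T, X m n t)
          = (T : ℂ) + ∑ n ∈ A.erase m, ∫ t in (0:ℝ)..T, X m n t := by
        intro m hm
        rw [← Finset.add_sum_erase A _ hm]
        congr 1
        rw [h3 m m]
        have hdiag : (∫ t in (0:ℝ)..T,
            Complex.exp ((Complex.I * ((Λ m : ℂ) - (Λ m : ℂ))) * t)) = (T : ℂ) := by simp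
        rw [hdiag]
        have : ε m * (starRingEnd ℂ) (ε m) = 1 := by
          rw [Complex.mul_conj, Complex.normSq_eq_norm_sq, hε m hm]; norm_num
        rw [this, one_mul]
      rw [Finset.sum_congr rfl hd, Finset.sum_add_distrib]
      congr 1
      simp [mul_comm]
    have hoff : ‖∑ m ∈ A, ∑ n ∈ A.erase m, ∫ t in (0:ℝ)..T, X m n t‖ ≤ C := by
      calc _ ≤ ∑ m ∈ A, ‖∑ n ∈ A.erase m, ∫ t in (0:ℝ)..T, X m n t‖ :=
            norm_sum_le _ _
        _ ≤ C := by
            rw [hC]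
            refine Finset.sum_le_sum fun m hm => ?_
            calc _ ≤ ∑ n ∈ A.erase m, ‖∫ t in (0:ℝ)..T, X m n t‖ :=
                  norm_sum_le _ _
              _ ≤ ∑ n ∈ A.erase m, 2 / |Λ n - Λ m| := by
                  refine Finset.sum_le_sum fun n hn => ?_
                  have hnm : Λ n ≠ Λ m := fun h => (Finset.mem_erase.1 hn).1 (hinj h)
                  have hsub : ((Λ n : ℂ) - (Λ m : ℂ)) ≠ 0 := by
                    rw [← Complex.ofReal_sub]
                    exact_mod_cast sub_ne_zero.2 hnm
                  have hc : (Complex.I * ((Λ n : ℂ) - (Λ m : ℂ))) ≠ 0 :=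
                    mul_ne_zero Complex.I_ne_zero hsub
                  rw [h3 m n, norm_mul, norm_mul, Complex.norm_conj, hε m hm,
                    hε n (Finset.mem_erase.1 hn).2, one_mul, one_mul,
                    integral_exp_mul_complex hc, norm_div]
                  have hden : ‖Complex.I * ((Λ n:ℂ) - (Λ m:ℂ))‖ = |Λ n - Λ m| := by
                    rw [norm_mul, Complex.norm_I, one_mul, ← Complex.ofReal_sub,
                      Complex.norm_real, Real.norm_eq_abs]
                  rw [hden]
                  have hd0 : 0 < |Λ n - Λ m| := abs_pos.2 (sub_ne_zero.2 hnm)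
                  have hnum : ‖Complex.exp (Complex.I * ((Λ n:ℂ) - (Λ m:ℂ)) * (T:ℝ))
                      - Complex.exp (Complex.I * ((Λ n:ℂ) - (Λ m:ℂ)) * ((0:ℝ):ℂ))‖ ≤ 2 := by
                    refine le_trans (by
                      simpa [sub_eq_add_neg] using norm_add_le
                        (Complex.exp (Complex.I * ((Λ n:ℂ) - (Λ m:ℂ)) * (T:ℝ)))
                        (-Complex.exp (Complex.I * ((Λ n:ℂ) - (Λ m:ℂ)) * ((0:ℝ):ℂ)))) ?_
                    norm_num [Complex.norm_exp, Complex.mul_re, Complex.mul_im]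
                  gcongr
    -- combine
    have hre1 : (A.card : ℝ) * T - C ≤ (∫ t in (0:ℝ)..T, f t * (starRingEnd ℂ) (f t)).re := by
      rw [hsplit, Complex.add_re]
      have hcr : ((A.card : ℂ) * T).re = (A.card : ℝ) * T := by
        rw [← Complex.ofReal_natCast, ← Complex.ofReal_mul, Complex.ofReal_re]
      rw [hcr]
      have := (abs_le.1 (Complex.abs_re_le_norm
        (∑ m ∈ A, ∑ n ∈ A.erase m, ∫ t in (0:ℝ)..T, X m n t))).1
      linarith
    have hre2 : (∫ t in (0:ℝ)..T, f t * (starRingEnd ℂ) (f t)).re ≤ S^2 * T := by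
      refine le_trans (Complex.re_le_norm _) ?_
      have hb : ∀ x ∈ Set.uIoc (0:ℝ) T, ‖f x * (starRingEnd ℂ) (f x)‖ ≤ S^2 := by
        intro x _
        rw [norm_mul, Complex.norm_conj, sq]
        exact mul_le_mul (hfS x) (hfS x) (norm_nonneg _) hS0
      have := intervalIntegral.norm_integral_le_of_norm_le_const hb
      calc ‖∫ t in (0:ℝ)..T, f t * (starRingEnd ℂ) (f t)‖
          ≤ S^2 * |T - 0| := this
        _ = S^2 * T := by rw [sub_zero, abs_of_pos hT]
    linarith
  -- let T → ∞
  have hev : ∀ᶠ T in atTop, (A.card : ℝ) ≤ S^2 + C/T := by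
    filter_upwards [eventually_gt_atTop (0:ℝ)] with T hT
    have h := hkey T hT
    have hCT : C / T * T = C := div_mul_cancel₀ _ (ne_of_gt hT)
    nlinarith
  have hlim : Tendsto (fun T : ℝ => S^2 + C/T) atTop (𝓝 (S^2 + 0)) :=
    tendsto_const_nhds.add (tendsto_const_nhds.div_atTop tendsto_id)
  simpa using ge_of_tendsto hlim hev

set_option maxHeartbeats 800000 in
/-- For any frequency `λ`: the lower and upper democracy functions of `{e^{-λ_n s}}` in
`H_∞^λ` are exactly `N`, and the lower super-democracy function is at least a constant
times `N^{1/2}`. -/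
theorem democracy_Hinf_general (Λ : ℕ → ℝ) (hmono : StrictMono Λ)
    (hpos : ∀ n, 0 ≤ Λ n) (hunb : Tendsto Λ atTop atTop) :
    (∀ A : Finset ℕ, dirichletSupNorm Λ A (fun _ => 1) = A.card) ∧
      ∃ c : ℝ, 0 < c ∧ ∀ (A : Finset ℕ) (ε : ℕ → ℂ),
        (∀ n ∈ A, ‖ε n‖ = 1) →
        c * Real.sqrt A.card ≤ dirichletSupNorm Λ A ε := by
  constructor
  · intro A
    have hbd : ∀ t : ℝ,
        ‖∑ n ∈ A, (fun _ => (1:ℂ)) n * Complex.exp (-(Complex.I * (Λ n * t)))‖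
          ≤ A.card := by
      intro t
      calc _ ≤ ∑ n ∈ A, ‖(1:ℂ) * Complex.exp (-(Complex.I * (Λ n * t)))‖ :=
            norm_sum_le _ _
        _ = ∑ n ∈ A, (1:ℝ) := by
            refine Finset.sum_congr rfl fun n hn => ?_
            simp [Complex.norm_exp]
        _ = A.card := by simp
    have hbdd : BddAbove (Set.range fun t : ℝ =>
        ‖∑ n ∈ A, (fun _ => (1:ℂ)) n * Complex.exp (-(Complex.I * (Λ n * t)))‖) :=
      ⟨A.card, by rintro x ⟨t, rfl⟩; exact hbd t⟩
    apply le_antisymm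
    · exact ciSup_le hbd
    · refine le_trans ?_ (le_ciSup hbdd (0:ℝ))
      simp
  · refine ⟨1, one_pos, fun A ε hε => ?_⟩
    obtain ⟨hS0, hcard⟩ := aux_key Λ hmono.injective A ε hε
    rw [one_mul]
    calc Real.sqrt A.card ≤ Real.sqrt ((dirichletSupNorm Λ A ε)^2) := Real.sqrt_le_sqrt hcard
      _ = _ := Real.sqrt_sq hS0
end

section
/- Let λ = (λ_n) be a lacunary frequency with λ_1 > 0, i.e. there exists L > 1 such that λ_{n+1} ≥ L·λ_n for all n. Then there exists a constant C > 0 such that for every finite set A ⊆ ℕ and all complex coefficients (a_n)_{n∈A}: ∑_{n∈A} |a_n| ≤ C · sup_{t∈ℝ} |∑_{n∈A} a_n e^{-iλ_n t}| (and trivially sup_{t∈ℝ} |∑_{n∈A} a_n e^{-iλ_n t}| ≤ ∑_{n∈A} |a_n|). (That is, the H_∞^λ-norm on Dirichlet polynomials is equivalent to the ℓ¹-norm of the coefficients.) -/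
open Filter Finset

lemma meanExp (μ : ℝ) :
    Tendsto (fun T : ℝ => (1/(2*T) : ℂ) * ∫ t in (-T)..T, Complex.exp (Complex.I * μ * t))
      atTop (nhds (if μ = 0 then (1:ℂ) else 0)) := by
  rcases eq_or_ne μ 0 with h | h
  · rw [if_pos h]
    apply Tendsto.congr' ?_ tendsto_const_nhds
    filter_upwards [eventually_gt_atTop (0:ℝ)] with T hT
    simp only [h, Complex.ofReal_zero, mul_zero, zero_mul, Complex.exp_zero]
    rw [intervalIntegral.integral_const]
    have hTC : (T:ℂ) ≠ 0 := Complex.ofReal_ne_zero.mpr hT.ne'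
    field_simp
    rw [Complex.real_smul]
    push_cast
    ring
  · rw [if_neg h]
    apply squeeze_zero_norm' (a := fun T : ℝ => T⁻¹ * |μ|⁻¹)
    · filter_upwards [eventually_gt_atTop (0:ℝ)] with T hT
      have hc : (Complex.I * μ : ℂ) ≠ 0 := by
        simp [Complex.I_ne_zero, Complex.ofReal_ne_zero, h]
      rw [show (fun t : ℝ => Complex.exp (Complex.I * μ * t)) = fun t : ℝ => Complex.exp ((Complex.I * μ) * t) from rfl]
      rw [integral_exp_mul_complex hc]
      rw [norm_mul]
      have hTnorm : ‖(1/(2*T) : ℂ)‖ = 1/(2*T) := by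
        rw [show ((1:ℂ)/(2*T)) = ((1/(2*T) : ℝ) : ℂ) by push_cast; ring]
        rw [Complex.norm_real, Real.norm_eq_abs, abs_of_pos (by positivity)]
      rw [hTnorm]
      have he : ∀ s : ℝ, ‖Complex.exp (Complex.I * μ * s)‖ ≤ 1 := by
        intro s
        rw [Complex.norm_exp]
        simp [Complex.mul_re]
      have hnum : ‖(Complex.exp (Complex.I * μ * T) - Complex.exp (Complex.I * μ * (-T:ℝ)))‖ ≤ 2 := by
        calc _ ≤ ‖Complex.exp (Complex.I * μ * T)‖ + ‖Complex.exp (Complex.I * μ * (-T:ℝ))‖ := norm_sub_le _ _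
        _ ≤ 2 := by have := he T; have := he (-T); linarith
      have hden : ‖(Complex.I * μ : ℂ)‖ = |μ| := by
        rw [norm_mul]; simp
      rw [norm_div, hden]
      have hμ : 0 < |μ| := abs_pos.mpr h
      calc 1/(2*T) * (‖Complex.exp (Complex.I * ↑μ * ↑T) - Complex.exp (Complex.I * ↑μ * ↑(-T))‖ / |μ|)
          ≤ 1/(2*T) * (2 / |μ|) := by
            apply mul_le_mul_of_nonneg_left _ (by positivity)
            exact div_le_div_of_nonneg_right hnum hμ.le
        _ = T⁻¹ * |μ|⁻¹ := by field_simp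
    · have h1 : Tendsto (fun T : ℝ => T⁻¹) atTop (nhds 0) := tendsto_inv_atTop_zero
      simpa using h1.mul_const |μ|⁻¹

open Classical in
lemma meanTrigPoly {ι : Type*} (F : Finset ι) (c : ι → ℂ) (μ : ι → ℝ) :
    Tendsto (fun T : ℝ => (1/(2*T) : ℂ) *
        ∫ t in (-T)..T, ∑ i ∈ F, c i * Complex.exp (Complex.I * μ i * t))
      atTop (nhds (∑ i ∈ F.filter (fun i => μ i = 0), c i)) := by
  have hint : ∀ (i : ι) (T : ℝ), IntervalIntegrable
      (fun t : ℝ => c i * Complex.exp (Complex.I * μ i * t)) MeasureTheory.volume (-T) T := by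
    intro i T
    apply Continuous.intervalIntegrable
    continuity
  have heq : ∀ T : ℝ, (1/(2*T) : ℂ) *
      (∫ t in (-T)..T, ∑ i ∈ F, c i * Complex.exp (Complex.I * μ i * t))
      = ∑ i ∈ F, c i * ((1/(2*T) : ℂ) * ∫ t in (-T)..T, Complex.exp (Complex.I * μ i * t)) := by
    intro T
    rw [intervalIntegral.integral_finset_sum (fun i _ => hint i T), Finset.mul_sum]
    congr 1; ext i
    rw [intervalIntegral.integral_const_mul]
    ring
  simp only [heq]
  have hlim : Tendsto (fun T : ℝ => ∑ i ∈ F,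
      c i * ((1/(2*T) : ℂ) * ∫ t in (-T)..T, Complex.exp (Complex.I * μ i * t)))
      atTop (nhds (∑ i ∈ F, c i * (if μ i = 0 then (1:ℂ) else 0))) := by
    apply tendsto_finset_sum
    intro i _
    exact (meanExp (μ i)).const_mul (c i)
  convert hlim using 2
  rw [Finset.sum_filter]
  congr 1; ext i
  split <;> simp

section arith
variable (Λ : ℕ → ℝ) (L : ℝ) (k : ℕ)

-- growth along indices
lemma lam_pow (m i : ℕ) (hpos : ∀ n, 0 ≤ Λ n) (hL : 1 < L) (hlac : ∀ n, L * Λ n ≤ Λ (n + 1)) :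
    L ^ i * Λ m ≤ Λ (m + i) := by
  induction i with
  | zero => simp
  | succ i ih =>
      have h1 : L * (L ^ i * Λ m) ≤ L * Λ (m + i) :=
        mul_le_mul_of_nonneg_left ih (by linarith)
      have h2 : L * Λ (m + i) ≤ Λ (m + i + 1) := hlac _
      calc L ^ (i+1) * Λ m = L * (L ^ i * Λ m) := by ring
        _ ≤ Λ (m + i + 1) := le_trans h1 h2
      |>.trans_eq (by ring_nf)

lemma class_step (m M : ℕ) (hmono : StrictMono Λ) (hpos : ∀ n, 0 ≤ Λ n) (hL : 1 < L)
    (hlac : ∀ n, L * Λ n ≤ Λ (n + 1)) (hk1 : 1 ≤ k)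
    (hlt : m < M) (hcl : m % k = M % k) : Λ m * L ^ k ≤ Λ M := by
  have hdvd : k ∣ (M - m) := (Nat.modEq_iff_dvd' hlt.le).mp hcl
  have hge : m + k ≤ M := by
    rcases hdvd with ⟨d, hd⟩
    have hd1 : 1 ≤ d := by
      rcases Nat.eq_zero_or_pos d with rfl | h
      · omega
      · exact h
    have : k * 1 ≤ k * d := Nat.mul_le_mul_left k hd1
    omega
  calc Λ m * L ^ k = L ^ k * Λ m := by ring
    _ ≤ Λ (m + k) := lam_pow Λ L m k hpos hL hlac
    _ ≤ Λ M := (hmono.le_iff_le).mpr hge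

lemma sum_bound (hmono : StrictMono Λ) (hpos : ∀ n, 0 ≤ Λ n) (hL : 1 < L)
    (hlac : ∀ n, L * Λ n ≤ Λ (n + 1)) (hk1 : 1 ≤ k) (hQ2 : 2 ≤ L ^ k) :
    ∀ B : Finset ℕ, ∀ M : ℕ, (∀ m ∈ B, m < M ∧ m % k = M % k) →
      ∑ m ∈ B, Λ m ≤ Λ M / (L ^ k - 1) := by
  intro B
  induction B using Finset.strongInductionOn with
  | _ B ih =>
    intro M hBM
    have hQ1 : (1:ℝ) < L ^ k := by linarith
    rcases B.eq_empty_or_nonempty with rfl | hne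
    · simp only [Finset.sum_empty]
      exact div_nonneg (hpos M) (by linarith)
    · set m := B.max' hne with hm
      have hmB : m ∈ B := B.max'_mem hne
      have hstep : Λ m * L ^ k ≤ Λ M :=
        class_step Λ L k m M hmono hpos hL hlac hk1 (hBM m hmB).1 (hBM m hmB).2
      have h2 : ∑ x ∈ B.erase m, Λ x ≤ Λ m / (L ^ k - 1) := by
        apply ih _ (Finset.erase_ssubset hmB) m
        intro x hx
        have hxB : x ∈ B := Finset.mem_of_mem_erase hx
        refine ⟨lt_of_le_of_ne (B.le_max' x hxB) (Finset.ne_of_mem_erase hx), ?_⟩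
        rw [(hBM x hxB).2, (hBM m hmB).2]
      have hsum : ∑ x ∈ B, Λ x = Λ m + ∑ x ∈ B.erase m, Λ x :=
        (Finset.add_sum_erase _ _ hmB).symm
      rw [hsum]
      have hQpos : (0:ℝ) < L ^ k - 1 := by linarith
      rw [le_div_iff₀ hQpos] at h2 ⊢
      nlinarith [hpos m, hpos M]

variable (hmono : StrictMono Λ) (hpos : ∀ n, 0 ≤ Λ n) (hfirst : 0 < Λ 0)
  (hL : 1 < L) (hlac : ∀ n, L * Λ n ≤ Λ (n + 1)) (hk1 : 1 ≤ k)
  (hQ : 2*L/(L-1) + 1 ≤ L ^ k)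

include hmono hpos hL hlac hk1 hQ in
lemma erase_bound (g : ℕ → ℤ) (hg : ∀ m, g m = -1 ∨ g m = 0 ∨ g m = 1)
    (B : Finset ℕ) (M : ℕ)
    (hcl : ∀ m ∈ B, m % k = M % k) (hmax : ∀ x ∈ B.erase M, x < M) :
    |∑ x ∈ B.erase M, (g x : ℝ) * Λ x| ≤ Λ M * (L-1) / (2*L) := by
  have hL0 : (0:ℝ) < L := by linarith
  have hL1 : (0:ℝ) < L - 1 := by linarith
  have hQ2 : (2:ℝ) ≤ L ^ k := by
    have h1 : (2:ℝ) ≤ 2*L/(L-1) := by rw [le_div_iff₀ hL1]; linarith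
    linarith
  have hQpos : (0:ℝ) < L ^ k - 1 := by linarith
  have hc1 : 2*L ≤ (L ^ k - 1)*(L-1) := by
    have h2 : 2*L/(L-1) ≤ L ^ k - 1 := by linarith
    rw [div_le_iff₀ hL1] at h2
    linarith
  have hEb : ∑ x ∈ B.erase M, Λ x ≤ Λ M / (L ^ k - 1) := by
    apply sum_bound Λ L k hmono hpos hL hlac hk1 hQ2
    intro x hx
    exact ⟨hmax x hx, hcl x (Finset.mem_of_mem_erase hx)⟩
  have hr : |∑ x ∈ B.erase M, (g x : ℝ) * Λ x| ≤ ∑ x ∈ B.erase M, Λ x := by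
    refine (Finset.abs_sum_le_sum_abs _ _).trans ?_
    apply Finset.sum_le_sum
    intro x _
    rw [abs_mul]
    have h1 : |(g x:ℝ)| ≤ 1 := by rcases hg x with h|h|h <;> simp [h]
    have h2 : |Λ x| = Λ x := abs_of_nonneg (hpos x)
    nlinarith [abs_nonneg (Λ x), hpos x]
  have hfinal : Λ M / (L ^ k - 1) ≤ Λ M * (L-1) / (2*L) := by
    rw [div_le_div_iff₀ hQpos (by linarith : (0:ℝ) < 2*L)]
    nlinarith [hpos M]
  linarith

include hmono hpos hfirst hL hlac hk1 hQ in
lemma helper_nonzero (g : ℕ → ℤ) (hg : ∀ m, g m = -1 ∨ g m = 0 ∨ g m = 1)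
    (B : Finset ℕ) (hne : B.Nonempty)
    (hcl : ∀ m ∈ B, ∀ m' ∈ B, m % k = m' % k)
    (hgB : ∀ m ∈ B, g m ≠ 0) :
    ∑ m ∈ B, (g m : ℝ) * Λ m ≠ 0 := by
  have hΛpos : ∀ n, 0 < Λ n := fun n => hfirst.trans_le (hmono.monotone n.zero_le)
  have hL0 : (0:ℝ) < L := by linarith
  set M := B.max' hne with hMdef
  have hMB : M ∈ B := B.max'_mem hne
  have hr := erase_bound Λ L k hmono hpos hL hlac hk1 hQ g hg B M
    (fun m hm => hcl m hm M hMB)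
    (fun x hx => lt_of_le_of_ne (B.le_max' x (Finset.mem_of_mem_erase hx))
      (Finset.ne_of_mem_erase hx))
  have hsum : ∑ m ∈ B, (g m : ℝ) * Λ m
      = (g M : ℝ) * Λ M + ∑ x ∈ B.erase M, (g x : ℝ) * Λ x :=
    (Finset.add_sum_erase _ _ hMB).symm
  have hgM : (g M : ℝ) = 1 ∨ (g M : ℝ) = -1 := by
    rcases hg M with h|h|h
    · right; rw [h]; norm_num
    · exact absurd h (hgB M hMB)
    · left; rw [h]; norm_num
  have hEsmall : Λ M * (L-1) / (2*L) < Λ M := by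
    rw [div_lt_iff₀ (by linarith : (0:ℝ) < 2*L)]
    nlinarith [hΛpos M]
  rw [hsum]
  rcases abs_le.mp hr with ⟨h1, h2⟩
  rcases hgM with h|h <;> rw [h] <;> intro hcon <;> nlinarith [hΛpos M]

include hmono hpos hfirst hL hlac hk1 hQ in
lemma separation (g : ℕ → ℤ) (hg : ∀ m, g m = -1 ∨ g m = 0 ∨ g m = 1)
    (D : Finset ℕ) (hD : ∀ m ∈ D, ∀ m' ∈ D, m % k = m' % k) :
    (∀ n : ℕ, (∑ m ∈ D, (g m : ℝ) * Λ m) = Λ n →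
        n ∈ D ∧ ∀ m ∈ D, g m = if m = n then 1 else 0) ∧
    ((∑ m ∈ D, (g m : ℝ) * Λ m) = 0 → ∀ m ∈ D, g m = 0) := by
  classical
  have hΛpos : ∀ n, 0 < Λ n := fun n => hfirst.trans_le (hmono.monotone n.zero_le)
  have hL0 : (0:ℝ) < L := by linarith
  set B := D.filter (fun m => g m ≠ 0) with hBdef
  have hBsum : ∑ m ∈ D, (g m : ℝ) * Λ m = ∑ m ∈ B, (g m : ℝ) * Λ m := by
    rw [hBdef]
    rw [Finset.sum_filter_of_ne]
    intro x _ hx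
    intro hgx
    apply hx
    rw [hgx]
    simp
  have hBcl : ∀ m ∈ B, ∀ m' ∈ B, m % k = m' % k := fun m hm m' hm' =>
    hD m (Finset.mem_of_mem_filter m hm) m' (Finset.mem_of_mem_filter m' hm')
  have hBg : ∀ m ∈ B, g m ≠ 0 := fun m hm => (Finset.mem_filter.mp hm).2
  have hzero : ∀ m ∈ D, m ∉ B → g m = 0 := by
    intro m hm hnB
    by_contra hgm
    exact hnB (Finset.mem_filter.mpr ⟨hm, hgm⟩)
  constructor
  · -- the λ_n case
    intro n hn
    rcases B.eq_empty_or_nonempty with hBe | hne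
    · exfalso
      rw [hBsum, hBe, Finset.sum_empty] at hn
      exact absurd hn.symm (ne_of_gt (hΛpos n))
    set M := B.max' hne with hMdef
    have hMB : M ∈ B := B.max'_mem hne
    have hMD : M ∈ D := Finset.mem_of_mem_filter M hMB
    have hr := erase_bound Λ L k hmono hpos hL hlac hk1 hQ g hg B M
      (fun m hm => hBcl m hm M hMB)
      (fun x hx => lt_of_le_of_ne (B.le_max' x (Finset.mem_of_mem_erase hx))
        (Finset.ne_of_mem_erase hx))
    set r := ∑ x ∈ B.erase M, (g x : ℝ) * Λ x with hrdef
    have hsum : ∑ m ∈ B, (g m : ℝ) * Λ m = (g M : ℝ) * Λ M + r :=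
      (Finset.add_sum_erase _ _ hMB).symm
    rw [hBsum, hsum] at hn
    rcases abs_le.mp hr with ⟨hr1, hr2⟩
    have hEsmall : Λ M * (L-1) / (2*L) < Λ M := by
      rw [div_lt_iff₀ (by linarith : (0:ℝ) < 2*L)]
      nlinarith [hΛpos M]
    have hgM : (g M : ℝ) = 1 ∨ (g M : ℝ) = -1 := by
      rcases hg M with h|h|h
      · right; rw [h]; norm_num
      · exact absurd h (hBg M hMB)
      · left; rw [h]; norm_num
    rcases hgM with hgM1 | hgM1
    swap
    · -- g M = -1 : impossible, sum negative
      exfalso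
      rw [hgM1] at hn
      nlinarith [hΛpos n, hΛpos M]
    rw [hgM1, one_mul] at hn
    -- now Λ n = Λ M + r
    have hL1' : (0:ℝ) < L - 1 := by linarith
    have he2 : 2*L*(Λ M * (L-1) / (2*L)) = Λ M * (L-1) := by
      field_simp
    rcases lt_trichotomy n M with hnM | hnM | hnM
    · exfalso
      have h1 : L * Λ n ≤ Λ M := by
        calc L * Λ n ≤ Λ (n+1) := hlac n
          _ ≤ Λ M := hmono.monotone hnM
      nlinarith [hΛpos M, hΛpos n, mul_pos hL1' (hΛpos M),
        mul_le_mul_of_nonneg_left hr1 (le_of_lt hL0), he2]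
    · -- n = M : show r = 0 and B = {M}
      have hr0 : r = 0 := by
        rw [hnM] at hn; linarith
      have herase : B.erase M = ∅ := by
        by_contra hne2
        have hne2' : (B.erase M).Nonempty := Finset.nonempty_iff_ne_empty.mpr hne2
        have := helper_nonzero Λ L k hmono hpos hfirst hL hlac hk1 hQ g hg
          (B.erase M) hne2'
          (fun m hm m' hm' => hBcl m (Finset.mem_of_mem_erase hm) m' (Finset.mem_of_mem_erase hm'))
          (fun m hm => hBg m (Finset.mem_of_mem_erase hm))
        exact this hr0
      have hBsingle : B = {M} := by
        rcases (Finset.erase_eq_empty_iff _ _).mp herase with h | h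
        · exact absurd h (Finset.nonempty_iff_ne_empty.mp hne)
        · exact h
      have hnD : n ∈ D := by rw [hnM]; exact hMD
      refine ⟨hnD, ?_⟩
      intro m hm
      by_cases hmn : m = n
      · rw [if_pos hmn]
        have hmM : m = M := by rw [hmn, hnM]
        rw [hmM]
        rcases hg M with h|h|h
        · exfalso; rw [h] at hgM1; norm_num at hgM1
        · exact absurd h (hBg M hMB)
        · exact h
      · rw [if_neg hmn]
        apply hzero m hm
        rw [hBsingle]
        simp only [Finset.mem_singleton]
        rw [← hnM]
        exact hmn
    · exfalso
      have h1 : L * Λ M ≤ Λ n := by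
        calc L * Λ M ≤ Λ (M+1) := hlac M
          _ ≤ Λ n := hmono.monotone hnM
      nlinarith [hΛpos M, hΛpos n, mul_pos hL1' (hΛpos M), hr2, he2]
  · -- the zero case
    intro hn m hm
    rcases B.eq_empty_or_nonempty with hBe | hne
    · apply hzero m hm; rw [hBe]; simp
    · exfalso
      rw [hBsum] at hn
      exact helper_nonzero Λ L k hmono hpos hfirst hL hlac hk1 hQ g hg B hne hBcl hBg hn
end arith

set_option maxHeartbeats 2000000 in
lemma class_estimate (Λ : ℕ → ℝ) (L : ℝ) (k : ℕ) (hmono : StrictMono Λ) (hpos : ∀ n, 0 ≤ Λ n)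
    (hfirst : 0 < Λ 0) (hL : 1 < L) (hlac : ∀ n, L * Λ n ≤ Λ (n + 1)) (hk1 : 1 ≤ k)
    (hQ : 2*L/(L-1) + 1 ≤ L ^ k)
    (A : Finset ℕ) (a : ℕ → ℂ) (D : Finset ℕ) (hDA : D ⊆ A)
    (hD : ∀ m ∈ D, ∀ m' ∈ D, m % k = m' % k)
    (S : ℝ) (hS : ∀ t : ℝ, ‖∑ n ∈ A, a n * Complex.exp (-(Complex.I * (Λ n * t)))‖ ≤ S) :
    ∑ n ∈ D, ‖a n‖ ≤ 2 * S := by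
  classical
  -- unimodular multipliers
  set u : ℕ → ℂ := fun n => if a n = 0 then 1 else (starRingEnd ℂ) (a n) / ‖a n‖ with hu
  have hu_abs : ∀ n, ‖u n‖ = 1 := by
    intro n
    rw [hu]
    by_cases h : a n = 0
    · simp [h]
    · simp only [h, if_neg, if_false]
      rw [norm_div]
      simp only [Complex.norm_conj]
      rw [Complex.norm_real, Real.norm_eq_abs, abs_of_nonneg (norm_nonneg _)]
      rw [div_self]
      exact fun hc => h (norm_eq_zero.mp hc)
  have hu_mul : ∀ n, a n * u n = (‖a n‖ : ℂ) := by
    intro n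
    rw [hu]
    by_cases h : a n = 0
    · simp [h]
    · simp only [h, if_neg, if_false]
      rw [mul_div_assoc', Complex.mul_conj, ← Complex.sq_norm]
      have habs : (‖a n‖ : ℂ) ≠ 0 := by
        simpa using h
      push_cast
      field_simp
  -- the Riesz product (real valued)
  set Kre : ℝ → ℝ := fun t => ∏ n ∈ D, (1 + (u n * Complex.exp (Complex.I * (Λ n * t))).re) with hKre
  have hK0 : ∀ t, 0 ≤ Kre t := by
    intro t
    apply Finset.prod_nonneg
    intro n _
    have h1 : |(u n * Complex.exp (Complex.I * (Λ n * t))).re| ≤ 1 := by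
      refine (Complex.abs_re_le_norm _).trans ?_
      rw [norm_mul, hu_abs, one_mul]
      rw [Complex.norm_exp]
      simp [Complex.mul_re, Complex.mul_im]
    rcases abs_le.mp h1 with ⟨h2, _⟩
    linarith
  -- expansion coefficients
  set w : ℕ → ℤ → ℂ := fun n z =>
    if z = 1 then u n / 2 else if z = -1 then (starRingEnd ℂ) (u n) / 2 else 1 with hw
  set G := D.pi (fun _ => ({-1,0,1} : Finset ℤ)) with hG
  have factor_eq : ∀ (n : ℕ) (t : ℝ),
      ((1 + (u n * Complex.exp (Complex.I * (Λ n * t))).re : ℝ) : ℂ)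
      = ∑ z ∈ ({-1,0,1} : Finset ℤ), w n z * Complex.exp (Complex.I * ((z:ℝ) * Λ n) * t) := by
    intro n t
    rw [Finset.sum_insert (by decide), Finset.sum_insert (by decide), Finset.sum_singleton]
    have hwm1 : w n (-1) = (starRingEnd ℂ) (u n) / 2 := by simp [hw]
    have hw0 : w n 0 = 1 := by simp [hw]
    have hw1 : w n 1 = u n / 2 := by simp [hw]
    set E := Complex.exp (Complex.I * (Λ n * t)) with hE
    have em1 : Complex.exp (Complex.I * ((((-1:ℤ)):ℝ) * Λ n) * t) = (starRingEnd ℂ) E := by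
      rw [hE, ← Complex.exp_conj]
      congr 1
      simp only [map_mul, Complex.conj_I, Complex.conj_ofReal]
      push_cast
      ring
    have e0 : Complex.exp (Complex.I * ((((0:ℤ)):ℝ) * Λ n) * t) = 1 := by
      rw [show (Complex.I * (((((0:ℤ)):ℝ):ℂ)  * ((Λ n : ℝ):ℂ)) * ((t:ℝ):ℂ)) = 0 by push_cast; ring,
        Complex.exp_zero]
    have e1 : Complex.exp (Complex.I * ((((1:ℤ)):ℝ) * Λ n) * t) = E := by
      rw [hE]; congr 1; push_cast; ring
    have hre : (((u n * E).re : ℝ) : ℂ) = (u n * E + (starRingEnd ℂ) (u n * E)) / 2 := by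
      rw [Complex.add_conj]
      push_cast
      ring
    rw [hwm1, hw0, hw1, em1, e0, e1]
    push_cast
    rw [hre, map_mul]
    ring
  -- coefficient and frequency of each expansion term
  set cfun : (∀ m ∈ D, ℤ) → ℂ := fun p => ∏ m ∈ D.attach, w m.1 (p m.1 m.2) with hcfun
  set μfun : (∀ m ∈ D, ℤ) → ℝ := fun p => ∑ m ∈ D.attach, ((p m.1 m.2 : ℝ) * Λ m.1) with hμfun
  set gfun : (∀ m ∈ D, ℤ) → ℕ → ℤ := fun p m => if h : m ∈ D then p m h else 0 with hgfun
  have hμg : ∀ p : (∀ m ∈ D, ℤ), μfun p = ∑ m ∈ D, (gfun p m : ℝ) * Λ m := by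
    intro p
    rw [hμfun]
    calc ∑ m ∈ D.attach, ((p m.1 m.2 : ℝ) * Λ m.1)
        = ∑ m ∈ D.attach, ((gfun p m.1 : ℝ) * Λ m.1) := by
          apply Finset.sum_congr rfl
          intro m _
          rw [hgfun]
          simp only [dif_pos m.2]
      _ = ∑ m ∈ D, (gfun p m : ℝ) * Λ m := Finset.sum_attach D (fun m => (gfun p m : ℝ) * Λ m)
  have hKexp : ∀ t : ℝ, ((Kre t : ℝ) : ℂ)
      = ∑ p ∈ G, cfun p * Complex.exp (Complex.I * (μfun p) * t) := by
    intro t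
    have step1 : ((Kre t : ℝ) : ℂ)
        = ∏ n ∈ D, ∑ z ∈ ({-1,0,1} : Finset ℤ), w n z * Complex.exp (Complex.I * ((z:ℝ) * Λ n) * t) := by
      rw [hKre, Complex.ofReal_prod]
      exact Finset.prod_congr rfl (fun n _ => factor_eq n t)
    rw [step1, Finset.prod_sum]
    apply Finset.sum_congr rfl
    intro p hp
    rw [Finset.prod_mul_distrib]
    congr 1
    rw [← Complex.exp_sum]
    congr 1
    rw [hμfun]
    push_cast
    rw [← Finset.sum_mul, ← Finset.mul_sum]
  -- values of p are in {-1,0,1}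
  have hgval : ∀ p ∈ G, ∀ m, gfun p m = -1 ∨ gfun p m = 0 ∨ gfun p m = 1 := by
    intro p hp m
    rw [hgfun]
    by_cases h : m ∈ D
    · simp only [dif_pos h]
      have := (Finset.mem_pi.mp hp) m h
      simp only [Finset.mem_insert, Finset.mem_singleton] at this
      tauto
    · simp only [dif_neg h]
      tauto
  -- delta functions
  set pδ : ℕ → (∀ m ∈ D, ℤ) := fun n m _ => if m = n then 1 else 0 with hpδ
  have hpδG : ∀ n, pδ n ∈ G := by
    intro n
    rw [hG]
    apply Finset.mem_pi.mpr
    intro m h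
    by_cases hmn : m = n <;> simp [hpδ, hmn]
  have hcδ : ∀ n ∈ D, cfun (pδ n) = u n / 2 := by
    intro n hn
    show (∏ m ∈ D.attach, w m.1 ((pδ n) m.1 m.2)) = u n / 2
    have hcong : ∀ m ∈ D.attach, w m.1 ((pδ n) m.1 m.2) = (fun m' => if m' = n then u n / 2 else 1) m.1 := by
      intro m _
      by_cases hmn : m.1 = n <;> simp [hpδ, hw, hmn]
    have h1 : (∏ m ∈ D.attach, w m.1 ((pδ n) m.1 m.2))
        = ∏ m ∈ D.attach, (fun m' => if m' = n then u n / 2 else 1) m.1 :=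
      Finset.prod_congr rfl hcong
    rw [h1, Finset.prod_attach D (fun m' => if m' = n then u n / 2 else 1)]
    rw [Finset.prod_ite_eq' D n (fun _ => u n / 2), if_pos hn]
  have hμδ : ∀ n ∈ D, μfun (pδ n) = Λ n := by
    intro n hn
    rw [hμg]
    have hcong : ∀ m ∈ D, ((gfun (pδ n) m : ℝ) * Λ m) = (fun m' => if m' = n then Λ n else 0) m := by
      intro m hm
      rw [hgfun]
      simp only [dif_pos hm, hpδ]
      by_cases hmn : m = n <;> simp [hmn]
    rw [Finset.sum_congr rfl hcong, Finset.sum_ite_eq' D n (fun _ => Λ n), if_pos hn]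
  -- separation consequences
  have hsep := fun (p : ∀ m ∈ D, ℤ) (hp : p ∈ G) =>
    separation Λ L k hmono hpos hfirst hL hlac hk1 hQ (gfun p) (hgval p hp) D hD
  set p0 : ∀ m ∈ D, ℤ := fun _ _ => 0 with hp0
  have hp0G : p0 ∈ G := by
    rw [hG]
    apply Finset.mem_pi.mpr
    intro m h
    simp [hp0]
  have hμ0 : μfun p0 = 0 := by
    rw [hμfun]
    simp [hp0]
  have hc0 : cfun p0 = 1 := by
    rw [hcfun]
    apply Finset.prod_eq_one
    intro m _
    simp [hp0, hw]
  have hfilterG : G.filter (fun p => μfun p = 0) = {p0} := by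
    apply Finset.ext
    intro p
    simp only [Finset.mem_filter, Finset.mem_singleton]
    constructor
    · rintro ⟨hp, hμ⟩
      have h2 := (hsep p hp).2 (by rw [← hμg]; exact hμ)
      funext m h
      have := h2 m h
      simp only [hgfun, dif_pos h] at this
      rw [this, hp0]
    · rintro rfl
      exact ⟨hp0G, hμ0⟩
  have hfilter2 : (A ×ˢ G).filter (fun q => μfun q.2 - Λ q.1 = 0)
      = D.image (fun n => (n, pδ n)) := by
    apply Finset.ext
    rintro ⟨n, p⟩
    simp only [Finset.mem_filter, Finset.mem_image, Finset.mem_product]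
    constructor
    · rintro ⟨⟨hnA, hpG⟩, hμ⟩
      have hμ' : ∑ m ∈ D, (gfun p m : ℝ) * Λ m = Λ n := by
        rw [← hμg]; linarith
      obtain ⟨hnD, hgp⟩ := (hsep p hpG).1 n hμ'
      refine ⟨n, hnD, ?_⟩
      have hppδ : p = pδ n := by
        funext m h
        have := hgp m h
        simp only [hgfun, dif_pos h] at this
        rw [this, hpδ]
      rw [hppδ]
    · rintro ⟨n', hn'D, heq⟩
      obtain ⟨rfl, rfl⟩ : n' = n ∧ pδ n' = p := by
        constructor
        · exact congrArg Prod.fst heq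
        · have := congrArg Prod.snd heq
          exact this
      exact ⟨⟨hDA hn'D, hpδG n'⟩, by rw [hμδ n' hn'D]; ring⟩
  -- the limit value Z
  set Z : ℂ := ((∑ n ∈ D, ‖a n‖ : ℝ) : ℂ) / 2 with hZ
  have hZval : ∑ q ∈ (A ×ˢ G).filter (fun q => μfun q.2 - Λ q.1 = 0), (a q.1 * cfun q.2) = Z := by
    rw [hfilter2, Finset.sum_image (by intro x _ y _ h; exact congrArg Prod.fst h)]
    rw [hZ]
    push_cast
    rw [Finset.sum_div]
    apply Finset.sum_congr rfl
    intro n hn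
    rw [hcδ n hn, mul_div_assoc', hu_mul n]
  -- the function F
  set F : ℝ → ℂ := fun t => ∑ n ∈ A, a n * Complex.exp (-(Complex.I * (Λ n * t))) with hF
  have hcontF : Continuous F := by
    rw [hF]
    apply continuous_finset_sum
    intro n _
    exact continuous_const.mul (Complex.continuous_exp.comp
      ((continuous_const.mul (continuous_const.mul Complex.continuous_ofReal)).neg))
  have hcontK : Continuous Kre := by
    rw [hKre]
    apply continuous_finset_prod
    intro n _
    exact continuous_const.add (Complex.continuous_re.comp
      (continuous_const.mul (Complex.continuous_exp.comp
        (continuous_const.mul (continuous_const.mul Complex.continuous_ofReal)))))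
  -- product expansion
  have hFK : ∀ t : ℝ, F t * ((Kre t : ℝ) : ℂ)
      = ∑ q ∈ A ×ˢ G, (a q.1 * cfun q.2) * Complex.exp (Complex.I * ((μfun q.2 - Λ q.1 : ℝ) : ℂ) * t) := by
    intro t
    rw [hF]
    rw [hKexp t, Finset.sum_mul_sum, Finset.sum_product]
    apply Finset.sum_congr rfl
    intro n _
    apply Finset.sum_congr rfl
    intro p _
    rw [mul_mul_mul_comm, ← Complex.exp_add]
    congr 1
    push_cast
    ring
  -- the two limits
  have hK_lim : Tendsto (fun T : ℝ => (1/(2*T):ℂ) * ∫ t in (-T)..T, ((Kre t : ℝ):ℂ))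
      atTop (nhds 1) := by
    have h := meanTrigPoly G cfun μfun
    rw [hfilterG, Finset.sum_singleton, hc0] at h
    have hfe : (fun t : ℝ => ((Kre t : ℝ):ℂ))
        = fun t : ℝ => ∑ p ∈ G, cfun p * Complex.exp (Complex.I * (μfun p) * t) := funext hKexp
    rw [hfe]
    exact h
  have hFK_lim : Tendsto (fun T : ℝ => (1/(2*T):ℂ) * ∫ t in (-T)..T, F t * ((Kre t : ℝ):ℂ))
      atTop (nhds Z) := by
    have h := meanTrigPoly (A ×ˢ G) (fun q => a q.1 * cfun q.2) (fun q => μfun q.2 - Λ q.1)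
    rw [hZval] at h
    have hfe : (fun t : ℝ => F t * ((Kre t : ℝ):ℂ))
        = fun t : ℝ => ∑ q ∈ A ×ˢ G, (a q.1 * cfun q.2) * Complex.exp (Complex.I * ((μfun q.2 - Λ q.1 : ℝ) : ℂ) * t) :=
      funext hFK
    rw [hfe]
    exact h
  -- real version of the K limit
  have hcast : ∀ T : ℝ, ((1/(2*T) : ℝ) * ∫ t in (-T)..T, Kre t : ℝ)
      = ((1/(2*T):ℂ) * ∫ t in (-T)..T, ((Kre t : ℝ):ℂ)).re := by
    intro T
    rw [intervalIntegral.integral_ofReal]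
    rw [show (1/(2*T):ℂ) = ((1/(2*T):ℝ):ℂ) by push_cast; ring]
    rw [← Complex.ofReal_mul, Complex.ofReal_re]
  have hR2 : Tendsto (fun T : ℝ => (1/(2*T) : ℝ) * ∫ t in (-T)..T, Kre t) atTop (nhds 1) := by
    have h2 : Tendsto (fun T : ℝ => ((1/(2*T):ℂ) * ∫ t in (-T)..T, ((Kre t : ℝ):ℂ)).re)
        atTop (nhds ((1:ℂ).re)) := (Complex.continuous_re.tendsto 1).comp hK_lim
    rw [Complex.one_re] at h2
    exact h2.congr (fun T => (hcast T).symm)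
  -- the inequality for each T
  have hineq : ∀ T : ℝ, 0 < T →
      ‖(1/(2*T):ℂ) * ∫ t in (-T)..T, F t * ((Kre t : ℝ):ℂ)‖
        ≤ S * ((1/(2*T) : ℝ) * ∫ t in (-T)..T, Kre t) := by
    intro T hT
    have hab : (-T) ≤ T := by linarith
    have hi1 : IntervalIntegrable (fun t => F t * ((Kre t : ℝ):ℂ)) MeasureTheory.volume (-T) T :=
      (hcontF.mul (Complex.continuous_ofReal.comp hcontK)).intervalIntegrable _ _
    rw [norm_mul]
    have h1 : ‖(1/(2*T):ℂ)‖ = 1/(2*T) := by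
      rw [show ((1:ℂ)/(2*T)) = ((1/(2*T) : ℝ) : ℂ) by push_cast; ring]
      rw [Complex.norm_real, Real.norm_eq_abs, abs_of_pos (by positivity)]
    rw [h1]
    have h2 : ‖∫ t in (-T)..T, F t * ((Kre t : ℝ):ℂ)‖ ≤ ∫ t in (-T)..T, S * Kre t := by
      refine (intervalIntegral.norm_integral_le_integral_norm hab).trans ?_
      apply intervalIntegral.integral_mono_on hab
        ((hcontF.mul (Complex.continuous_ofReal.comp hcontK)).norm.intervalIntegrable _ _)
        ((continuous_const.mul hcontK).intervalIntegrable _ _)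
      intro x _
      rw [Pi.mul_apply, norm_mul]
      show ‖F x‖ * ‖((Kre x:ℝ):ℂ)‖ ≤ S * Kre x
      have h3 : ‖((Kre x:ℝ):ℂ)‖ = Kre x := by
        rw [Complex.norm_real, Real.norm_eq_abs, abs_of_nonneg (hK0 x)]
      rw [h3]
      apply mul_le_mul_of_nonneg_right _ (hK0 x)
      have := hS x
      rw [hF]
      exact this
    calc 1/(2*T) * ‖∫ t in (-T)..T, F t * ((Kre t : ℝ):ℂ)‖
        ≤ 1/(2*T) * ∫ t in (-T)..T, S * Kre t :=
          mul_le_mul_of_nonneg_left h2 (by positivity)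
      _ = S * ((1/(2*T) : ℝ) * ∫ t in (-T)..T, Kre t) := by
          rw [intervalIntegral.integral_const_mul]
          ring
  -- pass to the limit
  have hZle : ‖Z‖ ≤ S * 1 := by
    apply le_of_tendsto_of_tendsto hFK_lim.norm (hR2.const_mul S)
    filter_upwards [eventually_gt_atTop (0:ℝ)] with T hT
    exact hineq T hT
  have hZnorm : ‖Z‖ = (∑ n ∈ D, ‖a n‖) / 2 := by
    rw [hZ]
    rw [show (((∑ n ∈ D, ‖a n‖ : ℝ) : ℂ) / 2) = (((∑ n ∈ D, ‖a n‖) / 2 : ℝ) : ℂ) by push_cast; ring]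
    rw [Complex.norm_real, Real.norm_eq_abs, abs_of_nonneg]
    positivity
  rw [hZnorm, mul_one] at hZle
  linarith

set_option maxHeartbeats 1000000 in
/-- For a lacunary frequency `λ` with `λ_1 > 0`, the `H_∞^λ` norm of Dirichlet polynomials
is equivalent to the `ℓ¹` norm of the coefficients. -/
theorem lacunary_Hinf_eq_ell1 (Λ : ℕ → ℝ) (hmono : StrictMono Λ)
    (hpos : ∀ n, 0 ≤ Λ n) (hunb : Tendsto Λ atTop atTop) (hfirst : 0 < Λ 0)
    (L : ℝ) (hL : 1 < L) (hlac : ∀ n, L * Λ n ≤ Λ (n + 1)) :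
    ∃ C : ℝ, 0 < C ∧ ∀ (A : Finset ℕ) (a : ℕ → ℂ),
      (∑ n ∈ A, ‖a n‖) ≤ C * dirichletSupNorm Λ A a ∧
        dirichletSupNorm Λ A a ≤ ∑ n ∈ A, ‖a n‖ := by
  classical
  obtain ⟨k₀, hk₀⟩ := pow_unbounded_of_one_lt (2*L/(L-1) + 1) hL
  set k := max k₀ 1 with hk
  have hk1 : 1 ≤ k := le_max_right _ _
  have hQ : 2*L/(L-1) + 1 ≤ L ^ k :=
    le_trans hk₀.le (pow_le_pow_right₀ hL.le (le_max_left _ _))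
  refine ⟨2 * k, by positivity, ?_⟩
  intro A a
  have habs1 : ∀ n (t : ℝ), ‖a n * Complex.exp (-(Complex.I * (Λ n * t)))‖
      = ‖a n‖ := by
    intro n t
    rw [norm_mul, Complex.norm_exp]
    simp [Complex.mul_re]
  have hbound : ∀ t : ℝ, ‖∑ n ∈ A, a n * Complex.exp (-(Complex.I * (Λ n * t)))‖
      ≤ ∑ n ∈ A, ‖a n‖ := by
    intro t
    refine (norm_sum_le _ _).trans ?_
    apply le_of_eq
    exact Finset.sum_congr rfl (fun n _ => habs1 n t)
  have hbdd : BddAbove (Set.range fun t : ℝ =>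
      ‖∑ n ∈ A, a n * Complex.exp (-(Complex.I * (Λ n * t)))‖) := by
    refine ⟨∑ n ∈ A, ‖a n‖, ?_⟩
    rintro x ⟨t, rfl⟩
    exact hbound t
  have heasy : dirichletSupNorm Λ A a ≤ ∑ n ∈ A, ‖a n‖ := by
    unfold dirichletSupNorm
    exact ciSup_le hbound
  refine ⟨?_, heasy⟩
  have hS : ∀ t : ℝ, ‖∑ n ∈ A, a n * Complex.exp (-(Complex.I * (Λ n * t)))‖
      ≤ dirichletSupNorm Λ A a := by
    intro t
    unfold dirichletSupNorm
    exact le_ciSup hbdd t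
  have hclass : ∀ j ∈ Finset.range k,
      ∑ n ∈ A.filter (fun n => n % k = j), ‖a n‖ ≤ 2 * dirichletSupNorm Λ A a := by
    intro j _
    apply class_estimate Λ L k hmono hpos hfirst hL hlac hk1 hQ A a
      (A.filter (fun n => n % k = j)) (Finset.filter_subset _ _)
      (fun m hm m' hm' => by
        rw [(Finset.mem_filter.mp hm).2, (Finset.mem_filter.mp hm').2])
      (dirichletSupNorm Λ A a) hS
  have hsplit : ∑ n ∈ A, ‖a n‖
      = ∑ j ∈ Finset.range k, ∑ n ∈ A.filter (fun n => n % k = j), ‖a n‖ :=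
    (Finset.sum_fiberwise_of_maps_to
      (fun n _ => Finset.mem_range.mpr (Nat.mod_lt n (by omega))) _).symm
  rw [hsplit]
  calc ∑ j ∈ Finset.range k, ∑ n ∈ A.filter (fun n => n % k = j), ‖a n‖
      ≤ ∑ j ∈ Finset.range k, 2 * dirichletSupNorm Λ A a := Finset.sum_le_sum hclass
    _ = 2 * k * dirichletSupNorm Λ A a := by
        rw [Finset.sum_const, Finset.card_range, nsmul_eq_mul]
        ring
end

section
/- Let λ = (λ_n) be a frequency whose terms are linearly independent over ℚ. Then for every finite set A ⊆ ℕ and all complex coefficients (a_n)_{n∈A}: sup_{t∈ℝ} |∑_{n∈A} a_n e^{-iλ_n t}| = ∑_{n∈A} |a_n|. -/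
open Filter Finset Complex intervalIntegral Topology

noncomputable section

/-- Mean value of a function on `[0, ∞)`. -/
def HasMean (g : ℝ → ℂ) (v : ℂ) : Prop :=
  Tendsto (fun T : ℝ => (T : ℂ)⁻¹ * ∫ t in (0:ℝ)..T, g t) atTop (𝓝 v)

lemma hasMean_char (c : ℂ) (μ : ℝ) :
    HasMean (fun t => c * Complex.exp (Complex.I * μ * t)) (if μ = 0 then c else 0) := by
  unfold HasMean
  by_cases hμ : μ = 0
  · simp only [hμ, Complex.ofReal_zero, mul_zero, zero_mul, Complex.exp_zero, mul_one, if_pos]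
    have : ∀ᶠ T : ℝ in atTop, (T : ℂ)⁻¹ * ∫ _t in (0:ℝ)..T, c = c := by
      filter_upwards [eventually_gt_atTop (0:ℝ)] with T hT
      rw [intervalIntegral.integral_const, sub_zero]
      have hT' : ((T:ℝ) : ℂ) ≠ 0 := by exact_mod_cast ne_of_gt hT
      rw [Complex.real_smul]
      field_simp
    exact Tendsto.congr' (by filter_upwards [this] with T h; rw [h]) tendsto_const_nhds
  · simp only [if_neg hμ]
    have hc : Complex.I * μ ≠ 0 := by
      simp [Complex.I_ne_zero, Complex.ofReal_eq_zero, hμ]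
    have key : ∀ T : ℝ, (T:ℂ)⁻¹ * ∫ t in (0:ℝ)..T, c * Complex.exp (Complex.I * μ * t)
        = (T:ℂ)⁻¹ * (c * ((Complex.exp (Complex.I * μ * T) - 1) / (Complex.I * μ))) := by
      intro T
      rw [intervalIntegral.integral_const_mul, integral_exp_mul_complex hc]
      simp
    simp only [key]
    apply squeeze_zero_norm' (a := fun T : ℝ => T⁻¹ * (‖c‖ * (2 / ‖Complex.I * μ‖)))
    · filter_upwards [eventually_ge_atTop (1:ℝ)] with T hT
      have hT0 : (0:ℝ) < T := lt_of_lt_of_le one_pos hT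
      rw [norm_mul, norm_mul, norm_div]
      have h1 : ‖(T:ℂ)⁻¹‖ = T⁻¹ := by
        rw [norm_inv, Complex.norm_real, Real.norm_eq_abs, abs_of_pos hT0]
      have h2 : ‖Complex.exp (Complex.I * μ * T) - 1‖ ≤ 2 := by
        calc ‖Complex.exp (Complex.I * μ * T) - 1‖
            ≤ ‖Complex.exp (Complex.I * μ * T)‖ + ‖(1:ℂ)‖ := norm_sub_le _ _
          _ ≤ 2 := by
              have hre : (Complex.I * μ * T).re = 0 := by simp
              rw [Complex.norm_exp, hre, Real.exp_zero, norm_one]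
              norm_num
      rw [h1]
      gcongr
    · have := (tendsto_inv_atTop_zero (𝕜 := ℝ)).mul_const (‖c‖ * (2 / ‖Complex.I * μ‖))
      simpa using this

lemma HasMean.add {g h : ℝ → ℂ} {v w : ℂ} (hgc : Continuous g) (hhc : Continuous h)
    (hg : HasMean g v) (hh : HasMean h w) : HasMean (fun t => g t + h t) (v + w) := by
  unfold HasMean at *
  have : ∀ T : ℝ, (T:ℂ)⁻¹ * ∫ t in (0:ℝ)..T, (g t + h t)
      = ((T:ℂ)⁻¹ * ∫ t in (0:ℝ)..T, g t) + ((T:ℂ)⁻¹ * ∫ t in (0:ℝ)..T, h t) := by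
    intro T
    rw [intervalIntegral.integral_add (hgc.intervalIntegrable _ _) (hhc.intervalIntegrable _ _)]
    ring
  simpa only [this] using hg.add hh

lemma hasMean_sum {ι : Type*} (s : Finset ι) (g : ι → ℝ → ℂ) (v : ι → ℂ)
    (hc : ∀ j ∈ s, Continuous (g j)) (h : ∀ j ∈ s, HasMean (g j) (v j)) :
    HasMean (fun t => ∑ j ∈ s, g j t) (∑ j ∈ s, v j) := by
  unfold HasMean
  have key : ∀ T : ℝ, (T:ℂ)⁻¹ * ∫ t in (0:ℝ)..T, (∑ j ∈ s, g j t)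
      = ∑ j ∈ s, ((T:ℂ)⁻¹ * ∫ t in (0:ℝ)..T, g j t) := by
    intro T
    rw [intervalIntegral.integral_finset_sum
      (fun j hj => (hc j hj).intervalIntegrable _ _), Finset.mul_sum]
  simp only [key]
  exact tendsto_finset_sum _ (fun j hj => h j hj)

end

section
open Complex

lemma expand_pow (z : ℂ) (hz : ‖z‖ = 1) (N : ℕ) :
    ((((1 + z.re) / 2) ^ N : ℝ) : ℂ)
      = ∑ k ∈ Finset.range (2 * N + 1),
          (4 : ℂ)⁻¹ ^ N * (Nat.choose (2 * N) k : ℂ) * z ^ ((k : ℤ) - N) := by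
  have hz0 : z ≠ 0 := by
    intro h; rw [h] at hz; simp at hz
  have hinv : z⁻¹ = (starRingEnd ℂ) z := Complex.inv_eq_conj hz
  have h1 : ((1 + z.re : ℝ) : ℂ) / 2 = (1 + z) ^ 2 / (4 * z) := by
    have hre : ((z.re : ℝ) : ℂ) = (z + (starRingEnd ℂ) z) / 2 := by
      rw [Complex.add_conj]; push_cast; ring
    rw [← hinv] at hre
    push_cast
    rw [hre]
    field_simp
    ring
  calc ((((1 + z.re) / 2) ^ N : ℝ) : ℂ)
      = (((1 + z.re : ℝ) : ℂ) / 2) ^ N := by push_cast; ring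
    _ = ((1 + z) ^ 2 / (4 * z)) ^ N := by rw [h1]
    _ = (z + 1) ^ (2 * N) * ((4 : ℂ)⁻¹ ^ N * (z ^ N)⁻¹) := by
        rw [div_pow, mul_pow, ← pow_mul]
        field_simp
        rw [mul_right_comm, ← mul_pow]; norm_num; ring
    _ = (∑ k ∈ Finset.range (2 * N + 1),
          z ^ k * (Nat.choose (2 * N) k : ℂ)) * ((4 : ℂ)⁻¹ ^ N * (z ^ N)⁻¹) := by
        rw [add_pow]
        simp
    _ = ∑ k ∈ Finset.range (2 * N + 1),
          (4 : ℂ)⁻¹ ^ N * (Nat.choose (2 * N) k : ℂ) * z ^ ((k : ℤ) - N) := by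
        rw [Finset.sum_mul]
        refine Finset.sum_congr rfl (fun k _ => ?_)
        rw [zpow_sub₀ hz0, zpow_natCast, zpow_natCast]
        field_simp

lemma indep_int {Λ : ℕ → ℝ} (hind : LinearIndependent ℚ Λ) (A : Finset ℕ) (k : ℕ → ℤ)
    (h : ∑ n ∈ A, (k n : ℝ) * Λ n = 0) : ∀ n ∈ A, k n = 0 := by
  intro n hn
  have := linearIndependent_iff'.mp hind A (fun n => (k n : ℚ)) ?_ n hn
  · exact_mod_cast this
  · have : ∑ i ∈ A, (k i : ℚ) • Λ i = ∑ i ∈ A, (k i : ℝ) * Λ i := by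
      refine Finset.sum_congr rfl (fun i _ => ?_)
      rw [Rat.smul_def]; push_cast; ring
    rw [this, h]

lemma hasMean_norm_le {g : ℝ → ℂ} {u : ℝ → ℝ} {v w : ℂ} {S : ℝ}
    (hg : Continuous g) (hu : Continuous u) (hu0 : ∀ t, 0 ≤ u t)
    (hgu : ∀ t, ‖g t‖ ≤ S * u t)
    (hmg : HasMean g v) (hmu : HasMean (fun t => (u t : ℂ)) w) :
    ‖v‖ ≤ S * w.re := by
  have h1 : Tendsto (fun T : ℝ => ‖(T:ℂ)⁻¹ * ∫ t in (0:ℝ)..T, g t‖)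
      atTop (𝓝 (‖v‖)) := by
    exact hmg.norm
  have h2 : Tendsto (fun T : ℝ => S * ((T:ℂ)⁻¹ * ∫ t in (0:ℝ)..T, (u t : ℂ)).re)
      atTop (𝓝 (S * w.re)) :=
    ((Complex.continuous_re.tendsto _).comp hmu).const_mul S
  refine le_of_tendsto_of_tendsto h1 h2 ?_
  filter_upwards [eventually_ge_atTop (1:ℝ)] with T hT
  have hT0 : (0:ℝ) < T := lt_of_lt_of_le one_pos hT
  have hre : ((T:ℂ)⁻¹ * ∫ t in (0:ℝ)..T, (u t : ℂ)).re = T⁻¹ * ∫ t in (0:ℝ)..T, u t := by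
    rw [intervalIntegral.integral_ofReal, show ((T:ℂ))⁻¹ = ((T⁻¹ : ℝ) : ℂ) by push_cast; ring,
      ← Complex.ofReal_mul, Complex.ofReal_re]
  rw [hre]
  have habs : ‖(T:ℂ)⁻¹ * ∫ t in (0:ℝ)..T, g t‖
      = T⁻¹ * ‖∫ t in (0:ℝ)..T, g t‖ := by
    rw [norm_mul, norm_inv, Complex.norm_real, Real.norm_eq_abs, abs_of_pos hT0]
  rw [habs]
  have hchain : ‖∫ t in (0:ℝ)..T, g t‖ ≤ S * ∫ t in (0:ℝ)..T, u t := by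
    calc ‖∫ t in (0:ℝ)..T, g t‖
        = ‖∫ t in (0:ℝ)..T, g t‖ := rfl
      _ ≤ ∫ t in (0:ℝ)..T, ‖g t‖ :=
          intervalIntegral.norm_integral_le_integral_norm (le_of_lt hT0)
      _ ≤ ∫ t in (0:ℝ)..T, S * u t := by
          refine intervalIntegral.integral_mono_on (le_of_lt hT0)
            (hg.norm.intervalIntegrable _ _) ((continuous_const.mul hu).intervalIntegrable _ _)
            (fun t _ => ?_)
          exact hgu t
      _ = S * ∫ t in (0:ℝ)..T, u t := intervalIntegral.integral_const_mul _ _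
  calc T⁻¹ * ‖∫ t in (0:ℝ)..T, g t‖ ≤ T⁻¹ * (S * ∫ t in (0:ℝ)..T, u t) := by
        exact mul_le_mul_of_nonneg_left hchain (by positivity)
    _ = S * (T⁻¹ * ∫ t in (0:ℝ)..T, u t) := by ring

end

section Expansion

open Complex

variable (Λ : ℕ → ℝ) (a : ℕ → ℂ) (N : ℕ)

/-- Unimodular phase with `a n * wc a n = |a n|`. -/
noncomputable def wc (n : ℕ) : ℂ :=
  if a n = 0 then 1 else (starRingEnd ℂ) (a n) / ‖a n‖

lemma wc_abs (n : ℕ) : ‖wc a n‖ = 1 := by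
  unfold wc
  by_cases h : a n = 0
  · simp [h]
  · rw [if_neg h, norm_div, Complex.norm_conj, Complex.norm_real, Real.norm_eq_abs,
      _root_.abs_of_nonneg (norm_nonneg _), div_self]
    exact (norm_ne_zero_iff.mpr h)

lemma wc_mul (n : ℕ) : a n * wc a n = (‖a n‖ : ℂ) := by
  unfold wc
  by_cases h : a n = 0
  · simp [h]
  · rw [if_neg h]
    have h2 : (‖a n‖ : ℂ) ≠ 0 := by
      simpa [Complex.ofReal_eq_zero] using norm_ne_zero_iff.mpr h
    field_simp
    rw [Complex.mul_conj, ← Complex.sq_norm]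
    push_cast
    ring

noncomputable def zc (n : ℕ) (t : ℝ) : ℂ := wc a n * Complex.exp (Complex.I * Λ n * t)

lemma zc_abs (n : ℕ) (t : ℝ) : ‖zc Λ a n t‖ = 1 := by
  unfold zc
  rw [norm_mul, wc_abs, Complex.norm_exp]
  simp

lemma zc_cont (n : ℕ) : Continuous (fun t => zc Λ a n t) :=
  continuous_const.mul (Complex.continuous_exp.comp
    ((continuous_const.mul Complex.continuous_ofReal)))

/-- The basic nonnegative kernel. -/
noncomputable def qR (n : ℕ) (t : ℝ) : ℝ := ((1 + (zc Λ a n t).re) / 2) ^ N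

lemma qR_nonneg (n : ℕ) (t : ℝ) : 0 ≤ qR Λ a N n t := by
  unfold qR
  have h1 : |(zc Λ a n t).re| ≤ 1 := by
    rw [← zc_abs Λ a n t]; exact Complex.abs_re_le_norm _
  have : (0:ℝ) ≤ (1 + (zc Λ a n t).re) / 2 := by
    have := neg_le_of_abs_le h1; linarith
  positivity

lemma qR_cont (n : ℕ) : Continuous (fun t => qR Λ a N n t) := by
  unfold qR
  exact (((continuous_const.add (Complex.continuous_re.comp (zc_cont Λ a n))).div_const 2).pow N)

noncomputable def bb (n k : ℕ) : ℂ :=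
  (4 : ℂ)⁻¹ ^ N * (Nat.choose (2 * N) k : ℂ) * wc a n ^ ((k : ℤ) - N)

noncomputable def μμ (n k : ℕ) : ℝ := ((k : ℝ) - N) * Λ n

lemma qR_expand (n : ℕ) (t : ℝ) :
    ((qR Λ a N n t : ℝ) : ℂ) = ∑ k ∈ Finset.range (2 * N + 1),
      bb a N n k * Complex.exp (Complex.I * (μμ Λ N n k : ℝ) * t) := by
  unfold qR
  rw [expand_pow _ (zc_abs Λ a n t)]
  refine Finset.sum_congr rfl (fun k _ => ?_)
  unfold bb μμ zc
  have hexp : Complex.exp (Complex.I * Λ n * t) ^ ((k : ℤ) - N)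
      = Complex.exp (Complex.I * ((((k : ℝ) - N) * Λ n : ℝ) : ℂ) * t) := by
    rw [← Complex.exp_int_mul]
    congr 1
    push_cast
    ring
  rw [mul_zpow, hexp]
  ring

end Expansion

section Product

open Complex

variable (Λ : ℕ → ℝ) (a : ℕ → ℂ) (N : ℕ) (A : Finset ℕ)

noncomputable def PR (t : ℝ) : ℝ := ∏ n ∈ A, qR Λ a N n t

noncomputable def BB (p : ∀ n ∈ A, ℕ) : ℂ := ∏ x ∈ A.attach, bb a N x.1 (p x.1 x.2)

noncomputable def νν (p : ∀ n ∈ A, ℕ) : ℝ := ∑ x ∈ A.attach, μμ Λ N x.1 (p x.1 x.2)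

lemma PR_cont : Continuous (fun t => PR Λ a N A t) := by
  unfold PR
  exact continuous_finset_prod _ (fun n _ => qR_cont Λ a N n)

lemma PR_nonneg (t : ℝ) : 0 ≤ PR Λ a N A t :=
  Finset.prod_nonneg (fun n _ => qR_nonneg Λ a N n t)

lemma PR_expand (t : ℝ) :
    ((PR Λ a N A t : ℝ) : ℂ) = ∑ p ∈ A.pi (fun _ => Finset.range (2 * N + 1)),
      BB a N A p * Complex.exp (Complex.I * (νν Λ N A p : ℝ) * t) := by
  unfold PR BB νν
  rw [Complex.ofReal_prod]
  calc (∏ n ∈ A, ((qR Λ a N n t : ℝ) : ℂ))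
      = ∏ n ∈ A, ∑ k ∈ Finset.range (2 * N + 1),
          bb a N n k * Complex.exp (Complex.I * (μμ Λ N n k : ℝ) * t) :=
        Finset.prod_congr rfl (fun n _ => qR_expand Λ a N n t)
    _ = ∑ p ∈ A.pi (fun _ => Finset.range (2 * N + 1)), ∏ x ∈ A.attach,
          (bb a N x.1 (p x.1 x.2) * Complex.exp (Complex.I * (μμ Λ N x.1 (p x.1 x.2) : ℝ) * t)) :=
        Finset.prod_sum _ _ _
    _ = _ := by
        refine Finset.sum_congr rfl (fun p _ => ?_)
        rw [Finset.prod_mul_distrib, ← Complex.exp_sum]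
        congr 1
        push_cast
        rw [Finset.mul_sum, Finset.sum_mul]

end Product

section Means

open Complex

variable (Λ : ℕ → ℝ) (a : ℕ → ℂ) (N : ℕ) (A : Finset ℕ)

lemma nu_as_sum (p : ∀ n ∈ A, ℕ) (g : ℕ → ℕ) (hg : ∀ n (h : n ∈ A), p n h = g n) :
    νν Λ N A p = ∑ n ∈ A, ((g n : ℝ) - N) * Λ n := by
  unfold νν μμ
  rw [← Finset.sum_attach A (fun n => ((g n : ℝ) - N) * Λ n)]
  exact Finset.sum_congr rfl (fun x _ => by rw [hg])

lemma nu_inj (hind : LinearIndependent ℚ Λ) (d : ℕ → ℕ) (p : ∀ n ∈ A, ℕ)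
    (h : νν Λ N A p = ∑ n ∈ A, ((d n : ℝ) - N) * Λ n) : ∀ n (hn : n ∈ A), p n hn = d n := by
  set g : ℕ → ℕ := fun n => if h : n ∈ A then p n h else 0 with hgdef
  have h1 : νν Λ N A p = ∑ n ∈ A, ((g n : ℝ) - N) * Λ n :=
    nu_as_sum Λ N A p g (fun n hn => by simp [hgdef, dif_pos hn])
  have h2 : ∑ n ∈ A, (((g n : ℤ) - (d n : ℤ) : ℤ) : ℝ) * Λ n = 0 := by
    have h3 : ∑ n ∈ A, (((g n : ℝ) - N) * Λ n - ((d n : ℝ) - N) * Λ n) = 0 := by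
      rw [Finset.sum_sub_distrib, ← h1, h, sub_self]
    rw [← h3]
    refine Finset.sum_congr rfl (fun n _ => ?_)
    push_cast
    ring
  have h4 := indep_int hind A (fun n => (g n : ℤ) - (d n : ℤ)) h2
  intro n hn
  have h5 : (g n : ℤ) - (d n : ℤ) = 0 := h4 n hn
  have h6 : g n = d n := by omega
  rw [← h6]
  simp [hgdef, dif_pos hn]

lemma hasMean_PR (hind : LinearIndependent ℚ Λ) :
    HasMean (fun t => ((PR Λ a N A t : ℝ) : ℂ))
      (((((4 : ℝ)⁻¹ ^ N * (Nat.choose (2 * N) N : ℝ)) ^ A.card : ℝ) : ℂ)) := by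
  have hmean := hasMean_sum (A.pi fun _ => Finset.range (2 * N + 1))
    (fun p t => BB a N A p * Complex.exp (Complex.I * (νν Λ N A p : ℝ) * t))
    (fun p => if (νν Λ N A p : ℝ) = 0 then BB a N A p else 0)
    (fun p _ => continuous_const.mul (Complex.continuous_exp.comp
      ((continuous_const.mul Complex.continuous_ofReal))))
    (fun p _ => hasMean_char _ _)
  rw [show (fun t => ((PR Λ a N A t : ℝ) : ℂ))
    = fun (t : ℝ) => ∑ p ∈ A.pi (fun _ => Finset.range (2 * N + 1)),
        BB a N A p * Complex.exp (Complex.I * (νν Λ N A p : ℝ) * t) from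
    funext (PR_expand Λ a N A)]
  convert hmean using 1
  -- evaluate the sum
  have hp0mem : (fun n (_ : n ∈ A) => N) ∈ A.pi (fun _ => Finset.range (2 * N + 1)) := by
    rw [Finset.mem_pi]
    intro n _
    rw [Finset.mem_range]
    omega
  rw [Finset.sum_eq_single_of_mem (fun n (_ : n ∈ A) => N) hp0mem ?side]
  case side =>
    intro p hp hne
    rw [if_neg]
    intro hzero
    apply hne
    have h0 : νν Λ N A p = ∑ n ∈ A, (((fun _ => N) n : ℝ) - N) * Λ n := by
      rw [hzero]
      simp
    have := nu_inj Λ N A hind (fun _ => N) p h0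
    funext n hn
    exact this n hn
  · have hν0 : νν Λ N A (fun n _ => N) = 0 := by
      rw [nu_as_sum Λ N A _ (fun _ => N) (fun _ _ => rfl)]
      simp
    rw [if_pos hν0]
    unfold BB bb
    have : ∀ x : {x // x ∈ A},
        (4 : ℂ)⁻¹ ^ N * (Nat.choose (2 * N) N : ℂ) * wc a x.1 ^ ((N : ℤ) - N)
          = (4 : ℂ)⁻¹ ^ N * (Nat.choose (2 * N) N : ℂ) := by
      intro x
      rw [sub_self, zpow_zero, mul_one]
    rw [Finset.prod_congr rfl (fun x _ => this x), Finset.prod_const, Finset.card_attach]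
    push_cast
    ring

end Means

section FMeans

open Complex

variable (Λ : ℕ → ℝ) (a : ℕ → ℂ) (N : ℕ) (A : Finset ℕ)

lemma hasMean_term (hind : LinearIndependent ℚ Λ) (hN : 1 ≤ N) (m : ℕ) (hm : m ∈ A) :
    HasMean (fun t => a m * Complex.exp (-(Complex.I * (Λ m * t))) * ((PR Λ a N A t : ℝ) : ℂ))
      (((‖a m‖ : ℝ) : ℂ) * ((4 : ℂ)⁻¹ ^ N * (Nat.choose (2 * N) (N + 1) : ℂ)) *
        ((4 : ℂ)⁻¹ ^ N * (Nat.choose (2 * N) N : ℂ)) ^ (A.card - 1)) := by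
  have hpt : ∀ t : ℝ, a m * Complex.exp (-(Complex.I * (Λ m * t))) * ((PR Λ a N A t : ℝ) : ℂ)
      = ∑ p ∈ A.pi (fun _ => Finset.range (2 * N + 1)),
          (a m * BB a N A p) * Complex.exp (Complex.I * ((νν Λ N A p - Λ m : ℝ) : ℂ) * t) := by
    intro t
    rw [PR_expand, Finset.mul_sum]
    refine Finset.sum_congr rfl (fun p _ => ?_)
    have he : Complex.exp (Complex.I * ((νν Λ N A p - Λ m : ℝ) : ℂ) * t)
        = Complex.exp (Complex.I * ((νν Λ N A p : ℝ) : ℂ) * t)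
          * Complex.exp (-(Complex.I * (Λ m * t))) := by
      rw [← Complex.exp_add]
      congr 1
      push_cast
      ring
    rw [he]
    ring
  rw [show (fun (t : ℝ) => a m * Complex.exp (-(Complex.I * (Λ m * t))) * ((PR Λ a N A t : ℝ) : ℂ))
    = fun (t : ℝ) => ∑ p ∈ A.pi (fun _ => Finset.range (2 * N + 1)),
        (a m * BB a N A p) * Complex.exp (Complex.I * ((νν Λ N A p - Λ m : ℝ) : ℂ) * t) from
    funext hpt]
  have hmean := hasMean_sum (A.pi fun _ => Finset.range (2 * N + 1))
    (fun p t => (a m * BB a N A p) * Complex.exp (Complex.I * ((νν Λ N A p - Λ m : ℝ) : ℂ) * t))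
    (fun p => if (νν Λ N A p - Λ m : ℝ) = 0 then a m * BB a N A p else 0)
    (fun p _ => continuous_const.mul (Complex.continuous_exp.comp
      ((continuous_const.mul Complex.continuous_ofReal))))
    (fun p _ => hasMean_char _ _)
  convert hmean using 1
  -- the distinguished index
  set d : ℕ → ℕ := fun n => if n = m then N + 1 else N with hd
  have hdsum : ∑ n ∈ A, ((d n : ℝ) - N) * Λ n = Λ m := by
    have : ∀ n ∈ A, ((d n : ℝ) - N) * Λ n = if n = m then Λ n else 0 := by
      intro n _
      simp only [hd]
      split_ifs with h <;> push_cast <;> ring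
    rw [Finset.sum_congr rfl this, Finset.sum_ite_eq' A m (fun n => Λ n), if_pos hm]
  have hpmmem : (fun n (_ : n ∈ A) => d n) ∈ A.pi (fun _ => Finset.range (2 * N + 1)) := by
    rw [Finset.mem_pi]
    intro n _
    rw [Finset.mem_range]
    simp only [hd]
    split_ifs <;> omega
  rw [Finset.sum_eq_single_of_mem (fun n (_ : n ∈ A) => d n) hpmmem ?side]
  case side =>
    intro p hp hne
    rw [if_neg]
    intro hzero
    apply hne
    have h0 : νν Λ N A p = ∑ n ∈ A, ((d n : ℝ) - N) * Λ n := by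
      rw [hdsum]
      linarith [sub_eq_zero.mp hzero]
    have := nu_inj Λ N A hind d p h0
    funext n hn
    exact this n hn
  · have hν : νν Λ N A (fun n _ => d n) = Λ m :=
      (nu_as_sum Λ N A _ d (fun _ _ => rfl)).trans hdsum
    rw [if_pos (by rw [hν, sub_self])]
    unfold BB
    have hbody : ∀ x : {x // x ∈ A}, bb a N x.1 (d x.1)
        = if x.1 = m then (4 : ℂ)⁻¹ ^ N * (Nat.choose (2 * N) (N + 1) : ℂ) * wc a m
          else (4 : ℂ)⁻¹ ^ N * (Nat.choose (2 * N) N : ℂ) := by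
      intro x
      unfold bb
      simp only [hd]
      by_cases h : x.1 = m
      · rw [if_pos h, if_pos h, h]
        have : ((N + 1 : ℕ) : ℤ) - (N : ℤ) = 1 := by omega
        rw [this, zpow_one]
      · rw [if_neg h, if_neg h, sub_self, zpow_zero, mul_one]
    have hprd : (∏ x ∈ A.attach, bb a N x.1 ((fun n (_ : n ∈ A) => d n) x.1 x.2))
        = ∏ n ∈ A, (if n = m then (4 : ℂ)⁻¹ ^ N * (Nat.choose (2 * N) (N + 1) : ℂ) * wc a m
            else (4 : ℂ)⁻¹ ^ N * (Nat.choose (2 * N) N : ℂ)) := by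
      rw [← Finset.prod_attach A (fun n => if n = m then
        (4 : ℂ)⁻¹ ^ N * (Nat.choose (2 * N) (N + 1) : ℂ) * wc a m
        else (4 : ℂ)⁻¹ ^ N * (Nat.choose (2 * N) N : ℂ))]
      exact Finset.prod_congr rfl (fun x _ => hbody x)
    rw [hprd, ← Finset.mul_prod_erase A _ hm, if_pos rfl]
    have herase : ∀ n ∈ A.erase m,
        (if n = m then (4 : ℂ)⁻¹ ^ N * (Nat.choose (2 * N) (N + 1) : ℂ) * wc a m
          else (4 : ℂ)⁻¹ ^ N * (Nat.choose (2 * N) N : ℂ))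
        = (4 : ℂ)⁻¹ ^ N * (Nat.choose (2 * N) N : ℂ) := by
      intro n hn
      rw [if_neg (Finset.mem_erase.mp hn).1]
    rw [Finset.prod_congr rfl herase, Finset.prod_const, Finset.card_erase_of_mem hm]
    have hwm : a m * wc a m = ((‖a m‖ : ℝ) : ℂ) := wc_mul a m
    calc ((‖a m‖ : ℝ) : ℂ) * ((4 : ℂ)⁻¹ ^ N * (Nat.choose (2 * N) (N + 1) : ℂ)) *
          ((4 : ℂ)⁻¹ ^ N * (Nat.choose (2 * N) N : ℂ)) ^ (A.card - 1)
        = a m * wc a m * ((4 : ℂ)⁻¹ ^ N * (Nat.choose (2 * N) (N + 1) : ℂ)) *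
          ((4 : ℂ)⁻¹ ^ N * (Nat.choose (2 * N) N : ℂ)) ^ (A.card - 1) := by rw [hwm]
      _ = a m * ((4 : ℂ)⁻¹ ^ N * (Nat.choose (2 * N) (N + 1) : ℂ) * wc a m *
          ((4 : ℂ)⁻¹ ^ N * (Nat.choose (2 * N) N : ℂ)) ^ (A.card - 1)) := by ring

end FMeans

section Key

open Complex

lemma key_ineq (Λ : ℕ → ℝ) (hind : LinearIndependent ℚ Λ) (A : Finset ℕ) (hA : A.Nonempty)
    (a : ℕ → ℂ) (N : ℕ) (hN : 1 ≤ N) (S : ℝ)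
    (hS : ∀ t : ℝ, ‖∑ n ∈ A, a n * Complex.exp (-(Complex.I * (Λ n * t)))‖ ≤ S) :
    (∑ n ∈ A, ‖a n‖) * N ≤ S * (N + 1) := by
  set q : ℝ := (4 : ℝ)⁻¹ ^ N with hq
  set C0 : ℝ := (Nat.choose (2 * N) N : ℝ) with hC0
  set C1 : ℝ := (Nat.choose (2 * N) (N + 1) : ℝ) with hC1
  set Sg : ℝ := ∑ n ∈ A, ‖a n‖ with hSg
  have hq0 : 0 < q := by positivity
  have hC0pos : 0 < C0 := by
    rw [hC0]; exact_mod_cast Nat.choose_pos (by omega)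
  have hC1pos : 0 < C1 := by
    rw [hC1]; exact_mod_cast Nat.choose_pos (by omega)
  have hSnn : 0 ≤ Sg := Finset.sum_nonneg (fun n _ => norm_nonneg _)
  -- continuity of f
  have hfc : Continuous (fun t : ℝ => ∑ n ∈ A, a n * Complex.exp (-(Complex.I * (Λ n * t)))) := by
    refine continuous_finset_sum _ (fun n _ => continuous_const.mul ?_)
    exact Complex.continuous_exp.comp ((continuous_const.mul
      ((continuous_const.mul Complex.continuous_ofReal))).neg)
  have hgc : Continuous (fun t : ℝ =>
      (∑ n ∈ A, a n * Complex.exp (-(Complex.I * (Λ n * t)))) * ((PR Λ a N A t : ℝ) : ℂ)) :=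
    hfc.mul (Complex.continuous_ofReal.comp (PR_cont Λ a N A))
  -- mean of f * P
  have hmean_fP : HasMean (fun t : ℝ =>
      (∑ n ∈ A, a n * Complex.exp (-(Complex.I * (Λ n * t)))) * ((PR Λ a N A t : ℝ) : ℂ))
      (((Sg * (q * C1) * (q * C0) ^ (A.card - 1) : ℝ) : ℂ)) := by
    have hpt : (fun t : ℝ =>
        (∑ n ∈ A, a n * Complex.exp (-(Complex.I * (Λ n * t)))) * ((PR Λ a N A t : ℝ) : ℂ))
        = fun t : ℝ => ∑ m ∈ A,
            a m * Complex.exp (-(Complex.I * (Λ m * t))) * ((PR Λ a N A t : ℝ) : ℂ) := by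
      funext t
      rw [Finset.sum_mul]
    rw [hpt]
    have hmean := hasMean_sum A
      (fun m t => a m * Complex.exp (-(Complex.I * (Λ m * t))) * ((PR Λ a N A t : ℝ) : ℂ))
      (fun m => ((‖a m‖ : ℝ) : ℂ) *
        ((4 : ℂ)⁻¹ ^ N * (Nat.choose (2 * N) (N + 1) : ℂ)) *
        ((4 : ℂ)⁻¹ ^ N * (Nat.choose (2 * N) N : ℂ)) ^ (A.card - 1))
      (fun m _ => (continuous_const.mul (Complex.continuous_exp.comp ((continuous_const.mul
        ((continuous_const.mul Complex.continuous_ofReal))).neg))).mul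
        (Complex.continuous_ofReal.comp (PR_cont Λ a N A)))
      (fun m hm => hasMean_term Λ a N A hind hN m hm)
    convert hmean using 1
    rw [hSg, hq, hC0, hC1]
    rw [← Finset.sum_mul, ← Finset.sum_mul]
    push_cast
    rw [Finset.sum_mul, Finset.sum_mul]
  -- mean of P
  have hmean_P := hasMean_PR Λ a N A hind
  -- apply the bound
  have hbound := hasMean_norm_le (S := S) hgc (PR_cont Λ a N A) (PR_nonneg Λ a N A)
    (fun t => by
      rw [norm_mul, Complex.norm_real, Real.norm_eq_abs, _root_.abs_of_nonneg (PR_nonneg Λ a N A t)]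
      exact mul_le_mul_of_nonneg_right (hS t) (PR_nonneg Λ a N A t))
    hmean_fP hmean_P
  have hlhs : ‖((Sg * (q * C1) * (q * C0) ^ (A.card - 1) : ℝ) : ℂ)‖
      = Sg * (q * C1) * (q * C0) ^ (A.card - 1) := by
    rw [Complex.norm_real, Real.norm_eq_abs, _root_.abs_of_nonneg (by positivity)]
  have hrhs : (((((4 : ℝ)⁻¹ ^ N * (Nat.choose (2 * N) N : ℝ)) ^ A.card : ℝ) : ℂ)).re
      = (q * C0) ^ A.card := by
    rw [Complex.ofReal_re, hq, hC0]
  rw [hlhs, hrhs] at hbound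
  -- now pure real arithmetic
  have hcard : A.card = (A.card - 1) + 1 := by
    have := Finset.card_pos.mpr hA; omega
  rw [hcard, pow_succ] at hbound
  have hX : (0:ℝ) < (q * C0) ^ (A.card - 1) := by positivity
  have h1 : Sg * (q * C1) ≤ S * (q * C0) := by
    have h2 : (Sg * (q * C1)) * ((q * C0) ^ (A.card - 1))
        ≤ (S * (q * C0)) * ((q * C0) ^ (A.card - 1)) := by
      calc (Sg * (q * C1)) * ((q * C0) ^ (A.card - 1))
          = Sg * (q * C1) * (q * C0) ^ (A.card - 1) := by ring
        _ ≤ S * ((q * C0) ^ (A.card - 1) * (q * C0)) := hbound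
        _ = (S * (q * C0)) * ((q * C0) ^ (A.card - 1)) := by ring
    exact le_of_mul_le_mul_right h2 hX
  have h3 : Sg * C1 ≤ S * C0 := by
    have h4 : (Sg * C1) * q ≤ (S * C0) * q := by
      calc (Sg * C1) * q = Sg * (q * C1) := by ring
        _ ≤ S * (q * C0) := h1
        _ = (S * C0) * q := by ring
    exact le_of_mul_le_mul_right h4 hq0
  have hchoose : C1 * (N + 1) = C0 * N := by
    rw [hC0, hC1]
    have := Nat.choose_succ_right_eq (2 * N) N
    have h2N : 2 * N - N = N := by omega
    rw [h2N] at this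
    exact_mod_cast this
  have h5 : (Sg * N) * C0 ≤ (S * (N + 1)) * C0 := by
    calc (Sg * N) * C0 = Sg * (C1 * (N + 1)) := by rw [hchoose]; ring
      _ = (Sg * C1) * (N + 1) := by ring
      _ ≤ (S * C0) * (N + 1) := by
          have hN1 : (0:ℝ) ≤ (N:ℝ) + 1 := by positivity
          exact mul_le_mul_of_nonneg_right h3 hN1
      _ = (S * (N + 1)) * C0 := by ring
  exact le_of_mul_le_mul_right h5 hC0pos

end Key

/-- For a frequency `λ` whose terms are linearly independent over `ℚ`, the `H_∞^λ` norm of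
any Dirichlet polynomial equals the `ℓ¹` norm of its coefficients. -/
theorem qlinIndep_Hinf_norm (Λ : ℕ → ℝ) (hmono : StrictMono Λ)
    (hpos : ∀ n, 0 ≤ Λ n) (hunb : Tendsto Λ atTop atTop)
    (hind : LinearIndependent ℚ Λ) :
    ∀ (A : Finset ℕ) (a : ℕ → ℂ),
      dirichletSupNorm Λ A a = ∑ n ∈ A, ‖a n‖ := by
  intro A a
  rcases A.eq_empty_or_nonempty with rfl | hA
  · simp [dirichletSupNorm, ciSup_const]
  have hb : ∀ t : ℝ, ‖∑ n ∈ A, a n * Complex.exp (-(Complex.I * (Λ n * t)))‖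
      ≤ ∑ n ∈ A, ‖a n‖ := by
    intro t
    calc ‖∑ n ∈ A, a n * Complex.exp (-(Complex.I * (Λ n * t)))‖
        ≤ ∑ n ∈ A, ‖a n * Complex.exp (-(Complex.I * (Λ n * t)))‖ :=
          norm_sum_le _ _
      _ = ∑ n ∈ A, ‖a n‖ := by
          refine Finset.sum_congr rfl (fun n _ => ?_)
          rw [norm_mul, Complex.norm_exp]
          have : (-(Complex.I * ((Λ n : ℝ) * (t : ℝ) : ℂ))).re = 0 := by simp
          rw [this, Real.exp_zero, mul_one]
  have hbdd : BddAbove (Set.range fun t : ℝ =>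
      ‖∑ n ∈ A, a n * Complex.exp (-(Complex.I * (Λ n * t)))‖) := by
    refine ⟨∑ n ∈ A, ‖a n‖, ?_⟩
    rintro x ⟨t, rfl⟩
    exact hb t
  have hub : dirichletSupNorm Λ A a ≤ ∑ n ∈ A, ‖a n‖ := ciSup_le hb
  have hS : ∀ t : ℝ, ‖∑ n ∈ A, a n * Complex.exp (-(Complex.I * (Λ n * t)))‖
      ≤ dirichletSupNorm Λ A a := fun t => le_ciSup hbdd t
  refine le_antisymm hub ?_
  by_contra hlt
  push_neg at hlt
  set Sg : ℝ := ∑ n ∈ A, ‖a n‖ with hSgdef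
  set S : ℝ := dirichletSupNorm Λ A a with hSdef
  have hε : 0 < Sg - S := by linarith
  obtain ⟨n, hn⟩ := exists_nat_gt (S / (Sg - S))
  have hkey := key_ineq Λ hind A hA a (n + 1) (by omega) S hS
  have hcast : ((n + 1 : ℕ) : ℝ) = (n : ℝ) + 1 := by push_cast; ring
  rw [hcast] at hkey
  -- hkey : Sg * (n + 1) ≤ S * ((n+1) + 1)
  have h1 : (Sg - S) * ((n : ℝ) + 1) ≤ S := by nlinarith
  have h2 : S < (Sg - S) * ((n : ℝ) + 1) := by
    rw [div_lt_iff₀ hε] at hn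
    nlinarith
  linarith
end

section
/- Let λ be a frequency containing arbitrarily long arithmetic progressions. Then for every integer N ≥ 1 there exist a finite set A ⊆ ℕ with |A| ≥ N and signs ε_n ∈ {−1, 1} for n ∈ A such that sup_{t∈ℝ} |∑_{n∈A} ε_n e^{-iλ_n t}| ≤ 2·N^{1/2}. (Combined with the general lower bound, this shows that the lower super-democracy function of {e^{-λ_n s}} in H_∞^λ grows like N^{1/2}.) -/
open Filter Finset

lemma rs_exists (m : ℕ) : ∃ ε δ : ℕ → ℝ,
    (∀ k, ε k = 1 ∨ ε k = -1) ∧ (∀ k, δ k = 1 ∨ δ k = -1) ∧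
    ∀ z : ℂ, ‖z‖ = 1 →
      ‖∑ k ∈ range (2^m), (ε k : ℂ) * z^k‖ ^ 2
      + ‖∑ k ∈ range (2^m), (δ k : ℂ) * z^k‖ ^ 2 = 2^(m+1) := by
  induction m with
  | zero =>
    refine ⟨fun _ => 1, fun _ => 1, fun _ => Or.inl rfl, fun _ => Or.inl rfl, ?_⟩
    intro z hz; norm_num
  | succ m ih =>
    obtain ⟨ε, δ, hε, hδ, key⟩ := ih
    refine ⟨fun k => if k < 2^m then ε k else δ (k - 2^m),
            fun k => if k < 2^m then ε k else -δ (k - 2^m), ?_, ?_, ?_⟩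
    · intro k; by_cases h : k < 2^m <;> simp [h, hε, hδ]
    · intro k; by_cases h : k < 2^m
      · simp [h, hε]
      · simp only [h, if_false]
        rcases hδ (k - 2^m) with h' | h' <;> simp [h']
    · intro z hz
      have hsplit : (2:ℕ)^(m+1) = 2^m + 2^m := by ring
      set u : ℂ := ∑ k ∈ range (2^m), (ε k : ℂ) * z^k with hu
      set v : ℂ := z^(2^m) * ∑ k ∈ range (2^m), (δ k : ℂ) * z^k with hv
      have h1 : ∑ k ∈ range (2^(m+1)),
          ((if k < 2^m then ε k else δ (k - 2^m) : ℝ) : ℂ) * z^k = u + v := by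
        rw [hsplit, Finset.sum_range_add]
        congr 1
        · apply Finset.sum_congr rfl; intro k hk
          simp [Finset.mem_range.mp hk]
        · rw [hv, Finset.mul_sum]
          apply Finset.sum_congr rfl; intro k hk
          have : ¬ (2^m + k < 2^m) := by omega
          simp only [this, if_false, Nat.add_sub_cancel_left]
          rw [pow_add]; ring
      have h2 : ∑ k ∈ range (2^(m+1)),
          ((if k < 2^m then ε k else -δ (k - 2^m) : ℝ) : ℂ) * z^k = u - v := by
        rw [hsplit, Finset.sum_range_add]
        have : ∑ k ∈ range (2^m),
            ((if 2^m + k < 2^m then ε (2^m+k) else -δ (2^m + k - 2^m) : ℝ) : ℂ) * z^(2^m+k) = -v := by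
          rw [hv, Finset.mul_sum, ← Finset.sum_neg_distrib]
          apply Finset.sum_congr rfl; intro k hk
          have : ¬ (2^m + k < 2^m) := by omega
          simp only [this, if_false, Nat.add_sub_cancel_left]
          push_cast
          rw [pow_add]; ring
        rw [this]
        have hfirst : ∑ k ∈ range (2^m),
            ((if k < 2^m then ε k else -δ (k - 2^m) : ℝ) : ℂ) * z^k = u := by
          apply Finset.sum_congr rfl; intro k hk
          simp [Finset.mem_range.mp hk]
        rw [hfirst]; ring
      rw [h1, h2]
      have hpar : ‖u + v‖ ^ 2 + ‖u - v‖ ^ 2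
          = 2 * ‖u‖ ^ 2 + 2 * ‖v‖ ^ 2 := by
        simp only [Complex.sq_norm]
        simp [Complex.normSq_add, Complex.normSq_sub]; ring
      have hvabs : ‖v‖ = ‖∑ k ∈ range (2^m), (δ k : ℂ) * z^k‖ := by
        rw [hv, norm_mul, norm_pow, hz, one_pow, one_mul]
      rw [hpar, hvabs, hu]
      have := key z hz
      have h2p : (2:ℝ)^(m+1+1) = 2^(m+1) * 2 := pow_succ 2 (m+1)
      rw [h2p]
      linarith [this]

/-- If the frequency `λ` contains arbitrarily long arithmetic progressions then, for every
`N`, there are a set `A` with `|A| ≥ N` and signs `ε_n ∈ {−1,1}` such that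
`‖∑_{n∈A} ε_n e^{-λ_n s}‖_{H_∞^λ} ≤ 2 N^{1/2}`. -/
theorem rudin_shapiro_signs_Hinf (Λ : ℕ → ℝ) (hmono : StrictMono Λ)
    (hpos : ∀ n, 0 ≤ Λ n) (hunb : Tendsto Λ atTop atTop)
    (hAP : ∀ N : ℕ, ∃ (a : ℝ) (b : ℝ), 0 < b ∧
      ∀ k : ℕ, 1 ≤ k → k ≤ N → ∃ n : ℕ, Λ n = a + k * b) :
    ∀ N : ℕ, 1 ≤ N → ∃ (A : Finset ℕ) (ε : ℕ → ℝ), N ≤ A.card ∧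
      (∀ n ∈ A, ε n = 1 ∨ ε n = -1) ∧
      dirichletSupNorm Λ A (fun n => (ε n : ℂ)) ≤ 2 * Real.sqrt N := by
  intro N hN
  set m : ℕ := Nat.clog 2 N with hm
  set M : ℕ := 2 ^ m with hMdef
  have hNM : N ≤ M := Nat.le_pow_clog (by norm_num) N
  have hM2N : M ≤ 2 * N := by
    by_cases h1 : N = 1
    · subst h1; simp [hMdef, hm, Nat.clog_one_right]
    · have hN1 : 1 < N := by omega
      have h2 := Nat.pow_pred_clog_lt_self (by norm_num : 1 < 2) hN1
      rw [← hm] at h2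
      have h2' : 2 ^ (m - 1) < N := by simpa [Nat.pred_eq_sub_one] using h2
      rcases Nat.eq_zero_or_pos m with hm0 | hm0
      · rw [hMdef, hm0]; omega
      · have hMeq : M = 2 * 2 ^ (m - 1) := by
          rw [hMdef, ← pow_succ']; congr 1; omega
        omega
  obtain ⟨a, b, hb, hk⟩ := hAP M
  classical
  set f : ℕ → ℕ := fun k => if h : 1 ≤ k ∧ k ≤ M then (hk k h.1 h.2).choose else 0 with hfdef
  have hf : ∀ k ∈ Finset.Icc 1 M, Λ (f k) = a + k * b := by
    intro k hkmem
    rw [Finset.mem_Icc] at hkmem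
    simp only [hfdef, dif_pos hkmem]
    exact (hk k hkmem.1 hkmem.2).choose_spec
  have hinj : ∀ x ∈ Finset.Icc 1 M, ∀ y ∈ Finset.Icc 1 M, f x = f y → x = y := by
    intro x hx y hy hxy
    have h1 := hf x hx
    have h2 := hf y hy
    rw [hxy, h2] at h1
    have hxy' : (y : ℝ) = (x : ℝ) := by
      have := add_left_cancel h1
      exact mul_right_cancel₀ (ne_of_gt hb) this
    exact_mod_cast hxy'.symm
  obtain ⟨ε₀, δ₀, hε₀, hδ₀, key⟩ := rs_exists m
  set A : Finset ℕ := (Finset.Icc 1 M).image f with hAdef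
  set ε : ℕ → ℝ := fun n =>
    if h : ∃ k, k ∈ Finset.Icc 1 M ∧ f k = n then ε₀ (h.choose - 1) else 1 with hεdef
  have hεpm : ∀ n, ε n = 1 ∨ ε n = -1 := by
    intro n
    by_cases h : ∃ k, k ∈ Finset.Icc 1 M ∧ f k = n
    · simp only [hεdef, dif_pos h]; exact hε₀ _
    · left; rw [hεdef]; exact dif_neg h
  have hεf : ∀ k ∈ Finset.Icc 1 M, ε (f k) = ε₀ (k - 1) := by
    intro k hkmem
    have hex : ∃ k', k' ∈ Finset.Icc 1 M ∧ f k' = f k := ⟨k, hkmem, rfl⟩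
    simp only [hεdef, dif_pos hex]
    obtain ⟨hc1, hc2⟩ := hex.choose_spec
    rw [hinj _ hc1 _ hkmem hc2]
  have hcard : N ≤ A.card := by
    rw [hAdef, Finset.card_image_of_injOn (fun x hx y hy => hinj x hx y hy)]
    simpa using hNM
  refine ⟨A, ε, hcard, fun n _ => hεpm n, ?_⟩
  have hbound : ∀ t : ℝ,
      ‖∑ n ∈ A, (ε n : ℂ) * Complex.exp (-(Complex.I * (Λ n * t)))‖
        ≤ 2 * Real.sqrt N := by
    intro t
    set w : ℂ := Complex.exp (-(Complex.I * (b * t))) with hwdef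
    set E : ℂ := Complex.exp (-(Complex.I * (a * t))) with hEdef
    have hexp : ∀ k : ℕ,
        Complex.exp (-(Complex.I * (((a + k * b : ℝ) : ℂ) * t))) = E * w ^ k := by
      intro k
      rw [hEdef, hwdef, ← Complex.exp_nat_mul, ← Complex.exp_add]
      congr 1
      push_cast
      ring
    have hsum : ∑ n ∈ A, (ε n : ℂ) * Complex.exp (-(Complex.I * (Λ n * t)))
        = E * w * ∑ j ∈ range M, (ε₀ j : ℂ) * w ^ j := by
      rw [hAdef, Finset.sum_image hinj]
      have step1 : ∑ k ∈ Finset.Icc 1 M,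
          (ε (f k) : ℂ) * Complex.exp (-(Complex.I * (Λ (f k) * t)))
          = ∑ k ∈ Finset.Icc 1 M, (ε₀ (k - 1) : ℂ) * (E * w ^ k) := by
        apply Finset.sum_congr rfl
        intro k hkmem
        rw [hεf k hkmem, hf k hkmem]
        rw [show ((a + (k : ℝ) * b : ℝ) : ℂ) * (t : ℂ) = (((a + k * b : ℝ)) : ℂ) * t by norm_cast]
        rw [hexp k]
      rw [step1, ← Finset.Ico_add_one_right_eq_Icc, Finset.sum_Ico_eq_sum_range]
      rw [Finset.mul_sum]
      apply Finset.sum_congr (by norm_num)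
      intro j _
      have h1j : (1 : ℕ) + j - 1 = j := by omega
      rw [h1j, pow_add, pow_one]
      ring
    have hw1 : ‖w‖ = 1 := by
      rw [hwdef, Complex.norm_exp]
      norm_num [Complex.mul_re]
    have hE1 : ‖E‖ = 1 := by
      rw [hEdef, Complex.norm_exp]
      norm_num [Complex.mul_re]
    rw [hsum, norm_mul, norm_mul, hE1, hw1, one_mul, one_mul]
    have hkey := key w hw1
    set X := ‖∑ j ∈ range (2^m), (ε₀ j : ℂ) * w ^ j‖ with hXdef
    have hX2 : X ^ 2 ≤ 2 ^ (m + 1) := by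
      nlinarith [sq_nonneg (‖∑ k ∈ range (2^m), (δ₀ k : ℂ) * w ^ k‖)]
    have hXle : X ≤ Real.sqrt (2 ^ (m + 1)) := Real.le_sqrt_of_sq_le hX2
    have hfin : Real.sqrt ((2:ℝ) ^ (m + 1)) ≤ 2 * Real.sqrt N := by
      rw [show (2:ℝ) * Real.sqrt N = Real.sqrt (4 * N) by
        rw [show (4:ℝ) * N = 2 ^ 2 * N by ring,
          Real.sqrt_mul (by positivity), Real.sqrt_sq (by norm_num)]]
      apply Real.sqrt_le_sqrt
      have h1 : ((M : ℝ)) ≤ 2 * N := by exact_mod_cast hM2N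
      have h2 : (2:ℝ) ^ (m + 1) = 2 * (M : ℝ) := by
        rw [hMdef]; push_cast; ring
      linarith
    calc X ≤ Real.sqrt (2 ^ (m + 1)) := hXle
      _ ≤ 2 * Real.sqrt N := hfin
  exact ciSup_le hbound
end
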